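/- arXiv:2107.10905 — 6 statements merged into one kernel-verified Lean document; each statement's English description precedes it below -/
import Mathlib

section
/- Let H be a real inner product space with 3 ≤ dim(H) ≤ ∞, and let A₁, A₂ be (not necessarily bounded) linear endomorphisms of H. Then the joint real numerical range W_ℝ(A₁,A₂) = {(⟨A₁x,x⟩, ⟨A₂x,x⟩) : ‖x‖ = 1} is a convex subset of ℝ². -/
open scoped RealInnerProductSpace

namespace BrickmanAux

noncomputable def sgnp (x : ℝ) : ℝ := if x < 0 then -1 else 1

lemma sgnp_mul_abs (x : ℝ) : sgnp x * |x| = x := by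
  unfold sgnp; split
  · rename_i h; rw [abs_of_neg h]; ring
  · rename_i h; rw [abs_of_nonneg (not_lt.1 h)]; ring

lemma sgnp_sq (x : ℝ) : sgnp x ^ 2 = 1 := by unfold sgnp; split <;> norm_num

lemma mul_sgnp (x : ℝ) : x * sgnp x = |x| := by
  unfold sgnp; split
  · rename_i h; rw [abs_of_neg h]; ring
  · rename_i h; rw [abs_of_nonneg (not_lt.1 h)]; ring

lemma sq_sgnp_mul (s x : ℝ) : (sgnp s * x) ^ 2 = x ^ 2 := by
  rw [mul_pow, sgnp_sq, one_mul]

lemma sgnp_mul_sgnp_nonneg {a b : ℝ} (h : 0 ≤ a * b) (h2 : a ^ 2 = b ^ 2) :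
    0 ≤ sgnp a * sgnp b := by
  rcases lt_trichotomy a 0 with ha | ha | ha
  · have hb0 : b ≠ 0 := by intro hb; rw [hb] at h2; nlinarith
    have hb : b < 0 := by
      rcases lt_trichotomy b 0 with h' | h' | h'
      · exact h'
      · exact absurd h' hb0
      · nlinarith
    unfold sgnp; rw [if_pos ha, if_pos hb]; norm_num
  · have hb : b = 0 := by nlinarith [sq_nonneg b]
    subst ha hb; unfold sgnp; norm_num
  · have hb : 0 ≤ b := by nlinarith
    unfold sgnp; rw [if_neg (not_lt.2 ha.le), if_neg (not_lt.2 hb)]; norm_num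

lemma sign_choice {x y : ℝ} (h : 0 ≤ x * y) :
    ∃ s : ℝ, s ^ 2 = 1 ∧ s * |x| = x ∧ s * |y| = y := by
  rcases lt_trichotomy x 0 with hx | hx | hx
  · refine ⟨-1, by norm_num, ?_, ?_⟩
    · rw [abs_of_neg hx]; ring
    · have hy : y ≤ 0 := by nlinarith
      rw [abs_of_nonpos hy]; ring
  · exact ⟨sgnp y, sgnp_sq y, by simp [hx], sgnp_mul_abs y⟩
  · refine ⟨1, by norm_num, ?_, ?_⟩
    · rw [abs_of_pos hx]; ring
    · have hy : 0 ≤ y := by nlinarith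
      rw [abs_of_nonneg hy]; ring

abbrev InZ (l v : ℝ × ℝ × ℝ) : Prop :=
  v.1 ^ 2 + v.2.1 ^ 2 + v.2.2 ^ 2 = 1 ∧
    l.1 * v.1 ^ 2 + l.2.1 * v.2.1 ^ 2 + l.2.2 * v.2.2 ^ 2 = 0

abbrev Compat (u v : ℝ × ℝ × ℝ) : Prop :=
  0 ≤ u.1 * v.1 ∧ 0 ≤ u.2.1 * v.2.1 ∧ 0 ≤ u.2.2 * v.2.2

lemma path_sq {s a b t : ℝ} (hs : s ^ 2 = 1) (h0 : 0 ≤ t) (h1 : t ≤ 1) :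
    (s * Real.sqrt ((1 - t) * a ^ 2 + t * b ^ 2)) ^ 2 = (1 - t) * a ^ 2 + t * b ^ 2 := by
  rw [mul_pow, hs, one_mul, Real.sq_sqrt]
  exact add_nonneg (mul_nonneg (by linarith) (sq_nonneg a)) (mul_nonneg h0 (sq_nonneg b))

lemma hop (l : ℝ × ℝ × ℝ) (G : ℝ × ℝ × ℝ → ℝ) (hG : Continuous G)
    {u v : ℝ × ℝ × ℝ} (hu : InZ l u) (hv : InZ l v) (huv : Compat u v)
    {μ : ℝ} (hμ : μ ∈ Set.uIcc (G u) (G v)) :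
    ∃ z, InZ l z ∧ G z = μ := by
  obtain ⟨s0, hs0, hs0u, hs0v⟩ := sign_choice huv.1
  obtain ⟨s1, hs1, hs1u, hs1v⟩ := sign_choice huv.2.1
  obtain ⟨s2, hs2, hs2u, hs2v⟩ := sign_choice huv.2.2
  set γ : ℝ → ℝ × ℝ × ℝ := fun t =>
    (s0 * Real.sqrt ((1 - t) * u.1 ^ 2 + t * v.1 ^ 2),
     s1 * Real.sqrt ((1 - t) * u.2.1 ^ 2 + t * v.2.1 ^ 2),
     s2 * Real.sqrt ((1 - t) * u.2.2 ^ 2 + t * v.2.2 ^ 2)) with hγ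
  have hgc : Continuous γ := by
    apply Continuous.prodMk
    · fun_prop
    · apply Continuous.prodMk <;> fun_prop
  have hγ0 : γ 0 = u := by
    have : ∀ a b : ℝ, (1 - (0:ℝ)) * a ^ 2 + (0:ℝ) * b ^ 2 = a ^ 2 := by intros; ring
    rw [hγ]
    simp only [this, Real.sqrt_sq_eq_abs, hs0u, hs1u, hs2u]
  have hγ1 : γ 1 = v := by
    have : ∀ a b : ℝ, (1 - (1:ℝ)) * a ^ 2 + (1:ℝ) * b ^ 2 = b ^ 2 := by intros; ring
    rw [hγ]
    simp only [this, Real.sqrt_sq_eq_abs, hs0v, hs1v, hs2v]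
  have hcont : ContinuousOn (G ∘ γ) (Set.uIcc 0 1) := (hG.comp hgc).continuousOn
  have hμ' : μ ∈ Set.uIcc ((G ∘ γ) 0) ((G ∘ γ) 1) := by
    simpa [Function.comp, hγ0, hγ1] using hμ
  obtain ⟨t, ht, hGt⟩ := intermediate_value_uIcc hcont hμ'
  rw [Set.uIcc_of_le (by norm_num : (0:ℝ) ≤ 1)] at ht
  refine ⟨γ t, ⟨?_, ?_⟩, hGt⟩
  · rw [hγ]
    simp only
    rw [path_sq hs0 ht.1 ht.2, path_sq hs1 ht.1 ht.2, path_sq hs2 ht.1 ht.2]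
    linear_combination (1 - t) * hu.1 + t * hv.1
  · rw [hγ]
    simp only
    rw [path_sq hs0 ht.1 ht.2, path_sq hs1 ht.1 ht.2, path_sq hs2 ht.1 ht.2]
    linear_combination (1 - t) * hu.2 + t * hv.2

lemma pair_sol {la lb : ℝ} (h : la * lb ≤ 0) :
    ∃ p q : ℝ, 0 ≤ p ∧ 0 ≤ q ∧ p ^ 2 + q ^ 2 = 1 ∧ la * p ^ 2 + lb * q ^ 2 = 0 := by
  by_cases h0 : |la| + |lb| = 0
  · have hla : la = 0 := by
      have := abs_nonneg la; have := abs_nonneg lb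
      have : |la| = 0 := by linarith
      exact abs_eq_zero.1 this
    have hlb : lb = 0 := by
      have := abs_nonneg la; have := abs_nonneg lb
      have : |lb| = 0 := by linarith
      exact abs_eq_zero.1 this
    exact ⟨1, 0, by norm_num, by norm_num, by norm_num, by simp [hla, hlb]⟩
  · have hpos : 0 < |la| + |lb| := lt_of_le_of_ne (by positivity) (Ne.symm h0)
    have key : la * |lb| + lb * |la| = 0 := by
      rcases le_or_gt la 0 with h1 | h1
      · rcases h1.eq_or_lt with h2 | h2
        · rw [h2]; simp
        · have h3 : 0 ≤ lb := by nlinarith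
          rw [abs_of_nonneg h3, abs_of_neg h2]; ring
      · have h3 : lb ≤ 0 := by nlinarith
        rw [abs_of_nonpos h3, abs_of_pos h1]; ring
    refine ⟨Real.sqrt (|lb| / (|la| + |lb|)), Real.sqrt (|la| / (|la| + |lb|)),
      Real.sqrt_nonneg _, Real.sqrt_nonneg _, ?_, ?_⟩
    · rw [Real.sq_sqrt (by positivity), Real.sq_sqrt (by positivity)]
      field_simp
      ring
    · rw [Real.sq_sqrt (by positivity), Real.sq_sqrt (by positivity)]
      field_simp
      linear_combination key

lemma connect₀ (l : ℝ × ℝ × ℝ) (h01 : l.1 * l.2.1 ≤ 0) (h02 : l.1 * l.2.2 ≤ 0)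
    (G : ℝ × ℝ × ℝ → ℝ) (hG : Continuous G) (hGe : ∀ v, G (-v) = G v)
    {x y : ℝ × ℝ × ℝ} (hx : InZ l x) (hy : InZ l y)
    {μ : ℝ} (hμ : μ ∈ Set.uIcc (G x) (G y)) :
    ∃ z, InZ l z ∧ G z = μ := by
  set W : ℝ × ℝ × ℝ := (sgnp x.1 * |y.1|, sgnp x.2.1 * |y.2.1|, sgnp x.2.2 * |y.2.2|) with hW
  have habs : ∀ u : ℝ, |u| ^ 2 = u ^ 2 := fun u => sq_abs u
  have hWZ : InZ l W := by
    refine ⟨?_, ?_⟩ <;>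
      simp only [hW, sq_sgnp_mul, habs] <;> [exact hy.1; exact hy.2]
  have hxW : Compat x W := by
    refine ⟨?_, ?_, ?_⟩ <;>
      simp only [hW]
    · rw [← mul_assoc, mul_sgnp]
      exact mul_nonneg (abs_nonneg _) (abs_nonneg _)
    · rw [← mul_assoc, mul_sgnp]
      exact mul_nonneg (abs_nonneg _) (abs_nonneg _)
    · rw [← mul_assoc, mul_sgnp]
      exact mul_nonneg (abs_nonneg _) (abs_nonneg _)
  set T : ℝ × ℝ × ℝ := if 0 ≤ W.1 * y.1 then y else -y with hT
  have hTZ : InZ l T := by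
    rw [hT]; split
    · exact hy
    · refine ⟨?_, ?_⟩ <;>
        simp only [Prod.fst_neg, Prod.snd_neg, neg_sq] <;> [exact hy.1; exact hy.2]
  have hGT : G T = G y := by
    rw [hT]; split
    · rfl
    · exact hGe y
  have hmatch : 0 ≤ W.1 * T.1 := by
    rw [hT]; split
    · assumption
    · rename_i h
      push_neg at h
      show 0 ≤ W.1 * -y.1
      nlinarith
  have hWsq : W.1 ^ 2 = T.1 ^ 2 := by
    rw [hT]; split
    · simp only [hW, sq_sgnp_mul, habs]
    · simp only [hW, Prod.fst_neg, neg_sq, sq_sgnp_mul, habs]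
  obtain ⟨p, q, hp, hq, hpq1, hpq0⟩ := pair_sol h02
  obtain ⟨p', q', hp', hq', hpq1', hpq0'⟩ := pair_sol h01
  set a : ℝ × ℝ × ℝ := (sgnp W.1 * p, 0, sgnp W.2.2 * q) with ha
  set b : ℝ × ℝ × ℝ := (sgnp T.1 * p', sgnp T.2.1 * q', 0) with hb
  have haZ : InZ l a := by
    constructor
    · simp only [ha, sq_sgnp_mul]
      linarith [hpq1]
    · simp only [ha, sq_sgnp_mul]
      linarith [hpq0]
  have hbZ : InZ l b := by
    constructor
    · simp only [hb, sq_sgnp_mul]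
      linarith [hpq1']
    · simp only [hb, sq_sgnp_mul]
      linarith [hpq0']
  have hWa : Compat W a := by
    refine ⟨?_, ?_, ?_⟩ <;> simp only [ha]
    · rw [← mul_assoc, mul_sgnp]
      exact mul_nonneg (abs_nonneg _) hp
    · simp
    · rw [← mul_assoc, mul_sgnp]
      exact mul_nonneg (abs_nonneg _) hq
  have hbT : Compat b T := by
    refine ⟨?_, ?_, ?_⟩ <;> simp only [hb]
    · rw [mul_comm, ← mul_assoc, mul_sgnp]
      exact mul_nonneg (abs_nonneg _) hp'
    · rw [mul_comm, ← mul_assoc, mul_sgnp]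
      exact mul_nonneg (abs_nonneg _) hq'
    · simp
  have hab : Compat a b := by
    refine ⟨?_, ?_, ?_⟩ <;> simp only [ha, hb]
    · have hre : sgnp W.1 * p * (sgnp T.1 * p') = sgnp W.1 * sgnp T.1 * (p * p') := by ring
      rw [hre]
      exact mul_nonneg (sgnp_mul_sgnp_nonneg hmatch hWsq) (mul_nonneg hp hp')
    · simp
    · simp
  have hμ1 : μ ∈ Set.uIcc (G x) (G T) := by rwa [hGT]
  rcases Set.uIcc_subset_uIcc_union_uIcc (b := G W) hμ1 with h | h
  · exact hop l G hG hx hWZ hxW h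
  rcases Set.uIcc_subset_uIcc_union_uIcc (b := G a) h with h' | h'
  · exact hop l G hG hWZ haZ hWa h'
  rcases Set.uIcc_subset_uIcc_union_uIcc (b := G b) h' with h'' | h''
  · exact hop l G hG haZ hbZ hab h''
  · exact hop l G hG hbZ hTZ hbT h''

lemma exists_good (l : ℝ × ℝ × ℝ) {y : ℝ × ℝ × ℝ} (hy : InZ l y) :
    (l.1 * l.2.1 ≤ 0 ∧ l.1 * l.2.2 ≤ 0) ∨
    (l.2.1 * l.1 ≤ 0 ∧ l.2.1 * l.2.2 ≤ 0) ∨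
    (l.2.2 * l.1 ≤ 0 ∧ l.2.2 * l.2.1 ≤ 0) := by
  obtain ⟨h1, h0⟩ := hy
  rcases le_or_gt l.1 0 with a | a <;> rcases le_or_gt l.2.1 0 with b | b <;>
    rcases le_or_gt l.2.2 0 with c | c
  · -- all ≤ 0 : find a zero one or contradiction
    rcases a.eq_or_lt with a0 | a0
    · left; constructor <;> rw [a0] <;> simp
    rcases b.eq_or_lt with b0 | b0
    · right; left; constructor <;> rw [b0] <;> simp
    rcases c.eq_or_lt with c0 | c0
    · right; right; constructor <;> rw [c0] <;> simp
    exfalso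
    have t1 : l.1 * y.1 ^ 2 ≤ 0 := mul_nonpos_iff.2 (Or.inr ⟨a0.le, sq_nonneg _⟩)
    have t2 : l.2.1 * y.2.1 ^ 2 ≤ 0 := mul_nonpos_iff.2 (Or.inr ⟨b0.le, sq_nonneg _⟩)
    have t3 : l.2.2 * y.2.2 ^ 2 ≤ 0 := mul_nonpos_iff.2 (Or.inr ⟨c0.le, sq_nonneg _⟩)
    have e1 : l.1 * y.1 ^ 2 = 0 := by linarith
    have e2 : l.2.1 * y.2.1 ^ 2 = 0 := by linarith
    have e3 : l.2.2 * y.2.2 ^ 2 = 0 := by linarith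
    have z1 : y.1 ^ 2 = 0 := by
      rcases mul_eq_zero.1 e1 with h | h
      · exact absurd h a0.ne
      · exact h
    have z2 : y.2.1 ^ 2 = 0 := by
      rcases mul_eq_zero.1 e2 with h | h
      · exact absurd h b0.ne
      · exact h
    have z3 : y.2.2 ^ 2 = 0 := by
      rcases mul_eq_zero.1 e3 with h | h
      · exact absurd h c0.ne
      · exact h
    rw [z1, z2, z3] at h1
    norm_num at h1
  · right; right
    exact ⟨mul_nonpos_iff.2 (Or.inl ⟨c.le, a⟩), mul_nonpos_iff.2 (Or.inl ⟨c.le, b⟩)⟩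
  · right; left
    exact ⟨mul_nonpos_iff.2 (Or.inl ⟨b.le, a⟩), mul_nonpos_iff.2 (Or.inl ⟨b.le, c⟩)⟩
  · left
    exact ⟨mul_nonpos_iff.2 (Or.inr ⟨a, b.le⟩), mul_nonpos_iff.2 (Or.inr ⟨a, c.le⟩)⟩
  · left
    exact ⟨mul_nonpos_iff.2 (Or.inl ⟨a.le, b⟩), mul_nonpos_iff.2 (Or.inl ⟨a.le, c⟩)⟩
  · right; left
    exact ⟨mul_nonpos_iff.2 (Or.inr ⟨b, a.le⟩), mul_nonpos_iff.2 (Or.inr ⟨b, c.le⟩)⟩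
  · right; right
    exact ⟨mul_nonpos_iff.2 (Or.inr ⟨c, a.le⟩), mul_nonpos_iff.2 (Or.inr ⟨c, b.le⟩)⟩
  · -- all > 0 : contradiction
    exfalso
    have t1 : 0 ≤ l.1 * y.1 ^ 2 := mul_nonneg a.le (sq_nonneg _)
    have t2 : 0 ≤ l.2.1 * y.2.1 ^ 2 := mul_nonneg b.le (sq_nonneg _)
    have t3 : 0 ≤ l.2.2 * y.2.2 ^ 2 := mul_nonneg c.le (sq_nonneg _)
    have e1 : l.1 * y.1 ^ 2 = 0 := by linarith
    have e2 : l.2.1 * y.2.1 ^ 2 = 0 := by linarith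
    have e3 : l.2.2 * y.2.2 ^ 2 = 0 := by linarith
    have z1 : y.1 ^ 2 = 0 := by
      rcases mul_eq_zero.1 e1 with h | h
      · exact absurd h a.ne'
      · exact h
    have z2 : y.2.1 ^ 2 = 0 := by
      rcases mul_eq_zero.1 e2 with h | h
      · exact absurd h b.ne'
      · exact h
    have z3 : y.2.2 ^ 2 = 0 := by
      rcases mul_eq_zero.1 e3 with h | h
      · exact absurd h c.ne'
      · exact h
    rw [z1, z2, z3] at h1
    norm_num at h1

lemma connect (l : ℝ × ℝ × ℝ) (G : ℝ × ℝ × ℝ → ℝ) (hG : Continuous G)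
    (hGe : ∀ v, G (-v) = G v)
    {x y : ℝ × ℝ × ℝ} (hx : InZ l x) (hy : InZ l y)
    {μ : ℝ} (hμ : μ ∈ Set.uIcc (G x) (G y)) :
    ∃ z, InZ l z ∧ G z = μ := by
  rcases exists_good l hy with ⟨h1, h2⟩ | ⟨h1, h2⟩ | ⟨h1, h2⟩
  · exact connect₀ l h1 h2 G hG hGe hx hy hμ
  · -- swap coordinates 0 and 1
    let σ : ℝ × ℝ × ℝ → ℝ × ℝ × ℝ := fun v => (v.2.1, v.1, v.2.2)
    have hσc : Continuous σ := by fun_prop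
    have hσZ : ∀ v, InZ l v → InZ (σ l) (σ v) := by
      intro v ⟨u1, u2⟩
      exact ⟨by dsimp [σ]; linarith, by dsimp [σ]; linarith⟩
    obtain ⟨z, hz, hzG⟩ := connect₀ (σ l) h1 h2 (G ∘ σ) (hG.comp hσc)
      (fun v => hGe (σ v)) (hσZ x hx) (hσZ y hy) (hμ : μ ∈ Set.uIcc (G (σ (σ x))) (G (σ (σ y))))
    refine ⟨σ z, ?_, hzG⟩
    obtain ⟨u1, u2⟩ := hz
    dsimp [σ] at u1 u2 ⊢
    exact ⟨by linarith, by linarith⟩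
  · -- cycle : new first coordinate is old third
    let σ : ℝ × ℝ × ℝ → ℝ × ℝ × ℝ := fun v => (v.2.2, v.1, v.2.1)
    let τ : ℝ × ℝ × ℝ → ℝ × ℝ × ℝ := fun v => (v.2.1, v.2.2, v.1)
    have hτc : Continuous τ := by fun_prop
    have hσZ : ∀ v, InZ l v → InZ (σ l) (σ v) := by
      intro v ⟨u1, u2⟩
      exact ⟨by dsimp [σ]; linarith, by dsimp [σ]; linarith⟩
    obtain ⟨z, hz, hzG⟩ := connect₀ (σ l) h1 h2 (G ∘ τ) (hG.comp hτc)
      (fun v => hGe (τ v)) (hσZ x hx) (hσZ y hy)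
      (hμ : μ ∈ Set.uIcc (G (τ (σ x))) (G (τ (σ y))))
    refine ⟨τ z, ?_, hzG⟩
    obtain ⟨u1, u2⟩ := hz
    dsimp [σ, τ] at u1 u2 ⊢
    exact ⟨by linarith, by linarith⟩

lemma comb_mem_uIcc {a b t₁ : ℝ} (h1 : 0 ≤ t₁) (h2 : t₁ ≤ 1) :
    t₁ * a + (1 - t₁) * b ∈ Set.uIcc a b := by
  rcases le_total a b with hab | hab
  · rw [Set.uIcc_of_le hab]
    constructor
    · nlinarith [mul_nonneg (by linarith : (0:ℝ) ≤ 1 - t₁) (sub_nonneg.2 hab)]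
    · nlinarith [mul_nonneg h1 (sub_nonneg.2 hab)]
  · rw [Set.uIcc_of_ge hab]
    constructor
    · nlinarith [mul_nonneg h1 (sub_nonneg.2 hab)]
    · nlinarith [mul_nonneg (by linarith : (0:ℝ) ≤ 1 - t₁) (sub_nonneg.2 hab)]

lemma expand_quad {H : Type*} [NormedAddCommGroup H] [InnerProductSpace ℝ H]
    (A : H →ₗ[ℝ] H) (v : Fin 3 → H) (Z : Fin 3 → ℝ) :
    ⟪A (∑ i, Z i • v i), ∑ j, Z j • v j⟫ = ∑ i, ∑ j, Z i * Z j * ⟪A (v i), v j⟫ := by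
  rw [map_sum, sum_inner]
  refine Finset.sum_congr rfl fun i _ => ?_
  rw [map_smul, real_inner_smul_left, inner_sum, Finset.mul_sum]
  refine Finset.sum_congr rfl fun j _ => ?_
  rw [real_inner_smul_right]; ring

end BrickmanAux

set_option maxHeartbeats 1000000 in
open BrickmanAux in
theorem brickman_convexity
    {H : Type*} [NormedAddCommGroup H] [InnerProductSpace ℝ H]
    (hdim : 3 ≤ Module.rank ℝ H) (A₁ A₂ : H →ₗ[ℝ] H) :
    Convex ℝ {p : ℝ × ℝ | ∃ x : H, ‖x‖ = 1 ∧ p = (⟪A₁ x, x⟫, ⟪A₂ x, x⟫)} := by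
  intro p hp q hq t₁ t₂ ht₁ ht₂ hts
  obtain ⟨x, hx1, hpx⟩ := hp
  obtain ⟨y, hy1, hqy⟩ := hq
  by_cases hpq : p = q
  · subst hpq
    refine ⟨y, hy1, ?_⟩
    rw [← add_smul, hts, one_smul]
    exact hqy
  have ht2 : t₂ = 1 - t₁ := by linarith
  subst ht2
  set α : ℝ := p.1 - q.1 with hα
  set β : ℝ := p.2 - q.2 with hβ
  set c : ℝ := -β * p.1 + α * p.2 with hc
  have hαβ : α ≠ 0 ∨ β ≠ 0 := by
    by_contra hcon
    push_neg at hcon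
    apply hpq
    have e1 : p.1 = q.1 := by have := hcon.1; rw [hα] at this; linarith [sub_eq_zero.1 this]
    have e2 : p.2 = q.2 := by have := hcon.2; rw [hβ] at this; linarith [sub_eq_zero.1 this]
    exact Prod.ext e1 e2
  have hαβ2 : (0:ℝ) < α ^ 2 + β ^ 2 := by
    rcases hαβ with h | h
    · have h2 : 0 < α ^ 2 := lt_of_le_of_ne (sq_nonneg α) (Ne.symm (pow_ne_zero 2 h))
      nlinarith [sq_nonneg β]
    · have h2 : 0 < β ^ 2 := lt_of_le_of_ne (sq_nonneg β) (Ne.symm (pow_ne_zero 2 h))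
      nlinarith [sq_nonneg α]
  -- linear independence and the 3-dimensional subspace
  have hy0 : y ≠ 0 := fun h => by rw [h, norm_zero] at hy1; norm_num at hy1
  have hdep : ∀ a : ℝ, a • y ≠ x := by
    intro a hax
    apply hpq
    have hnx : ‖x‖ = |a| * ‖y‖ := by rw [← hax, norm_smul]; rfl
    have ha2 : a ^ 2 = 1 := by
      rw [hy1, mul_one, hx1] at hnx
      nlinarith [sq_abs a]
    have e1 : ⟪A₁ x, x⟫ = ⟪A₁ y, y⟫ := by
      rw [← hax, map_smul, real_inner_smul_left, real_inner_smul_right]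
      linear_combination ⟪A₁ y, y⟫ * ha2
    have e2 : ⟪A₂ x, x⟫ = ⟪A₂ y, y⟫ := by
      rw [← hax, map_smul, real_inner_smul_left, real_inner_smul_right]
      linear_combination ⟪A₂ y, y⟫ * ha2
    rw [hpx, hqy, e1, e2]
  have hli2 : LinearIndependent ℝ ![x, y] := by
    rw [linearIndependent_fin2]
    constructor
    · simpa using hy0
    · simpa using hdep
  have hspan : Submodule.span ℝ ({x, y} : Set H) ≠ ⊤ := by
    intro htop
    have h1 := rank_span_le (R := ℝ) ({x, y} : Set H)
    rw [htop, rank_top] at h1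
    have h2 : Cardinal.mk ({x, y} : Set H) ≤ 2 := by
      have h3 := Cardinal.mk_insert_le (α := H) (a := x) (s := ({y} : Set H))
      rw [Cardinal.mk_singleton] at h3
      exact h3.trans (by norm_num)
    have h5 := le_trans hdim (h1.trans h2)
    have h6 : (3:ℕ) ≤ 2 := by exact_mod_cast h5
    omega
  obtain ⟨w, hw⟩ : ∃ w, w ∉ Submodule.span ℝ ({x, y} : Set H) := by
    by_contra hcon
    push_neg at hcon
    exact hspan (Submodule.eq_top_iff'.2 hcon)
  have hli3 : LinearIndependent ℝ ![w, x, y] := by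
    rw [show ![w, x, y] = Fin.cons w ![x, y] from rfl, linearIndependent_fin_cons]
    refine ⟨hli2, ?_⟩
    have hr : Set.range ![x, y] = {x, y} := by
      ext u
      simp [Matrix.range_cons, Matrix.range_empty]
      tauto
    rw [hr]
    exact hw
  set V := Submodule.span ℝ (Set.range ![w, x, y]) with hV
  haveI hfd : FiniteDimensional ℝ V := FiniteDimensional.span_of_finite ℝ (Set.finite_range _)
  have hrank : Module.finrank ℝ V = 3 := by
    rw [finrank_span_eq_card hli3]
    exact Fintype.card_fin 3
  have hxV : x ∈ V := Submodule.subset_span ⟨1, rfl⟩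
  have hyV : y ∈ V := Submodule.subset_span ⟨2, rfl⟩
  -- the operator B and its symmetrization on V
  set B : H →ₗ[ℝ] H := (-β) • A₁ + α • A₂ - c • LinearMap.id with hB
  have hBq : ∀ z : H, ⟪B z, z⟫ = -β * ⟪A₁ z, z⟫ + α * ⟪A₂ z, z⟫ - c * ⟪z, z⟫ := by
    intro z
    simp only [hB, LinearMap.sub_apply, LinearMap.add_apply, LinearMap.smul_apply,
      LinearMap.id_apply, inner_sub_left, inner_add_left, real_inner_smul_left]
  set S : V →ₗ[ℝ] V :=
    (((V.orthogonalProjectionOnto).toLinearMap.comp B).comp V.subtype) with hS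
  have hSq : ∀ v : V, ⟪S v, v⟫ = ⟪B (v : H), (v : H)⟫ := by
    intro v
    have h := Submodule.starProjection_inner_eq_zero (K := V) (B (v : H)) (v : H) v.2
    rw [inner_sub_left] at h
    rw [Submodule.coe_inner]
    have h2 : ((S v : V) : H) = V.starProjection (B (v : H)) := rfl
    rw [h2]
    linarith
  set T : V →ₗ[ℝ] V := S + LinearMap.adjoint S with hT
  have hTsym : T.IsSymmetric := by
    intro u v
    simp only [hT, LinearMap.add_apply, inner_add_left, inner_add_right,
      LinearMap.adjoint_inner_left, LinearMap.adjoint_inner_right]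
    ring
  have hTq : ∀ v : V, ⟪T v, v⟫ = 2 * ⟪B (v : H), (v : H)⟫ := by
    intro v
    have h0 : ⟪T v, v⟫ = ⟪S v, v⟫ + ⟪LinearMap.adjoint S v, v⟫ := by
      rw [hT]
      exact inner_add_left _ _ _
    have h1 : ⟪LinearMap.adjoint S v, v⟫ = ⟪v, S v⟫ := LinearMap.adjoint_inner_left S v v
    have h2 : ⟪v, S v⟫ = ⟪S v, v⟫ := real_inner_comm _ _
    rw [h0, h1, h2, hSq]
    ring
  set e := hTsym.eigenvectorBasis hrank with he
  set lam := hTsym.eigenvalues hrank with hlam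
  have heig : ∀ i, T (e i) = lam i • e i := fun i => hTsym.apply_eigenvectorBasis hrank i
  have horth : ∀ i j, ⟪e i, e j⟫ = if i = j then (1:ℝ) else 0 :=
    fun i j => orthonormal_iff_ite.1 e.orthonormal i j
  have ecoord : ∀ (Z : Fin 3 → ℝ) (i : Fin 3), ⟪e i, ∑ j, Z j • e j⟫ = Z i := by
    intro Z i
    rw [inner_sum]
    simp_rw [real_inner_smul_right, horth]
    simp
  have quadT : ∀ Z : Fin 3 → ℝ,
      ⟪T (∑ j, Z j • e j), ∑ j, Z j • e j⟫ = ∑ i, lam i * Z i ^ 2 := by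
    intro Z
    rw [map_sum, sum_inner]
    refine Finset.sum_congr rfl fun i _ => ?_
    rw [map_smul, heig, smul_smul, real_inner_smul_left, ecoord]
    ring
  have normsum : ∀ Z : Fin 3 → ℝ,
      ⟪(∑ j, Z j • e j : V), ∑ j, Z j • e j⟫ = ∑ i, Z i ^ 2 := by
    intro Z
    rw [sum_inner]
    refine Finset.sum_congr rfl fun i _ => ?_
    rw [real_inner_smul_left, ecoord]
    ring
  -- coordinates of x and y
  set xV : V := ⟨x, hxV⟩ with hxVdef
  set yV : V := ⟨y, hyV⟩ with hyVdef
  set X : Fin 3 → ℝ := fun i => ⟪e i, xV⟫ with hX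
  set Y : Fin 3 → ℝ := fun i => ⟪e i, yV⟫ with hYdef
  have hxsum : (∑ i, X i • e i) = xV := by
    simp_rw [hX, ← e.repr_apply_apply]
    exact e.sum_repr xV
  have hysum : (∑ i, Y i • e i) = yV := by
    simp_rw [hYdef, ← e.repr_apply_apply]
    exact e.sum_repr yV
  have hxH : (∑ i, X i • (e i : H)) = x := by
    have h := congrArg (Subtype.val) hxsum
    simpa using h
  have hyH : (∑ i, Y i • (e i : H)) = y := by
    have h := congrArg (Subtype.val) hysum
    simpa using h
  have hxx : ⟪x, x⟫ = (1:ℝ) := by rw [real_inner_self_eq_norm_sq, hx1]; norm_num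
  have hyy : ⟪y, y⟫ = (1:ℝ) := by rw [real_inner_self_eq_norm_sq, hy1]; norm_num
  have hX1 : ∑ i, X i ^ 2 = 1 := by
    have h := normsum X
    rw [hxsum] at h
    have h2 : ⟪xV, xV⟫ = (1:ℝ) := by rw [Submodule.coe_inner]; exact hxx
    linarith
  have hY1 : ∑ i, Y i ^ 2 = 1 := by
    have h := normsum Y
    rw [hysum] at h
    have h2 : ⟪yV, yV⟫ = (1:ℝ) := by rw [Submodule.coe_inner]; exact hyy
    linarith
  have hpx1 : ⟪A₁ x, x⟫ = p.1 := by rw [hpx]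
  have hpx2 : ⟪A₂ x, x⟫ = p.2 := by rw [hpx]
  have hqy1 : ⟪A₁ y, y⟫ = q.1 := by rw [hqy]
  have hqy2 : ⟪A₂ y, y⟫ = q.2 := by rw [hqy]
  have hBx : ⟪B x, x⟫ = 0 := by
    rw [hBq, hxx, hpx1, hpx2, hc]
    ring
  have hBy : ⟪B y, y⟫ = 0 := by
    rw [hBq, hyy, hqy1, hqy2, hc]
    ring
  have hX0 : ∑ i, lam i * X i ^ 2 = 0 := by
    have h := quadT X
    rw [hxsum] at h
    have h2 := hTq xV
    have hcoe : ((xV : V) : H) = x := rfl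
    rw [hcoe, hBx] at h2
    linarith
  have hY0 : ∑ i, lam i * Y i ^ 2 = 0 := by
    have h := quadT Y
    rw [hysum] at h
    have h2 := hTq yV
    have hcoe : ((yV : V) : H) = y := rfl
    rw [hcoe, hBy] at h2
    linarith
  -- the continuous quadratic functional G on triples
  set g : Fin 3 → Fin 3 → ℝ :=
    fun i j => α * ⟪A₁ (e i : H), (e j : H)⟫ + β * ⟪A₂ (e i : H), (e j : H)⟫ with hg
  set tf : ℝ × ℝ × ℝ → Fin 3 → ℝ := fun v => ![v.1, v.2.1, v.2.2] with htf
  set G : ℝ × ℝ × ℝ → ℝ := fun v => ∑ i, ∑ j, tf v i * tf v j * g i j with hGdef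
  have htfc : ∀ i, Continuous fun v : ℝ × ℝ × ℝ => tf v i := by
    intro i
    fin_cases i
    · exact continuous_fst
    · exact continuous_fst.comp continuous_snd
    · exact continuous_snd.comp continuous_snd
  have hGc : Continuous G := by
    rw [hGdef]
    apply continuous_finset_sum
    intro i _
    apply continuous_finset_sum
    intro j _
    exact ((htfc i).mul (htfc j)).mul continuous_const
  have htfneg : ∀ v (k : Fin 3), tf (-v) k = -(tf v k) := by
    intro v k
    fin_cases k <;> rfl
  have hGe : ∀ v, G (-v) = G v := by
    intro v
    rw [hGdef]
    refine Finset.sum_congr rfl fun i _ => Finset.sum_congr rfl fun j _ => ?_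
    rw [htfneg, htfneg]
    ring
  have hGval : ∀ Z : Fin 3 → ℝ,
      (∑ i, ∑ j, Z i * Z j * g i j) =
        α * ⟪A₁ (∑ i, Z i • (e i : H)), ∑ i, Z i • (e i : H)⟫ +
        β * ⟪A₂ (∑ i, Z i • (e i : H)), ∑ i, Z i • (e i : H)⟫ := by
    intro Z
    rw [expand_quad, expand_quad, Finset.mul_sum, Finset.mul_sum, ← Finset.sum_add_distrib]
    refine Finset.sum_congr rfl fun i _ => ?_
    rw [Finset.mul_sum, Finset.mul_sum, ← Finset.sum_add_distrib]
    refine Finset.sum_congr rfl fun j _ => ?_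
    rw [hg]
    ring
  set Xt : ℝ × ℝ × ℝ := (X 0, X 1, X 2) with hXt
  set Yt : ℝ × ℝ × ℝ := (Y 0, Y 1, Y 2) with hYt
  have htfX : tf Xt = X := by
    funext i; fin_cases i <;> rfl
  have htfY : tf Yt = Y := by
    funext i; fin_cases i <;> rfl
  have hGX : G Xt = α * p.1 + β * p.2 := by
    rw [hGdef]
    simp only [htfX]
    rw [hGval X, hxH, hpx1, hpx2]
  have hGY : G Yt = α * q.1 + β * q.2 := by
    rw [hGdef]
    simp only [htfY]
    rw [hGval Y, hyH, hqy1, hqy2]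
  have hXtZ : InZ (lam 0, lam 1, lam 2) Xt := by
    constructor
    · have h := hX1; rw [Fin.sum_univ_three] at h; exact h
    · have h := hX0; rw [Fin.sum_univ_three] at h; exact h
  have hYtZ : InZ (lam 0, lam 1, lam 2) Yt := by
    constructor
    · have h := hY1; rw [Fin.sum_univ_three] at h; exact h
    · have h := hY0; rw [Fin.sum_univ_three] at h; exact h
  set μ : ℝ := t₁ * (α * p.1 + β * p.2) + (1 - t₁) * (α * q.1 + β * q.2) with hμdef
  have hμ : μ ∈ Set.uIcc (G Xt) (G Yt) := by
    rw [hGX, hGY, hμdef]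
    exact comb_mem_uIcc ht₁ (by linarith)
  obtain ⟨Zt, hZt, hGZt⟩ := connect (lam 0, lam 1, lam 2) G hGc hGe hXtZ hYtZ hμ
  set Z : Fin 3 → ℝ := ![Zt.1, Zt.2.1, Zt.2.2] with hZ
  set z : H := ∑ i, Z i • (e i : H) with hz
  have htfZ : tf Zt = Z := by
    funext i; fin_cases i <;> rfl
  have hZ1 : ∑ i, Z i ^ 2 = 1 := by
    rw [Fin.sum_univ_three]
    exact hZt.1
  have hZlam : ∑ i, lam i * Z i ^ 2 = 0 := by
    rw [Fin.sum_univ_three]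
    exact hZt.2
  have hzV : ((∑ i, Z i • e i : V) : H) = z := by
    rw [hz]
    simp
  have hzz : ⟪z, z⟫ = (1:ℝ) := by
    rw [← hzV, ← Submodule.coe_inner, normsum, hZ1]
  have hznorm : ‖z‖ = 1 := by
    have h := real_inner_self_eq_norm_sq z
    rw [hzz] at h
    nlinarith [norm_nonneg z]
  have hBz : ⟪B z, z⟫ = 0 := by
    have h := hTq (∑ i, Z i • e i)
    have h2 := quadT Z
    rw [hZlam] at h2
    rw [h2, hzV] at h
    linarith
  have hE2 : α * ⟪A₁ z, z⟫ + β * ⟪A₂ z, z⟫ = μ := by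
    rw [← hGZt, hGdef]
    simp only [htfZ]
    rw [hGval Z, ← hz]
  have hE1 : -β * ⟪A₁ z, z⟫ + α * ⟪A₂ z, z⟫ - c = 0 := by
    have h := hBq z
    rw [hBz, hzz] at h
    linarith
  set u₁ : ℝ := ⟪A₁ z, z⟫ with hu1def
  set u₂ : ℝ := ⟪A₂ z, z⟫ with hu2def
  have hne : α ^ 2 + β ^ 2 ≠ 0 := ne_of_gt hαβ2
  rw [hc, hα, hβ] at hE1
  rw [hμdef, hα, hβ] at hE2
  have key1 : (α ^ 2 + β ^ 2) * (u₁ - (t₁ * p.1 + (1 - t₁) * q.1)) = 0 := by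
    rw [hα, hβ]
    linear_combination (p.1 - q.1) * hE2 - (p.2 - q.2) * hE1
  have key2 : (α ^ 2 + β ^ 2) * (u₂ - (t₁ * p.2 + (1 - t₁) * q.2)) = 0 := by
    rw [hα, hβ]
    linear_combination (p.2 - q.2) * hE2 + (p.1 - q.1) * hE1
  have hu₁ : u₁ = t₁ * p.1 + (1 - t₁) * q.1 := by
    rcases mul_eq_zero.1 key1 with h | h
    · exact absurd h hne
    · linarith
  have hu₂ : u₂ = t₁ * p.2 + (1 - t₁) * q.2 := by
    rcases mul_eq_zero.1 key2 with h | h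
    · exact absurd h hne
    · linarith
  refine ⟨z, hznorm, ?_⟩
  rw [Prod.ext_iff]
  constructor
  · simp only [Prod.fst_add, Prod.smul_fst, smul_eq_mul]
    rw [← hu1def, hu₁]
  · simp only [Prod.snd_add, Prod.smul_snd, smul_eq_mul]
    rw [← hu2def, hu₂]
end

section
/- On ℓ², let (αₙ) be a sequence of positive reals converging to 0, and define diagonal operators A₀(x) = (αₙ xₙ)ₙ and A₁(x) = (αₙ(1 + 1/n) xₙ)ₙ. Then A₀ and A₁ are compact positive definite operators, the point (1,1) lies in the closure of the joint image {(⟨A₀x,x⟩, ⟨A₁x,x⟩) : x ∈ ℓ²}, but (1,1) does not belong to this joint image; hence the joint image is not closed. -/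
open scoped RealInnerProductSpace

open Filter

section Aux

variable {H : Type*} [NormedAddCommGroup H] [InnerProductSpace ℝ H] [CompleteSpace H]

lemma diag_coeff (b : HilbertBasis ℕ ℝ H) (β : ℕ → ℝ) (A : H →L[ℝ] H)
    (hA : ∀ n, A (b n) = β n • b n) (n : ℕ) (x : H) :
    ⟪b n, A x⟫ = β n * ⟪b n, x⟫ := by
  have hd : Dense ((Submodule.span ℝ (Set.range b)) : Set H) :=
    Submodule.dense_iff_topologicalClosure_eq_top.mpr b.dense_span
  have h : (innerSL ℝ (b n)).comp A = β n • innerSL ℝ (b n) := by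
    refine ContinuousLinearMap.ext_on hd ?_
    rintro _ ⟨m, rfl⟩
    simp only [ContinuousLinearMap.comp_apply, ContinuousLinearMap.smul_apply, innerSL_apply_apply,
      hA m, inner_smul_right, smul_eq_mul]
    rw [orthonormal_iff_ite.mp b.orthonormal n m]
    rcases eq_or_ne n m with rfl | hnm
    · simp
    · simp [hnm]
  have := DFunLike.congr_fun h x
  simpa using this

lemma diag_hasSum (b : HilbertBasis ℕ ℝ H) (β : ℕ → ℝ) (A : H →L[ℝ] H)
    (hA : ∀ n, A (b n) = β n • b n) (x y : H) :
    HasSum (fun i => β i * (⟪b i, x⟫ * ⟪b i, y⟫)) ⟪A x, y⟫ := by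
  have h := b.hasSum_inner_mul_inner (A x) y
  have he : (fun i => (⟪A x, b i⟫ * ⟪b i, y⟫ : ℝ)) = fun i => β i * (⟪b i, x⟫ * ⟪b i, y⟫) := by
    funext i
    rw [real_inner_comm (b i) (A x), diag_coeff b β A hA i x]
    ring
  rwa [he] at h

lemma diag_symm (b : HilbertBasis ℕ ℝ H) (β : ℕ → ℝ) (A : H →L[ℝ] H)
    (hA : ∀ n, A (b n) = β n • b n) (x y : H) :
    ⟪A x, y⟫ = ⟪x, A y⟫ := by
  have h1 := diag_hasSum b β A hA x y
  have h2 := diag_hasSum b β A hA y x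
  rw [real_inner_comm (A y) x]
  refine h1.unique ?_
  have he : (fun i => β i * (⟪b i, y⟫ * ⟪b i, x⟫ : ℝ))
      = fun i => β i * (⟪b i, x⟫ * ⟪b i, y⟫) := by
    funext i; ring
  rwa [he] at h2

lemma diag_pos (b : HilbertBasis ℕ ℝ H) (β : ℕ → ℝ) (hβ : ∀ n, 0 < β n) (A : H →L[ℝ] H)
    (hA : ∀ n, A (b n) = β n • b n) (x : H) (hx : x ≠ 0) :
    0 < ⟪A x, x⟫ := by
  have h1 := diag_hasSum b β A hA x x
  have hex : ∃ m, ⟪b m, x⟫ ≠ 0 := by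
    by_contra hall
    push_neg at hall
    have h := b.hasSum_inner_mul_inner x x
    have he : (fun i => (⟪x, b i⟫ * ⟪b i, x⟫ : ℝ)) = fun _ => (0 : ℝ) := by
      funext i; rw [hall i]; ring
    rw [he] at h
    exact hx (inner_self_eq_zero.mp (h.unique hasSum_zero))
  obtain ⟨m, hm⟩ := hex
  have hterm : 0 < β m * (⟪b m, x⟫ * ⟪b m, x⟫) := mul_pos (hβ m) (mul_self_pos.mpr hm)
  exact lt_of_lt_of_le hterm
    (le_hasSum h1 m fun j _ => mul_nonneg (hβ j).le (mul_self_nonneg _))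

lemma rank_one_compact (v w : H) :
    IsCompactOperator ((innerSL ℝ v).smulRight w) := by
  have h1 : IsCompactOperator (ContinuousLinearMap.toSpanSingleton ℝ w) := by
    refine ⟨(fun t : ℝ => t • w) '' Metric.closedBall 0 1,
      ((isCompact_closedBall 0 1).image (by continuity)), ?_⟩
    refine Filter.mem_of_superset (Metric.closedBall_mem_nhds (0:ℝ) one_pos) ?_
    intro t ht
    exact ⟨t, ht, rfl⟩
  have h2 := h1.comp_clm (innerSL ℝ v)
  have e : ⇑((innerSL ℝ v).smulRight w)
      = ⇑(ContinuousLinearMap.toSpanSingleton ℝ w) ∘ ⇑(innerSL ℝ v) := by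
    funext x; simp [ContinuousLinearMap.smulRight_apply]
  rw [e]; exact h2

lemma diag_compact (b : HilbertBasis ℕ ℝ H) (β : ℕ → ℝ)
    (hβ : Tendsto β atTop (nhds 0)) (A : H →L[ℝ] H)
    (hA : ∀ n, A (b n) = β n • b n) : IsCompactOperator A := by
  set T : ℕ → H →L[ℝ] H :=
    fun N => ∑ n ∈ Finset.range N, β n • (innerSL ℝ (b n)).smulRight (b n) with hT
  have hTc : ∀ N, IsCompactOperator (T N) := by
    intro N
    refine Finset.sum_induction _ (fun f : H →L[ℝ] H => IsCompactOperator f)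
      (fun f g hf hg => ?_)
      (by simpa using (isCompactOperator_zero : IsCompactOperator (0 : H → H))) ?_
    · have := hf.add hg
      rwa [show (⇑f + ⇑g) = ⇑(f + g) by rfl] at this
    · intro i _
      have := (rank_one_compact (b i) (b i)).smul (β i)
      rwa [show (β i • ⇑((innerSL ℝ (b i)).smulRight (b i)))
        = ⇑(β i • (innerSL ℝ (b i)).smulRight (b i)) by rfl] at this
  have hcoefT : ∀ N m (x : H),
      ⟪b m, T N x⟫ = if m ∈ Finset.range N then β m * ⟪b m, x⟫ else 0 := by
    intro N m x
    rw [hT]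
    simp only [ContinuousLinearMap.sum_apply, inner_sum, ContinuousLinearMap.smul_apply,
      ContinuousLinearMap.smulRight_apply, innerSL_apply_apply, real_inner_smul_right]
    have hterm : ∀ n ∈ Finset.range N,
        β n * (⟪b n, x⟫ * ⟪b m, b n⟫) = if m = n then β n * ⟪b n, x⟫ else 0 := by
      intro n _
      rw [orthonormal_iff_ite.mp b.orthonormal m n]
      split_ifs with h
      · subst h; ring
      · ring
    rw [Finset.sum_congr rfl hterm, Finset.sum_ite_eq (Finset.range N) m (fun n => β n * ⟪b n, x⟫)]
  have hcoefD : ∀ N m (x : H),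
      ⟪b m, A x - T N x⟫ = if m ∈ Finset.range N then 0 else β m * ⟪b m, x⟫ := by
    intro N m x
    rw [inner_sub_right, diag_coeff b β A hA, hcoefT]
    split_ifs <;> ring
  have hbound : ∀ (ε : ℝ), 0 ≤ ε → ∀ N, (∀ k, N ≤ k → |β k| ≤ ε) → ‖A - T N‖ ≤ ε := by
    intro ε hε N hN
    refine ContinuousLinearMap.opNorm_le_bound _ hε (fun x => ?_)
    set y := A x - T N x with hy
    have h1 : HasSum (fun i => ⟪b i, y⟫ * ⟪b i, y⟫) ⟪y, y⟫ := by
      have h := b.hasSum_inner_mul_inner y y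
      have he : (fun i => (⟪y, b i⟫ * ⟪b i, y⟫ : ℝ)) = fun i => ⟪b i, y⟫ * ⟪b i, y⟫ := by
        funext i; rw [real_inner_comm (b i) y]
      rwa [he] at h
    have h2 : HasSum (fun i => ε^2 * (⟪b i, x⟫ * ⟪b i, x⟫)) (ε^2 * ⟪x, x⟫) := by
      have h := (b.hasSum_inner_mul_inner x x).mul_left (ε^2)
      have he : (fun i => ε^2 * (⟪x, b i⟫ * ⟪b i, x⟫ : ℝ))
          = fun i => ε^2 * (⟪b i, x⟫ * ⟪b i, x⟫) := by
        funext i; rw [real_inner_comm (b i) x]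
      rwa [he] at h
    have hle : ⟪y, y⟫ ≤ ε^2 * ⟪x, x⟫ := by
      refine hasSum_le (fun i => ?_) h1 h2
      have hc := hcoefD N i x
      rw [← hy] at hc
      rw [hc]
      split_ifs with h
      · nlinarith [mul_self_nonneg (⟪b i, x⟫ : ℝ), sq_nonneg ε]
      · have hia : |β i| ≤ ε := hN i (Nat.le_of_not_lt (by simpa using h))
        have hb2 : β i ^ 2 ≤ ε ^ 2 := by
          have := pow_le_pow_left₀ (abs_nonneg (β i)) hia 2
          rwa [sq_abs] at this
        nlinarith [mul_self_nonneg (⟪b i, x⟫ : ℝ)]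
    have hsq : ‖y‖^2 ≤ (ε * ‖x‖)^2 := by
      rw [← real_inner_self_eq_norm_sq]
      calc ⟪y, y⟫ ≤ ε^2 * ⟪x, x⟫ := hle
        _ = (ε * ‖x‖)^2 := by rw [real_inner_self_eq_norm_sq]; ring
    have hgoal : ‖y‖ ≤ ε * ‖x‖ := by
      have h0 : (0:ℝ) ≤ ε * ‖x‖ := by positivity
      nlinarith [norm_nonneg y]
    simpa [ContinuousLinearMap.sub_apply, ← hy] using hgoal
  have htend : Tendsto T atTop (nhds A) := by
    rw [Metric.tendsto_atTop]
    intro ε hε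
    obtain ⟨N, hN⟩ := (Metric.tendsto_atTop.mp hβ) (ε/2) (by positivity)
    refine ⟨N, fun n hn => ?_⟩
    have hb : ‖A - T n‖ ≤ ε/2 := by
      refine hbound (ε/2) (by positivity) n (fun k hk => ?_)
      have := hN k (le_trans hn hk)
      rw [Real.dist_eq, sub_zero] at this
      exact this.le
    calc dist (T n) A = ‖A - T n‖ := by rw [dist_eq_norm, norm_sub_rev]
      _ ≤ ε/2 := hb
      _ < ε := by linarith
  exact isCompactOperator_of_tendsto htend (Eventually.of_forall hTc)

end Aux

/-- Example: on a real Hilbert space with a Hilbert basis `b` indexed by `ℕ`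
(modeling `ℓ²`), given a sequence of positive reals `α n → 0` and the diagonal
operators `A₀ (b n) = α n • b n` and `A₁ (b n) = α n (1 + 1/(n+1)) • b n`
(indexing from `0`, so `n+1` plays the role of the paper's `n ≥ 1`),
`A₀` and `A₁` are compact positive definite operators, `(1,1)` lies in the
closure of the joint image but not in it, hence the joint image is not closed. -/
theorem joint_image_not_closed_compact_case
    {H : Type*} [NormedAddCommGroup H] [InnerProductSpace ℝ H] [CompleteSpace H]
    (b : HilbertBasis ℕ ℝ H)
    (α : ℕ → ℝ) (hαpos : ∀ n, 0 < α n)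
    (hαlim : Filter.Tendsto α Filter.atTop (nhds 0))
    (A₀ A₁ : H →L[ℝ] H)
    (hA₀ : ∀ n, A₀ (b n) = α n • b n)
    (hA₁ : ∀ n, A₁ (b n) = (α n * (1 + 1 / (n + 1 : ℝ))) • b n) :
    IsCompactOperator A₀ ∧ IsCompactOperator A₁ ∧
    (∀ x y : H, ⟪A₀ x, y⟫ = ⟪x, A₀ y⟫) ∧
    (∀ x y : H, ⟪A₁ x, y⟫ = ⟪x, A₁ y⟫) ∧
    (∀ x : H, x ≠ 0 → 0 < ⟪A₀ x, x⟫) ∧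
    (∀ x : H, x ≠ 0 → 0 < ⟪A₁ x, x⟫) ∧
    ((1, 1) ∈ closure {p : ℝ × ℝ | ∃ x : H, p = (⟪A₀ x, x⟫, ⟪A₁ x, x⟫)}) ∧
    ((1, 1) ∉ {p : ℝ × ℝ | ∃ x : H, p = (⟪A₀ x, x⟫, ⟪A₁ x, x⟫)}) ∧
    ¬ IsClosed {p : ℝ × ℝ | ∃ x : H, p = (⟪A₀ x, x⟫, ⟪A₁ x, x⟫)} := by
  have hβ1pos : ∀ n : ℕ, 0 < α n * (1 + 1 / (n + 1 : ℝ)) := by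
    intro n
    have : (0:ℝ) < 1 + 1 / (n + 1 : ℝ) := by positivity
    exact mul_pos (hαpos n) this
  have h1n : Tendsto (fun n : ℕ => 1 / (n + 1 : ℝ)) atTop (nhds 0) :=
    tendsto_one_div_add_atTop_nhds_zero_nat
  have hadd : Tendsto (fun n : ℕ => 1 + 1 / (n + 1 : ℝ)) atTop (nhds (1 + 0)) :=
    (tendsto_const_nhds : Tendsto (fun _ : ℕ => (1:ℝ)) atTop (nhds 1)).add h1n
  have hβ1lim : Tendsto (fun n : ℕ => α n * (1 + 1 / (n + 1 : ℝ))) atTop (nhds 0) := by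
    have := hαlim.mul hadd
    simpa using this
  have hclosure : ((1:ℝ), (1:ℝ)) ∈
      closure {p : ℝ × ℝ | ∃ x : H, p = (⟪A₀ x, x⟫, ⟪A₁ x, x⟫)} := by
    have hmem : ∀ n : ℕ, ((1 : ℝ), 1 + 1 / (n + 1 : ℝ)) ∈
        {p : ℝ × ℝ | ∃ x : H, p = (⟪A₀ x, x⟫, ⟪A₁ x, x⟫)} := by
      intro n
      set c : ℝ := Real.sqrt (α n)⁻¹ with hcdef
      refine ⟨c • b n, ?_⟩
      have hb1 : ⟪b n, b n⟫ = (1:ℝ) := by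
        rw [orthonormal_iff_ite.mp b.orthonormal n n]; simp
      have hc : c * c = (α n)⁻¹ := Real.mul_self_sqrt (inv_nonneg.mpr (hαpos n).le)
      have e0 : ⟪A₀ (c • b n), c • b n⟫ = (1:ℝ) := by
        rw [map_smul, hA₀ n]
        rw [real_inner_smul_left, real_inner_smul_right, real_inner_smul_left, hb1]
        calc c * (c * (α n * 1)) = (c * c) * α n := by ring
          _ = (α n)⁻¹ * α n := by rw [hc]
          _ = 1 := inv_mul_cancel₀ (hαpos n).ne'
      have e1 : ⟪A₁ (c • b n), c • b n⟫ = 1 + 1 / (n + 1 : ℝ) := by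
        rw [map_smul, hA₁ n]
        rw [real_inner_smul_left, real_inner_smul_right, real_inner_smul_left, hb1]
        calc c * (c * (α n * (1 + 1 / (n + 1 : ℝ)) * 1))
            = ((c * c) * α n) * (1 + 1 / (n + 1 : ℝ)) := by ring
          _ = ((α n)⁻¹ * α n) * (1 + 1 / (n + 1 : ℝ)) := by rw [hc]
          _ = 1 + 1 / (n + 1 : ℝ) := by
              rw [inv_mul_cancel₀ (hαpos n).ne', one_mul]
      rw [e0, e1]
    have h2nd : Tendsto (fun n : ℕ => 1 + 1 / (n + 1 : ℝ)) atTop (nhds 1) := by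
      simpa using hadd
    have htt : Tendsto (fun n : ℕ => ((1:ℝ), 1 + 1 / (n + 1 : ℝ))) atTop
        (nhds ((1:ℝ), (1:ℝ))) :=
      Tendsto.prodMk_nhds
        (tendsto_const_nhds : Tendsto (fun _ : ℕ => (1:ℝ)) atTop (nhds 1)) h2nd
    exact mem_closure_of_tendsto htt (Eventually.of_forall hmem)
  have hnotmem : ((1:ℝ), (1:ℝ)) ∉
      {p : ℝ × ℝ | ∃ x : H, p = (⟪A₀ x, x⟫, ⟪A₁ x, x⟫)} := by
    rintro ⟨x, hx⟩
    have h0 : (1:ℝ) = ⟪A₀ x, x⟫ := congrArg Prod.fst hx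
    have h1 : (1:ℝ) = ⟪A₁ x, x⟫ := congrArg Prod.snd hx
    have hx0 : x ≠ 0 := by
      rintro rfl
      rw [inner_zero_right] at h0
      exact one_ne_zero h0
    have hD : ∀ n : ℕ, (A₁ - A₀) (b n) = (α n * (1 / (n + 1 : ℝ))) • b n := by
      intro n
      rw [ContinuousLinearMap.sub_apply, hA₀ n, hA₁ n, ← sub_smul]
      congr 1
      ring
    have hDpos := diag_pos b _ (fun n => mul_pos (hαpos n) (by positivity)) (A₁ - A₀) hD x hx0
    rw [ContinuousLinearMap.sub_apply, inner_sub_left] at hDpos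
    linarith
  refine ⟨diag_compact b α hαlim A₀ hA₀, diag_compact b _ hβ1lim A₁ hA₁,
    diag_symm b α A₀ hA₀, diag_symm b _ A₁ hA₁,
    fun x hx => diag_pos b α hαpos A₀ hA₀ x hx,
    fun x hx => diag_pos b _ hβ1pos A₁ hA₁ x hx,
    hclosure, hnotmem, fun hcl => hnotmem (hcl.closure_subset hclosure)⟩
end

section
/- Let A₁, ..., Aₙ be compact bounded linear operators on a real Hilbert space H. Then the set {(⟨A₁x,x⟩, ..., ⟨Aₙx,x⟩) ∈ ℝⁿ : ‖x‖ ≤ 1} is closed. -/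
open scoped RealInnerProductSpace

open NormedSpace WeakDual Metric Set

theorem joint_image_closed_ball_closed
    {H : Type*} [NormedAddCommGroup H] [InnerProductSpace ℝ H] [CompleteSpace H]
    (n : ℕ) (A : Fin n → H →L[ℝ] H) (hA : ∀ i, IsCompactOperator (A i)) :
    IsClosed {y : Fin n → ℝ | ∃ x : H, ‖x‖ ≤ 1 ∧ y = fun i => ⟪A i x, x⟫} := by
  classical
  set T := InnerProductSpace.toDual ℝ H with hT
  set B : Set (WeakDual ℝ H) := WeakDual.toStrongDual ⁻¹' Metric.closedBall (0 : StrongDual ℝ H) 1 with hB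
  have hBcomp : IsCompact B := WeakDual.isCompact_closedBall 0 1
  set Φ : WeakDual ℝ H → (Fin n → ℝ) :=
    fun y i => y (A i (T.symm (WeakDual.toStrongDual y))) with hΦ
  have himg : {y : Fin n → ℝ | ∃ x : H, ‖x‖ ≤ 1 ∧ y = fun i => ⟪A i x, x⟫} = Φ '' B := by
    ext z
    constructor
    · rintro ⟨x, hx, rfl⟩
      refine ⟨StrongDual.toWeakDual (T x), ?_, ?_⟩
      · simp only [hB, Set.mem_preimage, Metric.mem_closedBall, dist_zero_right]
        simpa using hx
      · funext i
        simp only [hΦ]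
        have h1 : T.symm (WeakDual.toStrongDual (StrongDual.toWeakDual (T x))) = x := by
          simp
        rw [h1]
        have : (StrongDual.toWeakDual (T x)) (A i x) = T x (A i x) := rfl
        rw [this, InnerProductSpace.toDual_apply_apply, real_inner_comm]
    · rintro ⟨y, hy, rfl⟩
      refine ⟨T.symm (WeakDual.toStrongDual y), ?_, ?_⟩
      · have : ‖T.symm (WeakDual.toStrongDual y)‖ = ‖WeakDual.toStrongDual y‖ := by
          simp
        rw [this]
        simpa [hB, dist_zero_right] using hy
      · funext i
        simp only [hΦ]
        rw [real_inner_comm, InnerProductSpace.toDual_symm_apply]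
        rfl
  rw [himg]
  refine (hBcomp.image_of_continuousOn ?_).isClosed
  rw [continuousOn_iff_continuous_restrict]
  refine continuous_pi fun i => ?_
  -- the key map g : B → H, continuous into the norm topology
  set g : B → H := fun y => A i (T.symm (WeakDual.toStrongDual y.1)) with hg_def
  have hgx : ∀ y : B, ‖T.symm (WeakDual.toStrongDual y.1)‖ ≤ 1 := by
    intro y
    have : ‖T.symm (WeakDual.toStrongDual y.1)‖ = ‖WeakDual.toStrongDual y.1‖ := by simp
    rw [this]
    exact mem_closedBall_zero_iff.mp y.2
  set K₀ : Set H := closure ((A i : H →ₗ[ℝ] H) '' Metric.closedBall 0 1) with hK₀def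
  have hK₀ : IsCompact K₀ := by
    refine IsCompactOperator.isCompact_closure_image_closedBall (f := (A i : H →ₗ[ℝ] H)) ?_ 1
    exact hA i
  haveI : CompactSpace K₀ := isCompact_iff_compactSpace.mp hK₀
  set F : K₀ → WeakDual ℝ H := fun x => StrongDual.toWeakDual (T x.1) with hF
  have hFcont : Continuous F :=
    NormedSpace.Dual.toWeakDual_continuous.comp (T.continuous.comp continuous_subtype_val)
  have hFinj : Function.Injective F := by
    intro a b hab
    have : T a.1 = T b.1 := StrongDual.toWeakDual.injective hab
    exact Subtype.ext (T.injective this)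
  have hFemb := (hFcont.isClosedEmbedding hFinj).toIsEmbedding
  set h : B → WeakDual ℝ H := fun y => F ⟨g y, by
    refine subset_closure ⟨T.symm (WeakDual.toStrongDual y.1), ?_, rfl⟩
    simpa [Metric.mem_closedBall, dist_zero_right] using hgx y⟩ with hh
  have hhcont : Continuous h := by
    refine WeakDual.continuous_of_continuous_eval fun u => ?_
    have heq : (fun y : B => h y u) =
        fun y : B => y.1 (ContinuousLinearMap.adjoint (A i) u) := by
      funext y
      have h1 : h y u = T (A i (T.symm (WeakDual.toStrongDual y.1))) u := rfl
      rw [h1, InnerProductSpace.toDual_apply_apply,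
        ← ContinuousLinearMap.adjoint_inner_right,
        InnerProductSpace.toDual_symm_apply]
      rfl
    rw [heq]
    exact (WeakDual.eval_continuous _).comp continuous_subtype_val
  have hgcont : Continuous g := by
    have hψ : Continuous (fun y : B => (⟨g y, by
      refine subset_closure ⟨T.symm (WeakDual.toStrongDual y.1), ?_, rfl⟩
      simpa [Metric.mem_closedBall, dist_zero_right] using hgx y⟩ : K₀)) := by
      rw [hFemb.continuous_iff]
      exact hhcont
    exact continuous_subtype_val.comp hψ
  -- now the evaluation map
  have hnorm : ∀ (y : B) (v : H), |y.1 v| ≤ ‖v‖ := by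
    intro y v
    have h1 : y.1 v = (WeakDual.toStrongDual y.1) v := rfl
    have h2 : ‖WeakDual.toStrongDual y.1‖ ≤ 1 := mem_closedBall_zero_iff.mp y.2
    calc |y.1 v| = ‖(WeakDual.toStrongDual y.1) v‖ := by rw [h1]; rfl
      _ ≤ ‖WeakDual.toStrongDual y.1‖ * ‖v‖ := ContinuousLinearMap.le_opNorm _ v
      _ ≤ 1 * ‖v‖ := by
          exact mul_le_mul_of_nonneg_right h2 (norm_nonneg v)
      _ = ‖v‖ := one_mul _
  rw [continuous_iff_continuousAt]
  intro y₀
  have hsplit : (fun y : B => Set.domRestrict B Φ y i) =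
      fun y : B => y.1 (g y₀) + y.1 (g y - g y₀) := by
    funext y
    simp only [Set.domRestrict_apply, hΦ]
    have : y.1 (g y - g y₀) = y.1 (g y) - y.1 (g y₀) := map_sub y.1 _ _
    rw [this]
    ring_nf
    rfl
  rw [hsplit]
  have h1 : ContinuousAt (fun y : B => y.1 (g y₀)) y₀ :=
    ((WeakDual.eval_continuous (g y₀)).comp continuous_subtype_val).continuousAt
  have h2 : Filter.Tendsto (fun y : B => y.1 (g y - g y₀)) (nhds y₀) (nhds 0) := by
    refine squeeze_zero_norm (a := fun y : B => ‖g y - g y₀‖) (fun y => ?_) ?_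
    · show ‖y.1 (g y - g y₀)‖ ≤ ‖g y - g y₀‖
      exact hnorm y _
    · have : Filter.Tendsto (fun y : B => g y - g y₀) (nhds y₀) (nhds (g y₀ - g y₀)) :=
        (hgcont.tendsto y₀).sub tendsto_const_nhds
      simpa using this.norm
  have := h1.tendsto.add h2
  simpa [ContinuousAt] using this
end

section
/- Let A₁, A₂ be compact selfadjoint operators on a real Hilbert space H. If (0,0) belongs to the joint numerical range W_ℝ(A₁,A₂) = {(⟨A₁x,x⟩, ⟨A₂x,x⟩) : ‖x‖ = 1}, then W_ℝ(A₁,A₂) is a closed subset of ℝ². -/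
open scoped RealInnerProductSpace
open Real Set Filter Topology

section Aux

variable {H : Type*} [NormedAddCommGroup H] [InnerProductSpace ℝ H]

/-- Arc between two B-orthogonal isotropic unit vectors. -/
private lemma arc2 (B : H →L[ℝ] H) (u v : H) (hu : ‖u‖ = 1) (hv : ‖v‖ = 1)
    (hind : ∀ c d : ℝ, c • u + d • v = 0 → c = 0 ∧ d = 0)
    (hbu : ⟪B u, u⟫ = 0) (hbv : ⟪B v, v⟫ = 0)
    (huv : ⟪B u, v⟫ = 0) (hvu : ⟪B v, u⟫ = 0) :
    ∃ P : Set H, IsPreconnected P ∧ u ∈ P ∧ v ∈ P ∧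
      ∀ z ∈ P, ‖z‖ = 1 ∧ ⟪B z, z⟫ = 0 := by
  set z : ℝ → H := fun θ => Real.cos θ • u + Real.sin θ • v with hz
  have hzne : ∀ θ, z θ ≠ 0 := by
    intro θ h
    obtain ⟨h1, h2⟩ := hind _ _ h
    nlinarith [Real.sin_sq_add_cos_sq θ]
  have hzcont : Continuous z :=
    (Real.continuous_cos.smul continuous_const).add (Real.continuous_sin.smul continuous_const)
  set f : ℝ → H := fun θ => ‖z θ‖⁻¹ • z θ with hf
  have hfcont : Continuous f :=
    ((hzcont.norm).inv₀ (fun θ => norm_ne_zero_iff.mpr (hzne θ))).smul hzcont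
  have hbz : ∀ θ, ⟪B (z θ), z θ⟫ = 0 := by
    intro θ
    simp only [hz, map_add, map_smul, inner_add_left, inner_add_right,
      real_inner_smul_left, real_inner_smul_right, hbu, hbv, huv, hvu]
    ring
  refine ⟨f '' Icc 0 (π / 2), (isPreconnected_Icc).image f hfcont.continuousOn, ?_, ?_, ?_⟩
  · refine ⟨0, left_mem_Icc.mpr (by positivity), ?_⟩
    simp [f, z, hu]
  · refine ⟨π / 2, right_mem_Icc.mpr (by positivity), ?_⟩
    simp [f, z, hv]
  · rintro _ ⟨θ, -, rfl⟩
    constructor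
    · rw [norm_smul, norm_inv, norm_norm, inv_mul_cancel₀ (norm_ne_zero_iff.mpr (hzne θ))]
    · simp only [f, map_smul, real_inner_smul_left, real_inner_smul_right, hbz]
      ring

/-- Arc in a 3-dim configuration: `u, v` isotropic units with `⟪Bu,v⟫ ≠ 0`, and `w`
B-orthogonal to both with `⟪Bw,w⟫ ≠ 0`. Connects `u` to `v` or `-v`. -/
private lemma arc3 (B : H →L[ℝ] H) (u v w : H) (hu : ‖u‖ = 1) (hv : ‖v‖ = 1)
    (hbu : ⟪B u, u⟫ = 0) (hbv : ⟪B v, v⟫ = 0)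
    (hc : ⟪B u, v⟫ ≠ 0) (hvu : ⟪B v, u⟫ = ⟪B u, v⟫)
    (huw : ⟪B u, w⟫ = 0) (hwu : ⟪B w, u⟫ = 0)
    (hvw : ⟪B v, w⟫ = 0) (hwv : ⟪B w, v⟫ = 0)
    (hq : ⟪B w, w⟫ ≠ 0) :
    ∃ P : Set H, IsPreconnected P ∧ u ∈ P ∧ (v ∈ P ∨ -v ∈ P) ∧
      ∀ z ∈ P, ‖z‖ = 1 ∧ ⟪B z, z⟫ = 0 := by
  set c := ⟪B u, v⟫ with hcdef
  set q := ⟪B w, w⟫ with hqdef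
  set σ : ℝ := if 0 < c / q then -1 else 1 with hσ
  have hσsq : σ ^ 2 = 1 := by
    rcases lt_or_ge 0 (c / q) with h | h
    · simp [hσ, if_pos h]
    · simp [hσ, if_neg (not_lt.mpr h)]
  set K : ℝ := -2 * (c / q) * σ with hK
  have hK0 : 0 ≤ K := by
    rcases lt_or_ge 0 (c / q) with h | h
    · simp only [hK, hσ, if_pos h]; nlinarith
    · simp only [hK, hσ, if_neg (not_lt.mpr h)]; nlinarith
  set r : ℝ → ℝ := fun θ => Real.sqrt (K * (Real.cos θ * Real.sin θ)) with hr
  set z : ℝ → H := fun θ => Real.cos θ • u + (σ * Real.sin θ) • v + r θ • w with hz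
  have hrsq : ∀ θ ∈ Icc 0 (π / 2), r θ ^ 2 = K * (Real.cos θ * Real.sin θ) := by
    intro θ hθ
    have h1 : 0 ≤ Real.cos θ := Real.cos_nonneg_of_mem_Icc
      ⟨le_trans (by linarith [Real.pi_pos]) hθ.1, hθ.2⟩
    have h2 : 0 ≤ Real.sin θ := Real.sin_nonneg_of_nonneg_of_le_pi hθ.1
      (hθ.2.trans (by linarith [Real.pi_pos]))
    rw [hr, Real.sq_sqrt (mul_nonneg hK0 (mul_nonneg h1 h2))]
  have hbz : ∀ θ ∈ Icc 0 (π / 2), ⟪B (z θ), z θ⟫ = 0 := by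
    intro θ hθ
    have expand : ⟪B (z θ), z θ⟫ = r θ ^ 2 * q + 2 * (Real.cos θ * (σ * Real.sin θ)) * c := by
      simp only [hz, map_add, map_smul, inner_add_left, inner_add_right,
        real_inner_smul_left, real_inner_smul_right, hbu, hbv, huw, hwu, hvw, hwv, hvu,
        ← hcdef, ← hqdef]
      ring
    rw [expand, hrsq θ hθ, hK]
    field_simp
    ring
  have hzne : ∀ θ, z θ ≠ 0 := by
    intro θ h
    have h1 : ⟪B (z θ), v⟫ = Real.cos θ * c := by
      simp only [hz, map_add, map_smul, inner_add_left, real_inner_smul_left, hbv, hwv, ← hcdef]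
      ring
    have h2 : ⟪B (z θ), u⟫ = σ * Real.sin θ * c := by
      simp only [hz, map_add, map_smul, inner_add_left, real_inner_smul_left, hbu, hwu, hvu, ← hcdef]
      ring
    rw [h, map_zero, inner_zero_left] at h1 h2
    have hcos : Real.cos θ = 0 := by
      rcases mul_eq_zero.mp h1.symm with h' | h'
      · exact h'
      · exact absurd h' hc
    have hsin : Real.sin θ = 0 := by
      rcases mul_eq_zero.mp h2.symm with h' | h'
      · rcases mul_eq_zero.mp h' with h'' | h''
        · nlinarith
        · exact h''
      · exact absurd h' hc
    nlinarith [Real.sin_sq_add_cos_sq θ]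
  have hzcont : Continuous z := by
    refine ((Real.continuous_cos.smul continuous_const).add
      ((continuous_const.mul Real.continuous_sin).smul continuous_const)).add ?_
    exact (Real.continuous_sqrt.comp
      (continuous_const.mul (Real.continuous_cos.mul Real.continuous_sin))).smul continuous_const
  set f : ℝ → H := fun θ => ‖z θ‖⁻¹ • z θ with hf
  have hfcont : Continuous f :=
    ((hzcont.norm).inv₀ (fun θ => norm_ne_zero_iff.mpr (hzne θ))).smul hzcont
  have hr0 : r 0 = 0 := by simp [hr]
  have hrpi : r (π / 2) = 0 := by simp [hr]
  refine ⟨f '' Icc 0 (π / 2), (isPreconnected_Icc).image f hfcont.continuousOn, ?_, ?_, ?_⟩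
  · refine ⟨0, left_mem_Icc.mpr (by positivity), ?_⟩
    simp [f, z, hr0, hu]
  · have hmem : f (π / 2) ∈ f '' Icc 0 (π / 2) :=
      ⟨π / 2, right_mem_Icc.mpr (by positivity), rfl⟩
    have hfval : f (π / 2) = σ • v := by
      have : z (π / 2) = σ • v := by simp [z, hrpi]
      rw [hf]
      simp only [this, norm_smul, hv]
      rcases lt_or_ge 0 (c/q) with h | h
      · simp [hσ, if_pos h]
      · simp [hσ, if_neg (not_lt.mpr h)]
    rcases lt_or_ge 0 (c/q) with h | h
    · right
      have hσ1 : σ = -1 := by simp [hσ, if_pos h]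
      rw [hσ1, neg_one_smul] at hfval
      rwa [hfval] at hmem
    · left
      have : σ = 1 := by simp [hσ, if_neg (not_lt.mpr h)]
      rw [this, one_smul] at hfval
      rwa [hfval] at hmem
  · rintro _ ⟨θ, hθ, rfl⟩
    constructor
    · rw [norm_smul, norm_inv, norm_norm, inv_mul_cancel₀ (norm_ne_zero_iff.mpr (hzne θ))]
    · simp only [f, map_smul, real_inner_smul_left, real_inner_smul_right]
      rw [hbz θ hθ]
      ring

private lemma indep_of_unit_ne (u v : H) (hu : ‖u‖ = 1) (hv : ‖v‖ = 1)
    (h1 : v ≠ u) (h2 : v ≠ -u) : ∀ c d : ℝ, c • u + d • v = 0 → c = 0 ∧ d = 0 := by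
  intro c d h
  rcases eq_or_ne c 0 with hc | hc
  · subst hc
    rw [zero_smul, zero_add] at h
    rcases smul_eq_zero.mp h with hd | hv0
    · exact ⟨rfl, hd⟩
    · exact absurd hv0 (by intro h'; rw [h', norm_zero] at hv; norm_num at hv)
  · exfalso
    have hu' : u = (-d / c) • v := by
      have : c • u = -(d • v) := by linear_combination (norm := module) h
      calc u = c⁻¹ • (c • u) := by rw [smul_smul, inv_mul_cancel₀ hc, one_smul]
        _ = (-d / c) • v := by rw [this, smul_neg, smul_smul]; module
    have habs : |(-d / c)| = 1 := by
      have := congrArg norm hu'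
      rw [hu, norm_smul, hv, mul_one, Real.norm_eq_abs] at this
      exact this.symm
    rcases abs_eq (by norm_num : (0:ℝ) ≤ 1) |>.mp habs with he | he
    · rw [he, one_smul] at hu'; exact h1 hu'.symm
    · rw [he, neg_one_smul] at hu'
      exact h2 (by rw [hu', neg_neg])

private lemma exists_biorthogonal (hinf : ¬FiniteDimensional ℝ H) (a b : H) :
    ∃ w : H, w ≠ 0 ∧ ⟪a, w⟫ = 0 ∧ ⟪b, w⟫ = 0 := by
  by_contra hcon
  push_neg at hcon
  set L : H →ₗ[ℝ] ℝ × ℝ :=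
    LinearMap.prod (innerSL ℝ a).toLinearMap (innerSL ℝ b).toLinearMap with hL
  have hinj : Function.Injective L := by
    rw [← LinearMap.ker_eq_bot]
    rw [LinearMap.ker_eq_bot']
    intro m hm
    by_contra hm0
    have h1 : ⟪a, m⟫ = 0 := congrArg Prod.fst hm
    have h2 : ⟪b, m⟫ = 0 := congrArg Prod.snd hm
    exact (hcon m hm0 h1) h2
  exact hinf (FiniteDimensional.of_injective L hinj)

private lemma connect (hinf : ¬FiniteDimensional ℝ H) (B : H →L[ℝ] H)
    (hsym : ∀ z w : H, ⟪B z, w⟫ = ⟪B w, z⟫)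
    (u v : H) (hu : ‖u‖ = 1) (hv : ‖v‖ = 1)
    (hbu : ⟪B u, u⟫ = 0) (hbv : ⟪B v, v⟫ = 0) :
    ∃ P : Set H, IsPreconnected P ∧ u ∈ P ∧ (v ∈ P ∨ -v ∈ P) ∧
      ∀ z ∈ P, ‖z‖ = 1 ∧ ⟪B z, z⟫ = 0 := by
  by_cases hdep : v = u ∨ v = -u
  · refine ⟨{u}, isPreconnected_singleton, rfl, ?_, ?_⟩
    · rcases hdep with h | h
      · left; exact h
      · right; rw [h, neg_neg]; rfl
    · rintro z rfl; exact ⟨hu, hbu⟩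
  push_neg at hdep
  have hind := indep_of_unit_ne u v hu hv hdep.1 hdep.2
  by_cases hc : ⟪B u, v⟫ = 0
  · obtain ⟨P, hP, huP, hvP, hprop⟩ :=
      arc2 B u v hu hv hind hbu hbv hc (by rw [hsym]; exact hc)
    exact ⟨P, hP, huP, Or.inl hvP, hprop⟩
  · obtain ⟨w, hw0, hw1, hw2⟩ := exists_biorthogonal hinf (B u) (B v)
    have hwu : ⟪B w, u⟫ = 0 := by rw [hsym]; exact hw1
    have hwv : ⟪B w, v⟫ = 0 := by rw [hsym]; exact hw2
    by_cases hq : ⟪B w, w⟫ = 0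
    · -- two-arc route via normalized w
      set w' : H := ‖w‖⁻¹ • w with hw'
      have hnw : ‖w‖ ≠ 0 := norm_ne_zero_iff.mpr hw0
      have hw'1 : ‖w'‖ = 1 := by
        rw [hw', norm_smul, norm_inv, norm_norm, inv_mul_cancel₀ hnw]
      have hbw' : ⟪B w', w'⟫ = 0 := by
        simp only [hw', map_smul, real_inner_smul_left, real_inner_smul_right, hq, mul_zero]
      have huw' : ⟪B u, w'⟫ = 0 := by
        simp only [hw', real_inner_smul_right, hw1, mul_zero]
      have hw'u : ⟪B w', u⟫ = 0 := by rw [hsym]; exact huw'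
      have hvw' : ⟪B v, w'⟫ = 0 := by
        simp only [hw', real_inner_smul_right, hw2, mul_zero]
      have hw'v : ⟪B w', v⟫ = 0 := by rw [hsym]; exact hvw'
      have hne1 : w' ≠ u := by
        intro h; apply hc; rw [← h]; exact hw'v
      have hne2 : w' ≠ -u := by
        intro h; apply hc
        have h2 := hw'v; rw [h] at h2; simpa using h2
      have hne3 : v ≠ w' := by
        intro h; apply hc; rw [h]; exact huw'
      have hne4 : v ≠ -w' := by
        intro h; apply hc; rw [h]; simpa using huw'
      have hind1 := indep_of_unit_ne u w' hu hw'1 hne1 hne2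
      have hind2 := indep_of_unit_ne w' v hw'1 hv hne3 hne4
      obtain ⟨P1, hP1, huP1, hw'P1, hprop1⟩ :=
        arc2 B u w' hu hw'1 hind1 hbu hbw' huw' hw'u
      obtain ⟨P2, hP2, hw'P2, hvP2, hprop2⟩ :=
        arc2 B w' v hw'1 hv hind2 hbw' hbv hw'v hvw'
      refine ⟨P1 ∪ P2, IsPreconnected.union w' hw'P1 hw'P2 hP1 hP2,
        Or.inl huP1, Or.inl (Or.inr hvP2), ?_⟩
      rintro z (hz | hz)
      · exact hprop1 z hz
      · exact hprop2 z hz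
    · exact arc3 B u v w hu hv hbu hbv hc (hsym v u ▸ rfl) hw1 hwu hw2 hwv hq

private lemma star_step (hinf : ¬FiniteDimensional ℝ H) (A₁ A₂ : H →L[ℝ] H)
    (hsym1 : ∀ x y : H, ⟪A₁ x, y⟫ = ⟪A₁ y, x⟫) (hsym2 : ∀ x y : H, ⟪A₂ x, y⟫ = ⟪A₂ y, x⟫)
    (u v : H) (hu : ‖u‖ = 1) (hv : ‖v‖ = 1)
    (hv1 : ⟪A₁ v, v⟫ = 0) (hv2 : ⟪A₂ v, v⟫ = 0)
    (t : ℝ) (ht0 : 0 ≤ t) (ht1 : t ≤ 1) :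
    ∃ z : H, ‖z‖ = 1 ∧ ⟪A₁ z, z⟫ = t * ⟪A₁ u, u⟫ ∧ ⟪A₂ z, z⟫ = t * ⟪A₂ u, u⟫ := by
  set a₁ := ⟪A₁ u, u⟫ with ha₁
  set a₂ := ⟪A₂ u, u⟫ with ha₂
  by_cases ha : a₁ = 0 ∧ a₂ = 0
  · exact ⟨v, hv, by rw [hv1, ha.1, mul_zero], by rw [hv2, ha.2, mul_zero]⟩
  have hpos : 0 < a₁ ^ 2 + a₂ ^ 2 := by
    rcases not_and_or.mp ha with h | h
    · have := sq_pos_of_ne_zero h; nlinarith [sq_nonneg a₂]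
    · have := sq_pos_of_ne_zero h; nlinarith [sq_nonneg a₁]
  set B : H →L[ℝ] H := a₁ • A₂ - a₂ • A₁ with hB
  have happB : ∀ z w : H, ⟪B z, w⟫ = a₁ * ⟪A₂ z, w⟫ - a₂ * ⟪A₁ z, w⟫ := by
    intro z w
    simp [hB, ContinuousLinearMap.sub_apply, ContinuousLinearMap.smul_apply,
      inner_sub_left, real_inner_smul_left]
  have hsymB : ∀ z w : H, ⟪B z, w⟫ = ⟪B w, z⟫ := by
    intro z w
    rw [happB, happB, hsym1 z w, hsym2 z w]
  have hbu : ⟪B u, u⟫ = 0 := by rw [happB, ← ha₁, ← ha₂]; ring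
  have hbv : ⟪B v, v⟫ = 0 := by rw [happB, hv1, hv2]; ring
  obtain ⟨P, hPconn, huP, hvP, hprop⟩ := connect hinf B hsymB u v hu hv hbu hbv
  set g : H → ℝ := fun z => a₁ * ⟪A₁ z, z⟫ + a₂ * ⟪A₂ z, z⟫ with hg
  have hgcont : Continuous g := by
    exact ((continuous_const.mul ((A₁.continuous).inner continuous_id)).add
      (continuous_const.mul ((A₂.continuous).inner continuous_id)))
  have hgu : g u = a₁ ^ 2 + a₂ ^ 2 := by simp [hg, ← ha₁, ← ha₂]; ring
  -- choose the endpoint of the path with g-value 0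
  obtain ⟨v', hv'P, hgv'⟩ : ∃ v', v' ∈ P ∧ g v' = 0 := by
    rcases hvP with h | h
    · exact ⟨v, h, by simp [hg, hv1, hv2]⟩
    · refine ⟨-v, h, ?_⟩
      simp [hg, hv1, hv2]
  have hsub : Icc (g v') (g u) ⊆ g '' P :=
    hPconn.intermediate_value hv'P huP hgcont.continuousOn
  have hmem : t * (a₁ ^ 2 + a₂ ^ 2) ∈ Icc (g v') (g u) := by
    rw [hgv', hgu]
    constructor
    · positivity
    · nlinarith
  obtain ⟨z, hzP, hgz⟩ := hsub hmem
  obtain ⟨hz1, hz2⟩ := hprop z hzP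
  refine ⟨z, hz1, ?_, ?_⟩
  · have h1 : a₁ * ⟪A₁ z, z⟫ + a₂ * ⟪A₂ z, z⟫ = t * (a₁ ^ 2 + a₂ ^ 2) := hgz
    have h2 : a₁ * ⟪A₂ z, z⟫ - a₂ * ⟪A₁ z, z⟫ = 0 := by rw [← happB]; exact hz2
    have key : (a₁ ^ 2 + a₂ ^ 2) * ⟪A₁ z, z⟫ = (a₁ ^ 2 + a₂ ^ 2) * (t * a₁) := by
      linear_combination a₁ * h1 - a₂ * h2
    exact mul_left_cancel₀ (ne_of_gt hpos) key
  · have h1 : a₁ * ⟪A₁ z, z⟫ + a₂ * ⟪A₂ z, z⟫ = t * (a₁ ^ 2 + a₂ ^ 2) := hgz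
    have h2 : a₁ * ⟪A₂ z, z⟫ - a₂ * ⟪A₁ z, z⟫ = 0 := by rw [← happB]; exact hz2
    have key : (a₁ ^ 2 + a₂ ^ 2) * ⟪A₂ z, z⟫ = (a₁ ^ 2 + a₂ ^ 2) * (t * a₂) := by
      linear_combination a₂ * h1 + a₁ * h2
    exact mul_left_cancel₀ (ne_of_gt hpos) key

variable [CompleteSpace H]

private lemma limit_mem (A₁ A₂ : H →L[ℝ] H)
    (hA₁c : IsCompactOperator A₁) (hA₂c : IsCompactOperator A₂)
    (hsym1 : ∀ x y : H, ⟪A₁ x, y⟫ = ⟪x, A₁ y⟫) (hsym2 : ∀ x y : H, ⟪A₂ x, y⟫ = ⟪x, A₂ y⟫)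
    {p : ℝ × ℝ}
    (hp : p ∈ closure {p : ℝ × ℝ | ∃ x : H, ‖x‖ = 1 ∧ p = (⟪A₁ x, x⟫, ⟪A₂ x, x⟫)}) :
    ∃ x : H, ‖x‖ ≤ 1 ∧ p = (⟪A₁ x, x⟫, ⟪A₂ x, x⟫) := by
  obtain ⟨q, hqmem, hqlim⟩ := mem_closure_iff_seq_limit.mp hp
  choose x hx1 hx2 using hqmem
  set U : Ultrafilter ℕ := Ultrafilter.of atTop with hU
  have hUle : (U : Filter ℕ) ≤ atTop := Ultrafilter.of_le _
  have hqU : Tendsto q U (𝓝 p) := hqlim.mono_left hUle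
  -- weak-* limit of the unit vectors
  set g : ℕ → WeakDual ℝ H := fun n => (InnerProductSpace.toDual ℝ H (x n) : H →L[ℝ] ℝ) with hg
  set Kb : Set (WeakDual ℝ H) := WeakDual.toStrongDual ⁻¹' Metric.closedBall 0 1 with hKb
  have hKbc : IsCompact Kb := WeakDual.isCompact_closedBall 0 1
  have hgK : ∀ n, g n ∈ Kb := by
    intro n
    simp only [hKb, Set.mem_preimage, Metric.mem_closedBall, dist_zero_right]
    show ‖(InnerProductSpace.toDual ℝ H (x n) : StrongDual ℝ H)‖ ≤ 1
    rw [(InnerProductSpace.toDual ℝ H).norm_map, hx1 n]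
  have hUK : ↑(U.map g) ≤ Filter.principal Kb := by
    rw [Ultrafilter.coe_map]
    exact le_principal_iff.mpr (Filter.mem_map.mpr (Filter.univ_mem' hgK))
  obtain ⟨φ, hφK, hφlim'⟩ := hKbc.ultrafilter_le_nhds (U.map g) hUK
  have hφlim : Tendsto g U (𝓝 φ) := by rwa [Ultrafilter.coe_map] at hφlim'
  set xl : H := (InnerProductSpace.toDual ℝ H).symm (WeakDual.toStrongDual φ) with hxl
  have hxln : ‖xl‖ ≤ 1 := by
    rw [hxl, (InnerProductSpace.toDual ℝ H).symm.norm_map]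
    have := hφK
    simp only [hKb, Set.mem_preimage, Metric.mem_closedBall, dist_zero_right] at this
    exact this
  have hφeq : ∀ y : H, φ y = ⟪xl, y⟫ := by
    intro y
    conv_rhs => rw [← InnerProductSpace.toDual_apply_apply]
    rw [hxl]
    congr 1
    exact ((InnerProductSpace.toDual ℝ H).apply_symm_apply _).symm
  have hweak : ∀ y : H, Tendsto (fun n => ⟪x n, y⟫) U (𝓝 ⟪xl, y⟫) := by
    intro y
    have hev : Tendsto (fun ψ : WeakDual ℝ H => ψ y) (𝓝 φ) (𝓝 (φ y)) :=
      (WeakDual.eval_continuous y).tendsto φ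
    have := hev.comp hφlim
    simp only [Function.comp_def, hg] at this
    rw [hφeq y] at this
    have h2 : (fun n => ((InnerProductSpace.toDual ℝ H) (x n)) y) = fun n => ⟪x n, y⟫ := by
      funext n; exact InnerProductSpace.toDual_apply_apply
    exact this
  -- strong limits of A_i (x n)
  have strong : ∀ (A : H →L[ℝ] H), IsCompactOperator A →
      (∀ x y : H, ⟪A x, y⟫ = ⟪x, A y⟫) →
      Tendsto (fun n => A (x n)) U (𝓝 (A xl)) := by
    intro A hAc hAs
    have hKA : IsCompact (closure (A '' Metric.closedBall 0 1)) := by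
      have : IsCompactOperator ⇑(A : H →ₗ[ℝ] H) := by
        simpa using hAc
      exact this.isCompact_closure_image_of_bounded Metric.isBounded_closedBall
    have hmem : ∀ n, A (x n) ∈ closure (A '' Metric.closedBall 0 1) := by
      intro n
      exact subset_closure ⟨x n, by simp [Metric.mem_closedBall, dist_zero_right, (hx1 n).le], rfl⟩
    have hUKA : ↑(U.map (fun n => A (x n))) ≤ Filter.principal (closure (A '' Metric.closedBall 0 1)) := by
      rw [Ultrafilter.coe_map]
      exact le_principal_iff.mpr (Filter.mem_map.mpr (Filter.univ_mem' hmem))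
    obtain ⟨y₀, hy₀K, hy₀lim'⟩ := hKA.ultrafilter_le_nhds _ hUKA
    have hy₀lim : Tendsto (fun n => A (x n)) U (𝓝 y₀) := by rwa [Ultrafilter.coe_map] at hy₀lim'
    have hy₀eq : y₀ = A xl := by
      apply ext_inner_right ℝ
      intro y
      have l1 : Tendsto (fun n => ⟪A (x n), y⟫) U (𝓝 ⟪y₀, y⟫) :=
        ((continuous_id.inner continuous_const).tendsto y₀).comp hy₀lim
      have l2 : Tendsto (fun n => ⟪A (x n), y⟫) U (𝓝 ⟪xl, A y⟫) := by
        have := hweak (A y)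
        convert this using 2 with n
        exact hAs (x n) y
      have := tendsto_nhds_unique l1 l2
      rw [this, ← hAs]
    rwa [hy₀eq] at hy₀lim
  have final : ∀ (A : H →L[ℝ] H), IsCompactOperator A →
      (∀ x y : H, ⟪A x, y⟫ = ⟪x, A y⟫) →
      Tendsto (fun n => ⟪A (x n), x n⟫) U (𝓝 ⟪A xl, xl⟫) := by
    intro A hAc hAs
    have hstrong := strong A hAc hAs
    have hdiff : Tendsto (fun n => A (x n) - A xl) U (𝓝 (A xl - A xl)) :=
      hstrong.sub tendsto_const_nhds
    rw [sub_self] at hdiff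
    have hterm1 : Tendsto (fun n => ⟪A (x n) - A xl, x n⟫) U (𝓝 0) := by
      apply squeeze_zero_norm (a := fun n => ‖A (x n) - A xl‖)
      · intro n
        calc ‖⟪A (x n) - A xl, x n⟫‖ ≤ ‖A (x n) - A xl‖ * ‖x n‖ := norm_inner_le_norm _ _
          _ = ‖A (x n) - A xl‖ := by rw [hx1 n, mul_one]
      · simpa using hdiff.norm
    have hterm2 : Tendsto (fun n => ⟪x n, A xl⟫) U (𝓝 ⟪xl, A xl⟫) := hweak (A xl)
    have heq : (fun n => ⟪A (x n), x n⟫) =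
        fun n => ⟪A (x n) - A xl, x n⟫ + ⟪x n, A xl⟫ := by
      funext n
      rw [inner_sub_left, real_inner_comm (x n) (A xl)]
      ring
    rw [heq]
    have := hterm1.add hterm2
    rw [zero_add] at this
    convert this using 2
    exact real_inner_comm _ _
  refine ⟨xl, hxln, ?_⟩
  have lim1 : Tendsto (fun n => (q n).1) U (𝓝 p.1) := (continuous_fst.tendsto p).comp hqU
  have lim2 : Tendsto (fun n => (q n).2) U (𝓝 p.2) := (continuous_snd.tendsto p).comp hqU
  have e1 : (fun n => (q n).1) = fun n => ⟪A₁ (x n), x n⟫ := by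
    funext n; rw [hx2 n]
  have e2 : (fun n => (q n).2) = fun n => ⟪A₂ (x n), x n⟫ := by
    funext n; rw [hx2 n]
  rw [e1] at lim1
  rw [e2] at lim2
  have p1 : p.1 = ⟪A₁ xl, xl⟫ := tendsto_nhds_unique lim1 (final A₁ hA₁c hsym1)
  have p2 : p.2 = ⟪A₂ xl, xl⟫ := tendsto_nhds_unique lim2 (final A₂ hA₂c hsym2)
  exact Prod.ext p1 p2

end Aux


theorem joint_numerical_range_closed_of_zero_mem
    {H : Type*} [NormedAddCommGroup H] [InnerProductSpace ℝ H] [CompleteSpace H]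
    (A₁ A₂ : H →L[ℝ] H)
    (hA₁c : IsCompactOperator A₁) (hA₂c : IsCompactOperator A₂)
    (hA₁s : IsSelfAdjoint A₁) (hA₂s : IsSelfAdjoint A₂)
    (h0 : (0, 0) ∈ {p : ℝ × ℝ | ∃ x : H, ‖x‖ = 1 ∧ p = (⟪A₁ x, x⟫, ⟪A₂ x, x⟫)}) :
    IsClosed {p : ℝ × ℝ | ∃ x : H, ‖x‖ = 1 ∧ p = (⟪A₁ x, x⟫, ⟪A₂ x, x⟫)} := by
  have hsym1 : ∀ x y : H, ⟪A₁ x, y⟫ = ⟪x, A₁ y⟫ := by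
    intro x y
    nth_rewrite 2 [← ContinuousLinearMap.isSelfAdjoint_iff'.mp hA₁s]
    exact (ContinuousLinearMap.adjoint_inner_right A₁ x y).symm
  have hsym2 : ∀ x y : H, ⟪A₂ x, y⟫ = ⟪x, A₂ y⟫ := by
    intro x y
    nth_rewrite 2 [← ContinuousLinearMap.isSelfAdjoint_iff'.mp hA₂s]
    exact (ContinuousLinearMap.adjoint_inner_right A₂ x y).symm
  have hsym1' : ∀ x y : H, ⟪A₁ x, y⟫ = ⟪A₁ y, x⟫ := by
    intro x y; rw [hsym1, real_inner_comm]
  have hsym2' : ∀ x y : H, ⟪A₂ x, y⟫ = ⟪A₂ y, x⟫ := by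
    intro x y; rw [hsym2, real_inner_comm]
  by_cases hfin : FiniteDimensional ℝ H
  · have himg : {p : ℝ × ℝ | ∃ x : H, ‖x‖ = 1 ∧ p = (⟪A₁ x, x⟫, ⟪A₂ x, x⟫)} =
        (fun x : H => (⟪A₁ x, x⟫, ⟪A₂ x, x⟫)) '' Metric.sphere 0 1 := by
      ext p
      simp only [Set.mem_setOf_eq, Set.mem_image, mem_sphere_zero_iff_norm]
      constructor
      · rintro ⟨x, hx, rfl⟩; exact ⟨x, hx, rfl⟩
      · rintro ⟨x, hx, rfl⟩; exact ⟨x, hx, rfl⟩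
    rw [himg]
    have hcont : Continuous fun x : H => (⟪A₁ x, x⟫, ⟪A₂ x, x⟫) :=
      ((A₁.continuous.inner continuous_id).prodMk (A₂.continuous.inner continuous_id))
    exact ((isCompact_sphere (0 : H) 1).image hcont).isClosed
  · apply isClosed_of_closure_subset
    intro p hp
    obtain ⟨x, hxn, hpx⟩ := limit_mem A₁ A₂ hA₁c hA₂c hsym1 hsym2 hp
    obtain ⟨v, hv, hveq⟩ := h0
    have hv1 : ⟪A₁ v, v⟫ = 0 := ((Prod.mk.injEq _ _ _ _).mp hveq).1.symm
    have hv2 : ⟪A₂ v, v⟫ = 0 := ((Prod.mk.injEq _ _ _ _).mp hveq).2.symm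
    by_cases hx0 : x = 0
    · refine ⟨v, hv, ?_⟩
      rw [hpx, hx0]
      simp [hv1, hv2]
    · have hs : (0 : ℝ) < ‖x‖ := norm_pos_iff.mpr hx0
      set u : H := ‖x‖⁻¹ • x with hudef
      have hu : ‖u‖ = 1 := by
        rw [hudef, norm_smul, norm_inv, norm_norm, inv_mul_cancel₀ (ne_of_gt hs)]
      obtain ⟨z, hz, hz1, hz2⟩ := star_step hfin A₁ A₂ hsym1' hsym2' u v hu hv hv1 hv2
        (‖x‖ ^ 2) (by positivity) (by nlinarith)
      refine ⟨z, hz, ?_⟩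
      have e1 : ‖x‖ ^ 2 * ⟪A₁ u, u⟫ = ⟪A₁ x, x⟫ := by
        rw [hudef]
        simp only [map_smul, real_inner_smul_left, real_inner_smul_right]
        field_simp
      have e2 : ‖x‖ ^ 2 * ⟪A₂ u, u⟫ = ⟪A₂ x, x⟫ := by
        rw [hudef]
        simp only [map_smul, real_inner_smul_left, real_inner_smul_right]
        field_simp
      rw [hpx]
      exact Prod.ext (by rw [hz1, e1]) (by rw [hz2, e2])
end

section
/- Let H be a real inner product space with 3 ≤ dim(H) ≤ ∞, A₁, A₂ bounded operators with μ₁A₁ + μ₂A₂ positive definite for some reals μ₁, μ₂, and aⱼ ∈ H, bⱼ ∈ ℝ for j = 1,2. Define φⱼ(x) = ⟨Aⱼx,x⟩ + ⟨x,aⱼ⟩ + bⱼ. Then the joint image Φ(H) = {(φ₁(x), φ₂(x)) : x ∈ H} is a convex subset of ℝ². -/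
open scoped RealInnerProductSpace
open Set

namespace PolyakAux

variable {V : Type*} [AddCommGroup V] [Module ℝ V]

lemma mem_uIcc_comb {α u v : ℝ} (h0 : 0 ≤ α) (h1 : α ≤ 1) :
    α * u + (1 - α) * v ∈ Set.uIcc u v := by
  rcases le_total u v with h | h
  · rw [Set.uIcc_of_le h, Set.mem_Icc]; constructor <;> nlinarith
  · rw [Set.uIcc_of_ge h, Set.mem_Icc]; constructor <;> nlinarith

lemma expand3 (q : V →ₗ[ℝ] V →ₗ[ℝ] ℝ) (a b c : ℝ) (x y w : V) :
    q (a • x + b • y + c • w) (a • x + b • y + c • w) =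
      a * a * q x x + a * b * q x y + a * c * q x w
      + b * a * q y x + b * b * q y y + b * c * q y w
      + c * a * q w x + c * b * q w y + c * c * q w w := by
  simp only [map_add, map_smul, LinearMap.add_apply, LinearMap.smul_apply, smul_eq_mul]
  ring

lemma smul_form_eq (q : V →ₗ[ℝ] V →ₗ[ℝ] ℝ) (r : ℝ) (u : V) :
    q (r • u) (r • u) = r * r * q u u := by
  simp only [map_smul, LinearMap.smul_apply, smul_eq_mul]
  ring

lemma pair_eq {A B : ℝ} {x y : V} (h : A • x + B • y = 0) (hB : B ≠ 0) :
    y = (-A / B) • x := by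
  have h' : B • y = (-A) • x := by
    rw [neg_smul]
    rw [add_comm] at h
    exact eq_neg_of_add_eq_zero_left h
  have h2 := congrArg (fun v : V => B⁻¹ • v) h'
  simp only [smul_smul, inv_mul_cancel₀ hB, one_smul] at h2
  rw [h2, div_eq_inv_mul]

lemma triple_eq {A B C : ℝ} {x y w : V} (h : A • x + B • y + C • w = 0) (hC : C ≠ 0) :
    w = (-A / C) • x + (-B / C) • y := by
  have h' : C • w = (-A) • x + (-B) • y := by
    rw [neg_smul, neg_smul]
    rw [add_comm] at h
    have := eq_neg_of_add_eq_zero_left h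
    rw [this, neg_add]
  have h2 := congrArg (fun v : V => C⁻¹ • v) h'
  simp only [smul_add, smul_smul, inv_mul_cancel₀ hC, one_smul] at h2
  rw [h2, div_eq_inv_mul, div_eq_inv_mul]

lemma seg2 (B₀ q g : V →ₗ[ℝ] V →ₗ[ℝ] ℝ)
    (hpos : ∀ v : V, v ≠ 0 → 0 < B₀ v v)
    (x y w : V) (τ : ℝ) (hτ : 0 ≤ τ)
    (hxx : q x x = 0) (hyy : q y y = 0)
    (hxw : q x w = 0) (hwx : q w x = 0) (hyw : q y w = 0) (hwy : q w y = 0)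
    (hBQ : q x y + q y x + 2 * τ * q w w = 0)
    (hne : ∀ t ∈ Icc (0:ℝ) 1,
      (1 - t) • x + t • y + Real.sqrt (2 * τ * (t * (1 - t))) • w ≠ 0)
    (hx1 : B₀ x x = 1) (hy1 : B₀ y y = 1)
    (m : ℝ) (hm : m ∈ Set.uIcc (g x x) (g y y)) :
    ∃ z : V, B₀ z z = 1 ∧ q z z = 0 ∧ g z z = m := by
  set c : ℝ → ℝ := fun t => Real.sqrt (2 * τ * (t * (1 - t))) with hcdef
  set γ : ℝ → V := fun t => (1 - t) • x + t • y + c t • w with hγdef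
  have hc0 : c 0 = 0 := by simp [hcdef]
  have hc1 : c 1 = 0 := by simp [hcdef]
  have hccont : Continuous c := by
    apply Real.continuous_sqrt.comp; fun_prop
  have hcsq : ∀ t ∈ Icc (0:ℝ) 1, c t * c t = 2 * τ * (t * (1 - t)) := by
    intro t ht
    exact Real.mul_self_sqrt (by nlinarith [mul_nonneg ht.1 (sub_nonneg.mpr ht.2), hτ])
  -- the quadratic form q vanishes along γ
  have hqγ : ∀ t ∈ Icc (0:ℝ) 1, q (γ t) (γ t) = 0 := by
    intro t ht
    rw [hγdef]
    simp only
    rw [expand3 q (1-t) t (c t) x y w, hxx, hyy, hxw, hwx, hyw, hwy, hcsq t ht]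
    ring_nf
    linear_combination (t - t * t) * hBQ
  -- explicit numerator and denominator
  set N : ℝ → ℝ := fun t =>
      (1-t) * (1-t) * g x x + (1-t) * t * g x y + (1-t) * c t * g x w
      + t * (1-t) * g y x + t * t * g y y + t * c t * g y w
      + c t * (1-t) * g w x + c t * t * g w y + c t * c t * g w w with hNdef
  set D : ℝ → ℝ := fun t =>
      (1-t) * (1-t) * B₀ x x + (1-t) * t * B₀ x y + (1-t) * c t * B₀ x w
      + t * (1-t) * B₀ y x + t * t * B₀ y y + t * c t * B₀ y w
      + c t * (1-t) * B₀ w x + c t * t * B₀ w y + c t * c t * B₀ w w with hDdef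
  have hNval : ∀ t, g (γ t) (γ t) = N t := by
    intro t; rw [hγdef, hNdef]; exact expand3 g (1-t) t (c t) x y w
  have hDval : ∀ t, B₀ (γ t) (γ t) = D t := by
    intro t; rw [hγdef, hDdef]; exact expand3 B₀ (1-t) t (c t) x y w
  have hDpos : ∀ t ∈ Icc (0:ℝ) 1, 0 < D t := by
    intro t ht
    rw [← hDval t]
    exact hpos _ (hne t ht)
  have hcontN : Continuous N := by rw [hNdef]; fun_prop
  have hcontD : Continuous D := by rw [hDdef]; fun_prop
  have hcont : ContinuousOn (fun t => N t / D t) (Set.uIcc (0:ℝ) 1) := by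
    rw [Set.uIcc_of_le (zero_le_one)]
    exact ContinuousOn.div hcontN.continuousOn hcontD.continuousOn
      (fun t ht => (hDpos t ht).ne')
  have h0 : N 0 / D 0 = g x x := by
    rw [hNdef, hDdef]; simp [hc0, hx1]
  have h1 : N 1 / D 1 = g y y := by
    rw [hNdef, hDdef]; simp [hc1, hy1]
  have hmm : m ∈ Set.uIcc (N 0 / D 0) (N 1 / D 1) := by rw [h0, h1]; exact hm
  obtain ⟨t, ht, hmt⟩ := intermediate_value_uIcc hcont hmm
  rw [Set.uIcc_of_le (zero_le_one)] at ht
  -- construct z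
  have hDt := hDpos t ht
  refine ⟨(Real.sqrt (D t))⁻¹ • γ t, ?_, ?_, ?_⟩
  · rw [smul_form_eq, hDval t, ← mul_inv, Real.mul_self_sqrt hDt.le]
    exact inv_mul_cancel₀ hDt.ne'
  · rw [smul_form_eq, hqγ t ht, mul_zero]
  · rw [smul_form_eq, hNval t, ← mul_inv, Real.mul_self_sqrt hDt.le]
    rw [← div_eq_inv_mul]
    exact hmt



lemma brick [FiniteDimensional ℝ V] (hdim : 3 ≤ Module.finrank ℝ V)
    (B₀ q g : V →ₗ[ℝ] V →ₗ[ℝ] ℝ)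
    (hpos : ∀ v : V, v ≠ 0 → 0 < B₀ v v)
    (hqsymm : ∀ u v : V, q u v = q v u)
    (x y : V) (hx1 : B₀ x x = 1) (hy1 : B₀ y y = 1)
    (hqx : q x x = 0) (hqy : q y y = 0)
    (m : ℝ) (hm : m ∈ Set.uIcc (g x x) (g y y)) :
    ∃ z : V, B₀ z z = 1 ∧ q z z = 0 ∧ g z z = m := by
  have hx0 : x ≠ 0 := by
    intro h; rw [h] at hx1; simp at hx1
  have hy0 : y ≠ 0 := by
    intro h; rw [h] at hy1; simp at hy1
  by_cases hdep : ∃ t : ℝ, y = t • x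
  · obtain ⟨t, rfl⟩ := hdep
    have ht2 : t * t = 1 := by
      rw [smul_form_eq, hx1, mul_one] at hy1; exact hy1
    have hgy : g (t • x) (t • x) = g x x := by rw [smul_form_eq, ht2, one_mul]
    rw [hgy, Set.uIcc_self, Set.mem_singleton_iff] at hm
    exact ⟨x, hx1, hqx, hm.symm⟩
  push_neg at hdep
  have hseg_ne : ∀ ε : ℝ, ε ≠ 0 → ∀ t ∈ Icc (0:ℝ) 1,
      (1 - t) • x + t • (ε • y) ≠ 0 := by
    intro ε hε t ht h
    rcases eq_or_ne t 0 with rfl | ht0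
    · simp only [sub_zero, one_smul, zero_smul, add_zero] at h
      exact hx0 h
    · rw [smul_smul] at h
      have h2 := pair_eq h (mul_ne_zero ht0 hε)
      exact hdep _ h2
  by_cases hB : q x y = 0
  · refine seg2 B₀ q g hpos x y 0 0 le_rfl hqx hqy (by simp) (by simp) (by simp) (by simp)
      (by rw [hqsymm y x, hB]; ring) ?_ hx1 hy1 m hm
    intro t ht
    simpa using hseg_ne 1 one_ne_zero t ht
  · -- find w with q x w = q y w = 0, w ≠ 0
    have hker : LinearMap.ker (LinearMap.prod (q x) (q y)) ≠ ⊥ := by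
      intro hbot
      have h1 := LinearMap.finrank_range_add_finrank_ker (LinearMap.prod (q x) (q y))
      rw [hbot, finrank_bot, add_zero] at h1
      have h2 : Module.finrank ℝ (LinearMap.range (LinearMap.prod (q x) (q y)))
          ≤ Module.finrank ℝ (ℝ × ℝ) := Submodule.finrank_le _
      rw [h1] at h2
      rw [Module.finrank_prod, Module.finrank_self] at h2
      omega
    obtain ⟨w, hwker, hw0⟩ := (Submodule.ne_bot_iff _).mp hker
    have hΨw : q x w = 0 ∧ q y w = 0 := Prod.mk_eq_zero.mp (LinearMap.mem_ker.mp hwker)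
    obtain ⟨hxw, hyw⟩ := hΨw
    have hwx : q w x = 0 := by rw [hqsymm w x]; exact hxw
    have hwy : q w y = 0 := by rw [hqsymm w y]; exact hyw
    have hwspan : ∀ p r : ℝ, w ≠ p • x + r • y := by
      intro p r hw
      have e1 : q x w = p * q x x + r * q x y := by
        rw [hw]; simp [map_add, map_smul, smul_eq_mul]
      have e2 : q y w = p * q y x + r * q y y := by
        rw [hw]; simp [map_add, map_smul, smul_eq_mul]
      rw [hxw, hqx, mul_zero, zero_add] at e1
      have hr : r = 0 := by
        rcases mul_eq_zero.mp e1.symm with h | h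
        · exact h
        · exact absurd h hB
      rw [hyw, hqy, hqsymm y x, mul_zero, add_zero] at e2
      have hp : p = 0 := by
        rcases mul_eq_zero.mp e2.symm with h | h
        · exact h
        · exact absurd h hB
      rw [hp, hr, zero_smul, zero_smul, add_zero] at hw
      exact hw0 hw
    by_cases hQ : q w w = 0
    · -- two legs through the normalized w
      have hWpos := hpos w hw0
      have hr0 : (Real.sqrt (B₀ w w))⁻¹ ≠ 0 :=
        inv_ne_zero (ne_of_gt (Real.sqrt_pos.mpr hWpos))
      have hw'1 : B₀ ((Real.sqrt (B₀ w w))⁻¹ • w) ((Real.sqrt (B₀ w w))⁻¹ • w) = 1 := by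
        rw [smul_form_eq, ← mul_inv, Real.mul_self_sqrt hWpos.le]
        exact inv_mul_cancel₀ hWpos.ne'
      have hqxw' : q x ((Real.sqrt (B₀ w w))⁻¹ • w) = 0 := by
        rw [map_smul, smul_eq_mul, hxw, mul_zero]
      have hqw'x : q ((Real.sqrt (B₀ w w))⁻¹ • w) x = 0 := by
        rw [hqsymm]; exact hqxw'
      have hqyw' : q y ((Real.sqrt (B₀ w w))⁻¹ • w) = 0 := by
        rw [map_smul, smul_eq_mul, hyw, mul_zero]
      have hqw'y : q ((Real.sqrt (B₀ w w))⁻¹ • w) y = 0 := by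
        rw [hqsymm]; exact hqyw'
      have hqw'w' : q ((Real.sqrt (B₀ w w))⁻¹ • w) ((Real.sqrt (B₀ w w))⁻¹ • w) = 0 := by
        rw [smul_form_eq, hQ, mul_zero]
      have hmm := Set.uIcc_subset_uIcc_union_uIcc (a := g x x)
        (b := g ((Real.sqrt (B₀ w w))⁻¹ • w) ((Real.sqrt (B₀ w w))⁻¹ • w)) (c := g y y) hm
      rcases hmm with hm1 | hm2
      · refine seg2 B₀ q g hpos x ((Real.sqrt (B₀ w w))⁻¹ • w) 0 0 le_rfl hqx hqw'w'
          (by simp) (by simp) (by simp) (by simp)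
          (by rw [hqxw', hqw'x]; ring) ?_ hx1 hw'1 m hm1
        intro t ht h
        simp only [smul_zero, add_zero] at h
        rcases eq_or_ne t 0 with rfl | ht0
        · simp only [sub_zero, one_smul, zero_smul, add_zero] at h
          exact hx0 h
        · rw [smul_smul] at h
          have h2 := pair_eq h (mul_ne_zero ht0 hr0)
          refine hwspan (-(1 - t) / (t * (Real.sqrt (B₀ w w))⁻¹)) 0 ?_
          rw [zero_smul, add_zero]
          exact h2
      · refine seg2 B₀ q g hpos ((Real.sqrt (B₀ w w))⁻¹ • w) y 0 0 le_rfl hqw'w' hqy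
          (by simp) (by simp) (by simp) (by simp)
          (by rw [hqw'y, hqyw']; ring) ?_ hw'1 hy1 m hm2
        intro t ht h
        simp only [smul_zero, add_zero] at h
        rcases eq_or_ne t 1 with rfl | ht1
        · simp only [sub_self, zero_smul, one_smul, zero_add] at h
          exact hy0 h
        · have hne1 : (1 - t) ≠ 0 := sub_ne_zero.mpr (Ne.symm ht1)
          rw [add_comm, smul_smul] at h
          have h2 := pair_eq h (mul_ne_zero hne1 hr0)
          refine hwspan 0 (-t / ((1 - t) * (Real.sqrt (B₀ w w))⁻¹)) ?_
          rw [zero_smul, zero_add]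
          exact h2
    · -- main case: curved path with the w-correction
      have hs : q x y / q w w ≠ 0 := div_ne_zero hB hQ
      obtain ⟨ε, hε2, hτ⟩ : ∃ ε : ℝ, ε * ε = 1 ∧ 0 ≤ -(ε * q x y) / q w w := by
        rcases lt_or_gt_of_ne hs with h | h
        · refine ⟨1, by norm_num, ?_⟩
          rw [one_mul, neg_div]
          linarith
        · refine ⟨-1, by norm_num, ?_⟩
          rw [neg_mul, one_mul, neg_neg]
          exact h.le
      have hε0 : ε ≠ 0 := by
        intro h; rw [h, mul_zero] at hε2; norm_num at hε2
      refine seg2 B₀ q g hpos x (ε • y) w (-(ε * q x y) / q w w) hτ hqx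
        (by rw [smul_form_eq, hqy, mul_zero])
        hxw hwx
        (by rw [map_smul, LinearMap.smul_apply, smul_eq_mul, hyw, mul_zero])
        (by rw [map_smul, smul_eq_mul, hwy, mul_zero])
        ?_ ?_ hx1
        (by rw [smul_form_eq, hy1, mul_one, hε2])
        m (by rw [show g (ε • y) (ε • y) = g y y by rw [smul_form_eq, hε2, one_mul]]; exact hm)
      · -- the balance identity
        have h1 : q x (ε • y) = ε * q x y := by rw [map_smul, smul_eq_mul]
        have h2 : q (ε • y) x = ε * q x y := by
          rw [map_smul, LinearMap.smul_apply, smul_eq_mul, hqsymm y x]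
        rw [h1, h2]
        field_simp
        ring
      · intro t ht h
        rcases eq_or_ne (Real.sqrt (2 * (-(ε * q x y) / q w w) * (t * (1 - t)))) 0 with hc | hc
        · rw [hc, zero_smul, add_zero] at h
          exact hseg_ne ε hε0 t ht h
        · have h2 := triple_eq h hc
          rw [smul_smul] at h2
          exact hwspan _ _ h2

lemma gb [FiniteDimensional ℝ V] (hdim : 3 ≤ Module.finrank ℝ V)
    (B₀ g₁ g₂ : V →ₗ[ℝ] V →ₗ[ℝ] ℝ)
    (hpos : ∀ v : V, v ≠ 0 → 0 < B₀ v v)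
    (hB₀symm : ∀ u v : V, B₀ u v = B₀ v u)
    (h1symm : ∀ u v : V, g₁ u v = g₁ v u)
    (h2symm : ∀ u v : V, g₂ u v = g₂ v u)
    (x y : V) (hx1 : B₀ x x = 1) (hy1 : B₀ y y = 1)
    (α : ℝ) (h0 : 0 ≤ α) (h1 : α ≤ 1) :
    ∃ z : V, B₀ z z = 1 ∧ g₁ z z = α * g₁ x x + (1 - α) * g₁ y y ∧
      g₂ z z = α * g₂ x x + (1 - α) * g₂ y y := by
  set c₁ : ℝ := g₂ y y - g₂ x x with hc₁
  set c₂ : ℝ := -(g₁ y y - g₁ x x) with hc₂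
  set k : ℝ := c₁ * g₁ x x + c₂ * g₂ x x with hk
  set q : V →ₗ[ℝ] V →ₗ[ℝ] ℝ := c₁ • g₁ + c₂ • g₂ + (-k) • B₀ with hq
  have hqval : ∀ u v : V, q u v = c₁ * g₁ u v + c₂ * g₂ u v - k * B₀ u v := by
    intro u v
    rw [hq]
    simp only [LinearMap.add_apply, LinearMap.smul_apply, smul_eq_mul]
    ring
  have hqsymm : ∀ u v : V, q u v = q v u := by
    intro u v
    rw [hqval, hqval, h1symm u v, h2symm u v, hB₀symm u v]
  have hqx : q x x = 0 := by rw [hqval, hx1, hk]; ring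
  have hqy : q y y = 0 := by rw [hqval, hy1, hk, hc₁, hc₂]; ring
  by_cases hc₂0 : c₂ = 0
  · have hg₁eq : g₁ y y = g₁ x x := by
      rw [hc₂] at hc₂0
      linarith [neg_eq_zero.mp hc₂0]
    by_cases hc₁0 : c₁ = 0
    · have hg₂eq : g₂ y y = g₂ x x := by
        rw [hc₁] at hc₁0
        linarith
      refine ⟨x, hx1, ?_, ?_⟩
      · rw [hg₁eq]; ring
      · rw [hg₂eq]; ring
    · obtain ⟨z, hz1, hzq, hzg⟩ := brick hdim B₀ q g₂ hpos hqsymm x y hx1 hy1 hqx hqy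
        (α * g₂ x x + (1 - α) * g₂ y y) (mem_uIcc_comb h0 h1)
      refine ⟨z, hz1, ?_, hzg⟩
      rw [hqval, hz1, mul_one, hc₂0, zero_mul, add_zero, hk, hc₂0, zero_mul, add_zero] at hzq
      have : g₁ z z = g₁ x x := by
        have := sub_eq_zero.mp hzq
        exact mul_left_cancel₀ hc₁0 this
      rw [this, hg₁eq]; ring
  · obtain ⟨z, hz1, hzq, hzg⟩ := brick hdim B₀ q g₁ hpos hqsymm x y hx1 hy1 hqx hqy
      (α * g₁ x x + (1 - α) * g₁ y y) (mem_uIcc_comb h0 h1)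
    refine ⟨z, hz1, hzg, ?_⟩
    rw [hqval, hz1, mul_one, hzg] at hzq
    have hkey : c₁ * (α * g₁ x x + (1 - α) * g₁ y y)
        + c₂ * (α * g₂ x x + (1 - α) * g₂ y y) - k = 0 := by
      rw [hk, hc₁, hc₂]; ring
    have : c₂ * g₂ z z = c₂ * (α * g₂ x x + (1 - α) * g₂ y y) := by linarith
    exact mul_left_cancel₀ hc₂0 this

-- The symmetrized bilinear form on E × ℝ associated to the quadratic function
-- x ↦ ⟪A x, x⟫ + ⟪x, a⟫ + b.
noncomputable def gform {H : Type*} [NormedAddCommGroup H] [InnerProductSpace ℝ H]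
    (E : Submodule ℝ H) (A : H →L[ℝ] H) (a : H) (b : ℝ) :
    (↥E × ℝ) →ₗ[ℝ] (↥E × ℝ) →ₗ[ℝ] ℝ :=
  LinearMap.mk₂ ℝ
    (fun p q => (⟪A ↑p.1, (↑q.1 : H)⟫ + ⟪A ↑q.1, (↑p.1 : H)⟫) / 2
      + (p.2 * ⟪(↑q.1 : H), a⟫ + q.2 * ⟪(↑p.1 : H), a⟫) / 2 + b * (p.2 * q.2))
    (by
      intro m₁ m₂ n
      simp only [Prod.fst_add, Prod.snd_add, Submodule.coe_add, map_add, inner_add_left,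
        inner_add_right]
      ring)
    (by
      intro c m n
      simp only [Prod.smul_fst, Prod.smul_snd, SetLike.val_smul, map_smul,
        real_inner_smul_left, real_inner_smul_right, smul_eq_mul]
      ring)
    (by
      intro m n₁ n₂
      simp only [Prod.fst_add, Prod.snd_add, Submodule.coe_add, map_add, inner_add_left,
        inner_add_right]
      ring)
    (by
      intro c m n
      simp only [Prod.smul_fst, Prod.smul_snd, SetLike.val_smul, map_smul,
        real_inner_smul_left, real_inner_smul_right, smul_eq_mul]
      ring)

lemma gform_apply {H : Type*} [NormedAddCommGroup H] [InnerProductSpace ℝ H]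
    (E : Submodule ℝ H) (A : H →L[ℝ] H) (a : H) (b : ℝ) (p q : ↥E × ℝ) :
    gform E A a b p q = (⟪A ↑p.1, (↑q.1 : H)⟫ + ⟪A ↑q.1, (↑p.1 : H)⟫) / 2
      + (p.2 * ⟪(↑q.1 : H), a⟫ + q.2 * ⟪(↑p.1 : H), a⟫) / 2 + b * (p.2 * q.2) := rfl

lemma gform_symm {H : Type*} [NormedAddCommGroup H] [InnerProductSpace ℝ H]
    (E : Submodule ℝ H) (A : H →L[ℝ] H) (a : H) (b : ℝ) (p q : ↥E × ℝ) :
    gform E A a b p q = gform E A a b q p := by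
  rw [gform_apply, gform_apply]; ring

lemma gform_diag {H : Type*} [NormedAddCommGroup H] [InnerProductSpace ℝ H]
    (E : Submodule ℝ H) (A : H →L[ℝ] H) (a : H) (b : ℝ) (v : ↥E) (s : ℝ) :
    gform E A a b (v, s) (v, s) = ⟪A ↑v, (↑v : H)⟫ + s * ⟪(↑v : H), a⟫ + b * (s * s) := by
  rw [gform_apply]; ring

lemma gform3_apply {H : Type*} [NormedAddCommGroup H] [InnerProductSpace ℝ H]
    (E : Submodule ℝ H) (p q : ↥E × ℝ) :
    gform E (0 : H →L[ℝ] H) (0 : H) 1 p q = p.2 * q.2 := by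
  rw [gform_apply]
  simp only [ContinuousLinearMap.zero_apply, inner_zero_left, inner_zero_right, one_mul,
    mul_zero]
  ring

end PolyakAux

set_option maxHeartbeats 2000000 in
open PolyakAux in
theorem polyak_convexity_nonhomogeneous
    {H : Type*} [NormedAddCommGroup H] [InnerProductSpace ℝ H]
    (hdim : 3 ≤ Module.rank ℝ H)
    (A₁ A₂ : H →L[ℝ] H) (μ₁ μ₂ : ℝ)
    (hsymm : ∀ x y : H, ⟪(μ₁ • A₁ + μ₂ • A₂) x, y⟫ = ⟪x, (μ₁ • A₁ + μ₂ • A₂) y⟫)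
    (hpos : ∀ x : H, x ≠ 0 → 0 < ⟪(μ₁ • A₁ + μ₂ • A₂) x, x⟫)
    (a₁ a₂ : H) (b₁ b₂ : ℝ) :
    Convex ℝ {p : ℝ × ℝ | ∃ x : H,
      p = (⟪A₁ x, x⟫ + ⟪x, a₁⟫ + b₁, ⟪A₂ x, x⟫ + ⟪x, a₂⟫ + b₂)} := by
  intro p hp q hq aα bβ ha hb hab
  simp only [Set.mem_setOf_eq] at hp hq ⊢
  obtain ⟨u0, rfl⟩ := hp
  obtain ⟨u1, rfl⟩ := hq
  -- a finite-dimensional subspace of dimension ≥ 2 containing all data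
  have h2rank : (2 : Cardinal) ≤ Module.rank ℝ H := le_trans (by norm_num) hdim
  obtain ⟨sfin, hscard, hsli⟩ := le_rank_iff_exists_linearIndependent_finset.mp h2rank
  have hSfin : ({u0, u1, a₁, a₂} ∪ (↑sfin : Set H)).Finite :=
    Set.Finite.union (Set.toFinite _) sfin.finite_toSet
  set E : Submodule ℝ H := Submodule.span ℝ ({u0, u1, a₁, a₂} ∪ (↑sfin : Set H)) with hE
  haveI : FiniteDimensional ℝ ↥E := FiniteDimensional.span_of_finite ℝ hSfin
  have hu0E : u0 ∈ E := Submodule.subset_span (by simp)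
  have hu1E : u1 ∈ E := Submodule.subset_span (by simp)
  have hfr2 : 2 ≤ Module.finrank ℝ ↥E := by
    have hmem : ∀ v : ↥(sfin : Set H), (v : H) ∈ E :=
      fun v => Submodule.subset_span (Set.mem_union_right _ v.2)
    have hliι : LinearIndependent ℝ (fun v : ↥(sfin : Set H) => (⟨v, hmem v⟩ : ↥E)) := by
      apply LinearIndependent.of_comp E.subtype
      convert hsli <;> rfl
    have hcard := hliι.cardinalMk_le_finrank
    have hmk : (Cardinal.mk ↥(sfin : Set H)) = (sfin.card : Cardinal) := by
      rw [Finset.coe_sort_coe]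
      exact Cardinal.mk_coe_finset
    rw [hmk, hscard] at hcard
    exact_mod_cast hcard
  have hdimV : 3 ≤ Module.finrank ℝ (↥E × ℝ) := by
    rw [Module.finrank_prod, Module.finrank_self]
    omega
  -- coercivity of the combined quadratic part on E
  haveI : ProperSpace ↥E := FiniteDimensional.proper ℝ ↥E
  haveI : Nontrivial ↥E := by
    apply Module.nontrivial_of_finrank_pos (R := ℝ)
    omega
  set f : ↥E → ℝ := fun v => ⟪(μ₁ • A₁ + μ₂ • A₂) (↑v : H), (↑v : H)⟫ with hf
  have hsne : (Metric.sphere (0:↥E) 1).Nonempty := NormedSpace.sphere_nonempty.mpr zero_le_one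
  have hfc : ContinuousOn f (Metric.sphere (0:↥E) 1) := by
    apply Continuous.continuousOn
    exact Continuous.inner ((μ₁ • A₁ + μ₂ • A₂).continuous.comp continuous_subtype_val)
      continuous_subtype_val
  obtain ⟨v₀, hv₀s, hv₀min⟩ := (isCompact_sphere (0:↥E) 1).exists_isMinOn hsne hfc
  set lam := f v₀ with hlamdef
  have hv₀ : (↑v₀ : H) ≠ 0 := by
    intro h
    have hveq : v₀ = 0 := Subtype.ext h
    rw [hveq] at hv₀s
    simp at hv₀s
  have hlam : 0 < lam := hpos _ hv₀
  have hcoer : ∀ v : ↥E, lam * ‖(↑v : H)‖^2 ≤ f v := by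
    intro v
    rcases eq_or_ne v 0 with rfl | hv
    · simp [hf]
    · have hvH : (↑v : H) ≠ 0 := fun h => hv (Subtype.ext h)
      have hvn : ‖(↑v : H)‖ ≠ 0 := norm_ne_zero_iff.mpr hvH
      have hu : (‖(↑v : H)‖⁻¹ • v) ∈ Metric.sphere (0:↥E) 1 := by
        rw [mem_sphere_zero_iff_norm, norm_smul, norm_inv, norm_norm, Submodule.coe_norm]
        exact inv_mul_cancel₀ hvn
      have hle : lam ≤ f (‖(↑v : H)‖⁻¹ • v) := hv₀min hu
      have hfs : f (‖(↑v : H)‖⁻¹ • v) = ‖(↑v : H)‖⁻¹ * ‖(↑v : H)‖⁻¹ * f v := by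
        simp only [hf, SetLike.val_smul, map_smul, real_inner_smul_left,
          real_inner_smul_right, smul_eq_mul]
        ring
      rw [hfs] at hle
      have h3 : ‖(↑v : H)‖^2 * lam ≤ ‖(↑v : H)‖^2 * (‖(↑v : H)‖⁻¹ * ‖(↑v : H)‖⁻¹ * f v) :=
        mul_le_mul_of_nonneg_left hle (by positivity)
      have h4 : ‖(↑v : H)‖^2 * (‖(↑v : H)‖⁻¹ * ‖(↑v : H)‖⁻¹ * f v) = f v := by
        field_simp
      rw [h4] at h3
      linarith
  -- the positive-definite homogenized form B₀
  set aμ : H := μ₁ • a₁ + μ₂ • a₂ with haμ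
  set bμ : ℝ := μ₁ * b₁ + μ₂ * b₂ with hbμ
  set Kc : ℝ := ‖aμ‖ with hKc
  set μ₃ : ℝ := Kc^2/(4*lam) + 1 + |bμ| - bμ with hμ₃
  have hμ₃pos : 0 < μ₃ := by
    have h1 : 0 ≤ Kc^2/(4*lam) := by positivity
    have h2 : bμ ≤ |bμ| := le_abs_self bμ
    rw [hμ₃]; linarith
  have hC4 : Kc^2 < 4*lam*(bμ + μ₃) := by
    have he : 4*lam*(bμ + μ₃) = Kc^2 + 4*lam*(1 + |bμ|) := by
      rw [hμ₃]
      field_simp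
      ring
    nlinarith [mul_pos hlam (show (0:ℝ) < 1 + |bμ| by positivity)]
  set B₀ := μ₁ • gform E A₁ a₁ b₁ + μ₂ • gform E A₂ a₂ b₂
      + μ₃ • gform E (0 : H →L[ℝ] H) (0 : H) 1 with hB₀
  have hB₀app : ∀ u u' : ↥E × ℝ, B₀ u u' = μ₁ * gform E A₁ a₁ b₁ u u'
      + μ₂ * gform E A₂ a₂ b₂ u u' + μ₃ * gform E (0 : H →L[ℝ] H) (0 : H) 1 u u' := by
    intro u u'
    rw [hB₀]
    simp only [LinearMap.add_apply, LinearMap.smul_apply, smul_eq_mul]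
  have hB₀symm : ∀ u u' : ↥E × ℝ, B₀ u u' = B₀ u' u := by
    intro u u'
    rw [hB₀app, hB₀app, gform_symm E A₁ a₁ b₁ u u', gform_symm E A₂ a₂ b₂ u u',
      gform_symm E (0 : H →L[ℝ] H) (0 : H) 1 u u']
  have hB₀diag : ∀ (v : ↥E) (s : ℝ),
      B₀ (v,s) (v,s) = f v + s * ⟪(↑v : H), aμ⟫ + (bμ + μ₃) * (s*s) := by
    intro v s
    rw [hB₀app, gform_diag, gform_diag, gform3_apply]
    simp only [hf, haμ, hbμ]
    simp only [ContinuousLinearMap.add_apply, ContinuousLinearMap.coe_smul', Pi.smul_apply,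
      inner_add_left, real_inner_smul_left, inner_add_right, real_inner_smul_right,
      smul_eq_mul]
    ring
  have hB₀pos : ∀ z : ↥E × ℝ, z ≠ 0 → 0 < B₀ z z := by
    rintro ⟨v, s⟩ hz
    rw [hB₀diag]
    rcases eq_or_ne s 0 with rfl | hs
    · have hv : v ≠ 0 := by
        intro h
        exact hz (by rw [h]; rfl)
      have hv' : (↑v : H) ≠ 0 := fun h => hv (Subtype.ext h)
      have hfv := hpos _ hv'
      simp only [mul_zero, zero_mul, add_zero]
      exact hfv
    · have h1 := hcoer v
      have h2 : |⟪(↑v:H), aμ⟫| ≤ ‖(↑v:H)‖ * Kc := by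
        rw [hKc]; exact abs_real_inner_le_norm _ _
      have h5 : -( |s| * (‖(↑v:H)‖ * Kc)) ≤ s * ⟪(↑v:H), aμ⟫ := by
        have h3 : -(|s| * |⟪(↑v:H), aμ⟫|) ≤ s * ⟪(↑v:H), aμ⟫ := by
          rw [← abs_mul]; exact neg_abs_le _
        have h4 := mul_le_mul_of_nonneg_left h2 (abs_nonneg s)
        linarith
      have hs2 : 0 < s * s := mul_self_pos.mpr hs
      have habs : |s| * |s| = s * s := abs_mul_abs_self s
      nlinarith [sq_nonneg (2 * lam * ‖(↑v:H)‖ - Kc * |s|), hs2, hlam,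
        mul_lt_mul_of_pos_right hC4 hs2, abs_nonneg s, norm_nonneg (↑v : H),
        mul_pos hlam hs2, h1, h5, habs]
  -- lift the two points and normalize
  set X0 : ↥E × ℝ := (⟨u0, hu0E⟩, 1) with hX0
  set X1 : ↥E × ℝ := (⟨u1, hu1E⟩, 1) with hX1
  have hX0ne : X0 ≠ 0 := by
    intro h
    exact one_ne_zero (congrArg Prod.snd h)
  have hX1ne : X1 ≠ 0 := by
    intro h
    exact one_ne_zero (congrArg Prod.snd h)
  set t₀ := B₀ X0 X0 with ht₀def
  set t₁ := B₀ X1 X1 with ht₁def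
  have ht₀ : 0 < t₀ := hB₀pos X0 hX0ne
  have ht₁ : 0 < t₁ := hB₀pos X1 hX1ne
  set r₀ : ℝ := (Real.sqrt t₀)⁻¹ with hr₀
  set r₁ : ℝ := (Real.sqrt t₁)⁻¹ with hr₁
  have hr₀sq : r₀ * r₀ = t₀⁻¹ := by rw [hr₀, ← mul_inv, Real.mul_self_sqrt ht₀.le]
  have hr₁sq : r₁ * r₁ = t₁⁻¹ := by rw [hr₁, ← mul_inv, Real.mul_self_sqrt ht₁.le]
  have hXn0 : B₀ (r₀ • X0) (r₀ • X0) = 1 := by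
    rw [smul_form_eq, hr₀sq]
    exact inv_mul_cancel₀ ht₀.ne'
  have hXn1 : B₀ (r₁ • X1) (r₁ • X1) = 1 := by
    rw [smul_form_eq, hr₁sq]
    exact inv_mul_cancel₀ ht₁.ne'
  set d := aα * t₀ + bβ * t₁ with hddef
  have hd : 0 < d := by
    rcases eq_or_lt_of_le ha with h | h
    · have hbβ : bβ = 1 := by linarith
      rw [hddef, ← h, hbβ]
      simpa using ht₁
    · rw [hddef]
      nlinarith [mul_nonneg hb ht₁.le, mul_pos h ht₀]
  have hdne : aα * t₀ + bβ * t₁ ≠ 0 := by rw [← hddef]; exact hd.ne'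
  set β := aα * t₀ / d with hβdef
  have hβ0 : 0 ≤ β := div_nonneg (mul_nonneg ha ht₀.le) hd.le
  have hβ1 : β ≤ 1 := by
    rw [hβdef, div_le_one hd, hddef]
    nlinarith [mul_nonneg hb ht₁.le]
  obtain ⟨z, hz1, hzg1, hzg2⟩ := gb hdimV B₀ (gform E A₁ a₁ b₁) (gform E A₂ a₂ b₂) hB₀pos
    hB₀symm (gform_symm E A₁ a₁ b₁) (gform_symm E A₂ a₂ b₂)
    (r₀ • X0) (r₁ • X1) hXn0 hXn1 β hβ0 hβ1
  obtain ⟨vz, sz⟩ := z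
  rw [smul_form_eq, smul_form_eq, hr₀sq, hr₁sq] at hzg1
  rw [smul_form_eq, smul_form_eq, hr₀sq, hr₁sq] at hzg2
  set P10 := gform E A₁ a₁ b₁ X0 X0 with hP10def
  set P11 := gform E A₁ a₁ b₁ X1 X1 with hP11def
  set P20 := gform E A₂ a₂ b₂ X0 X0 with hP20def
  set P21 := gform E A₂ a₂ b₂ X1 X1 with hP21def
  have hG3X0 : gform E (0 : H →L[ℝ] H) (0 : H) 1 X0 X0 = 1 := by
    rw [gform3_apply, hX0]
    norm_num
  have hG3X1 : gform E (0 : H →L[ℝ] H) (0 : H) 1 X1 X1 = 1 := by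
    rw [gform3_apply, hX1]
    norm_num
  have e0 : μ₁ * P10 + μ₂ * P20 = t₀ - μ₃ := by
    rw [ht₀def, hB₀app, hG3X0, hP10def, hP20def]
    ring
  have e1 : μ₁ * P11 + μ₂ * P21 = t₁ - μ₃ := by
    rw [ht₁def, hB₀app, hG3X1, hP11def, hP21def]
    ring
  -- scalar consequences
  have hG1zz : gform E A₁ a₁ b₁ (vz, sz) (vz, sz) * d = aα * P10 + bβ * P11 := by
    rw [hzg1, hβdef, hddef]
    field_simp
    ring
  have hG2zz : gform E A₂ a₂ b₂ (vz, sz) (vz, sz) * d = aα * P20 + bβ * P21 := by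
    rw [hzg2, hβdef, hddef]
    field_simp
    ring
  have hz1' : μ₁ * gform E A₁ a₁ b₁ (vz, sz) (vz, sz)
      + μ₂ * gform E A₂ a₂ b₂ (vz, sz) (vz, sz) + μ₃ * (sz * sz) = 1 := by
    have := hz1
    rw [hB₀app, gform3_apply] at this
    exact this
  have s2 : μ₃ * ((sz * sz) * d) = μ₃ * 1 := by
    linear_combination d * hz1' - μ₁ * hG1zz - μ₂ * hG2zz - aα * e0 - bβ * e1
      + μ₃ * hab + hddef
  have hfin : (sz * sz) * d = 1 := mul_left_cancel₀ hμ₃pos.ne' s2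
  have hszne : sz ≠ 0 := by
    intro h
    rw [h] at hfin
    norm_num at hfin
  have hinv2 : sz⁻¹ * sz⁻¹ = d := by
    have hd2 : d = (sz * sz)⁻¹ := eq_inv_of_mul_eq_one_right hfin
    rw [hd2, mul_inv]
  have hsm : (sz⁻¹ • ((vz, sz) : ↥E × ℝ)) = (sz⁻¹ • vz, 1) := by
    rw [Prod.smul_mk]
    simp [smul_eq_mul, inv_mul_cancel₀ hszne]
  have hval1 : gform E A₁ a₁ b₁ (sz⁻¹ • vz, (1:ℝ)) (sz⁻¹ • vz, (1:ℝ))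
      = aα * P10 + bβ * P11 := by
    rw [← hsm, smul_form_eq, hinv2]
    linear_combination hG1zz
  have hval2 : gform E A₂ a₂ b₂ (sz⁻¹ • vz, (1:ℝ)) (sz⁻¹ • vz, (1:ℝ))
      = aα * P20 + bβ * P21 := by
    rw [← hsm, smul_form_eq, hinv2]
    linear_combination hG2zz
  -- unfold the values of the forms at the base points
  have hP10v : P10 = ⟪A₁ u0, u0⟫ + ⟪u0, a₁⟫ + b₁ := by
    rw [hP10def, hX0, gform_diag]
    norm_num
  have hP11v : P11 = ⟪A₁ u1, u1⟫ + ⟪u1, a₁⟫ + b₁ := by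
    rw [hP11def, hX1, gform_diag]
    norm_num
  have hP20v : P20 = ⟪A₂ u0, u0⟫ + ⟪u0, a₂⟫ + b₂ := by
    rw [hP20def, hX0, gform_diag]
    norm_num
  have hP21v : P21 = ⟪A₂ u1, u1⟫ + ⟪u1, a₂⟫ + b₂ := by
    rw [hP21def, hX1, gform_diag]
    norm_num
  refine ⟨(↑(sz⁻¹ • vz) : H), ?_⟩
  have hφ1 : ⟪A₁ ↑(sz⁻¹ • vz), (↑(sz⁻¹ • vz) : H)⟫ + ⟪(↑(sz⁻¹ • vz) : H), a₁⟫ + b₁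
      = aα * P10 + bβ * P11 := by
    rw [← hval1, gform_diag]
    ring
  have hφ2 : ⟪A₂ ↑(sz⁻¹ • vz), (↑(sz⁻¹ • vz) : H)⟫ + ⟪(↑(sz⁻¹ • vz) : H), a₂⟫ + b₂
      = aα * P20 + bβ * P21 := by
    rw [← hval2, gform_diag]
    ring
  rw [Prod.ext_iff]
  constructor
  · simp only [Prod.smul_fst, Prod.fst_add, smul_eq_mul]
    rw [hφ1, hP10v, hP11v]
  · simp only [Prod.smul_snd, Prod.snd_add, smul_eq_mul]
    rw [hφ2, hP20v, hP21v]
end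

section
/- Let H be a real Hilbert space with 3 ≤ dim(H) ≤ ∞, A₁, A₂ selfadjoint bounded operators, a₁, a₂ ∈ H, b₁, b₂ ∈ ℝ, and φⱼ(x) = ⟨Aⱼx,x⟩ + ⟨x,aⱼ⟩ + bⱼ. Suppose there exist linear combinations Ã₁ = α₁A₁ + α₂A₂ and Ã₂ = β₁A₁ + β₂A₂ with α₁β₂ − α₂β₁ ≠ 0, Ã₁ compact with ⟨Ã₁x,x⟩ = 0 for some x ≠ 0, and Ã₂ positive definite and invertible. Then Φ(H) = {(φ₁(x), φ₂(x)) : x ∈ H} is both convex and closed in ℝ². -/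
open scoped RealInnerProductSpace

section Helpers

variable {E : Type*} [NormedAddCommGroup E] [InnerProductSpace ℝ E]

lemma quad_expand (B : E →L[ℝ] E) (hB : ∀ x y : E, ⟪B x, y⟫ = ⟪x, B y⟫)
    (x e : E) (γ : ℝ) :
    ⟪B (x + γ • e), x + γ • e⟫ =
      ⟪B x, x⟫ + 2 * γ * ⟪B x, e⟫ + γ ^ 2 * ⟪B e, e⟫ := by
  have h1 : ⟪B e, x⟫ = ⟪B x, e⟫ := by rw [hB e x]; exact real_inner_comm (B x) e
  simp only [map_add, map_smul, inner_add_left, inner_add_right,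
    real_inner_smul_left, real_inner_smul_right, h1]
  ring

lemma quad_expand2 (B : E →L[ℝ] E) (hB : ∀ x y : E, ⟪B x, y⟫ = ⟪x, B y⟫)
    (a b : ℝ) (x y : E) :
    ⟪B (a • x + b • y), a • x + b • y⟫ =
      a ^ 2 * ⟪B x, x⟫ + 2 * a * b * ⟪B x, y⟫ + b ^ 2 * ⟪B y, y⟫ := by
  have h1 : ⟪B y, x⟫ = ⟪B x, y⟫ := by rw [hB y x]; exact real_inner_comm (B x) y
  simp only [map_add, map_smul, inner_add_left, inner_add_right,
    real_inner_smul_left, real_inner_smul_right, h1]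
  ring

lemma quad_combo (B : E →L[ℝ] E) (hB : ∀ x y : E, ⟪B x, y⟫ = ⟪x, B y⟫)
    (a b : ℝ) (hab : a + b = 1) (x₀ x₁ : E) :
    ⟪B (a • x₀ + b • x₁), a • x₀ + b • x₁⟫ =
      a * ⟪B x₀, x₀⟫ + b * ⟪B x₁, x₁⟫ - a * b * ⟪B (x₀ - x₁), x₀ - x₁⟫ := by
  have h1 : ⟪B x₁, x₀⟫ = ⟪B x₀, x₁⟫ := by rw [hB x₁ x₀]; exact real_inner_comm (B x₀) x₁
  have hb : b = 1 - a := by linarith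
  subst hb
  simp only [map_add, map_smul, map_sub, inner_add_left, inner_add_right,
    inner_sub_left, inner_sub_right, real_inner_smul_left, real_inner_smul_right, h1]
  ring

/-- degenerate Cauchy-Schwarz: a symmetric nonpositive form on a submodule vanishing
at `e` has `e` in its radical. -/
lemma degenerate_cs {V : Submodule ℝ E} (B C : E →L[ℝ] E)
    (hB : ∀ x y : E, ⟪B x, y⟫ = ⟪x, B y⟫) (hC : ∀ x y : E, ⟪C x, y⟫ = ⟪x, C y⟫)
    (m : ℝ)
    (hneg : ∀ z ∈ V, ⟪B z, z⟫ - m * ⟪C z, z⟫ ≤ 0) {e : E} (he : e ∈ V)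
    (he0 : ⟪B e, e⟫ - m * ⟪C e, e⟫ = 0)
    {v : E} (hv : v ∈ V) : ⟪B e, v⟫ - m * ⟪C e, v⟫ = 0 := by
  set P : E → E → ℝ := fun x y => ⟪B x, y⟫ - m * ⟪C x, y⟫ with hP
  have hsymm : ∀ x y, P x y = P y x := by
    intro x y
    simp only [hP]
    rw [hB x y, hC x y, real_inner_comm x (B y), real_inner_comm x (C y)]
  have hbil : ∀ (x e : E) (γ : ℝ), P (x + γ • e) (x + γ • e)
      = P x x + 2 * γ * P x e + γ ^ 2 * P e e := by
    intro x e γ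
    simp only [hP, quad_expand B hB, quad_expand C hC]
    ring
  show P e v = 0
  by_contra hc
  have key : ∀ γ : ℝ, P v v + 2 * γ * P v e ≤ 0 := by
    intro γ
    have h3 : P (v + γ • e) (v + γ • e) ≤ 0 :=
      hneg (v + γ • e) (V.add_mem hv (V.smul_mem γ he))
    have he0' : P e e = 0 := he0
    rw [hbil v e γ, he0', mul_zero, add_zero] at h3
    exact h3
  have hve : P v e ≠ 0 := fun h => hc (by rw [hsymm e v, h])
  have h2 := key ((|P v v| + 1) / P v e)
  rw [mul_assoc, div_mul_cancel₀ _ hve] at h2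
  nlinarith [le_abs_self (P v v), neg_abs_le (P v v)]

/-- Cauchy-Schwarz (squared form) for a positive operator form. -/
lemma op_cs_sq (B : E →L[ℝ] E) (hB : ∀ x y : E, ⟪B x, y⟫ = ⟪x, B y⟫)
    (hpos : ∀ z, 0 ≤ ⟪B z, z⟫) (x y : E) :
    ⟪B x, y⟫ ^ 2 ≤ ⟪B x, x⟫ * ⟪B y, y⟫ := by
  have key : ∀ a b : ℝ, 0 ≤ a ^ 2 * ⟪B x, x⟫ + 2 * a * b * ⟪B x, y⟫ + b ^ 2 * ⟪B y, y⟫ := by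
    intro a b
    rw [← quad_expand2 B hB a b x y]
    exact hpos _
  rcases eq_or_ne ⟪B y, y⟫ 0 with h0 | h0
  · have hxy : ⟪B x, y⟫ = 0 := by
      by_contra hc
      have h2 := key 1 (-(|⟪B x, x⟫| + 1) / ⟪B x, y⟫)
      rw [mul_assoc, div_mul_cancel₀ _ hc] at h2
      nlinarith [le_abs_self ⟪B x, x⟫, neg_abs_le ⟪B x, x⟫, h0]
    rw [hxy, h0]
    simp [hpos x]
  · have hyy : 0 < ⟪B y, y⟫ := lt_of_le_of_ne (hpos y) (Ne.symm h0)
    have h2 := key ⟪B y, y⟫ (-⟪B x, y⟫)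
    nlinarith [h2, hyy]

end Helpers

section Connect

variable {E : Type*} [NormedAddCommGroup E] [InnerProductSpace ℝ E]

lemma exists_notin_span (h : 1 < Module.rank ℝ E) (a : E) :
    ∃ c : E, c ∉ Submodule.span ℝ ({a} : Set E) := by
  by_contra hcon
  push_neg at hcon
  have hle : (⊤ : Submodule ℝ E) ≤ Submodule.span ℝ ({a} : Set E) := fun x _ => hcon x
  have h1 : Module.rank ℝ E ≤ 1 := by
    have h2 := Submodule.rank_mono hle
    rw [rank_top] at h2
    refine h2.trans ?_
    refine (rank_span_le ({a} : Set E)).trans ?_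
    simp
  exact absurd (h.trans_le h1) (lt_irrefl _)

lemma seg_zero_solve {s : ℝ} (hs : s ≠ 0) {u v : E} (h : (1 - s) • u + s • v = 0) :
    v = (-((1 - s) / s)) • u := by
  have h2 : s • v = (-(1 - s)) • u := by
    rw [neg_smul, eq_neg_iff_add_eq_zero, add_comm]; exact h
  have h3 := congrArg (fun w => (s⁻¹ : ℝ) • w) h2
  simp only [smul_smul, inv_mul_cancel₀ hs, one_smul] at h3
  rw [h3]
  congr 1
  rw [div_eq_inv_mul]
  ring

/-- the path along a normalized segment between points of a level set of a
positive quadratic form -/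
lemma joinedIn_segment (B : E →L[ℝ] E)
    (hpos : ∀ x : E, x ≠ 0 → 0 < ⟪B x, x⟫) {t : ℝ} (ht : 0 < t) {a b : E}
    (ha : ⟪B a, a⟫ = t) (hb : ⟪B b, b⟫ = t)
    (hseg : ∀ s : ℝ, s ∈ Set.Icc (0:ℝ) 1 → (1 - s) • a + s • b ≠ 0) :
    JoinedIn {y : E | ⟪B y, y⟫ = t} a b := by
  set z : ℝ → E := fun s => (1 - s) • a + s • b with hz
  have hzc : Continuous z := by continuity
  set d : ℝ → ℝ := fun s => ⟪B (z s), z s⟫ with hd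
  have hdc : Continuous d := Continuous.inner (B.continuous.comp hzc) hzc
  have hdpos : ∀ s ∈ Set.Icc (0:ℝ) 1, 0 < d s := fun s hs => hpos (z s) (hseg s hs)
  set f : ℝ → E := fun s => Real.sqrt (t / d s) • z s with hf
  have hsq : ContinuousOn (fun s => t / d s) (Set.Icc (0:ℝ) 1) :=
    continuousOn_const.div hdc.continuousOn (fun s hs => (hdpos s hs).ne')
  have hfc : ContinuousOn f (Set.Icc (0:ℝ) 1) :=
    (Real.continuous_sqrt.comp_continuousOn hsq).smul hzc.continuousOn
  have hmem : ∀ s ∈ Set.Icc (0:ℝ) 1, ⟪B (f s), f s⟫ = t := by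
    intro s hs
    have h1 : ⟪B (f s), f s⟫ = (Real.sqrt (t / d s)) ^ 2 * d s := by
      simp only [hf, map_smul, real_inner_smul_left, real_inner_smul_right]
      ring
    rw [h1, Real.sq_sqrt (le_of_lt (div_pos ht (hdpos s hs)))]
    rw [div_mul_eq_mul_div, mul_div_assoc, div_self (hdpos s hs).ne', mul_one]
  have hf0 : f 0 = a := by
    have hza : z 0 = a := by simp [hz]
    simp only [hf, hza, hd, ha]
    rw [div_self ht.ne', Real.sqrt_one, one_smul]
  have hf1 : f 1 = b := by
    have hzb : z 1 = b := by simp [hz]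
    simp only [hf, hzb, hd, hb]
    rw [div_self ht.ne', Real.sqrt_one, one_smul]
  refine ⟨⟨⟨fun s => f s, ?_⟩, ?_, ?_⟩, ?_⟩
  · exact hfc.comp_continuous continuous_subtype_val (fun s => s.2)
  · simpa using hf0
  · simpa using hf1
  · intro s
    exact hmem s s.2

lemma joinedIn_levelset (B : E →L[ℝ] E) (hrank : 1 < Module.rank ℝ E)
    (hpos : ∀ x : E, x ≠ 0 → 0 < ⟪B x, x⟫) {t : ℝ} (ht : 0 < t) {a b : E}
    (ha : ⟪B a, a⟫ = t) (hb : ⟪B b, b⟫ = t) :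
    JoinedIn {y : E | ⟪B y, y⟫ = t} a b := by
  have hane : a ≠ 0 := by
    rintro rfl
    rw [map_zero, inner_zero_left] at ha
    exact ht.ne ha
  have hbne : b ≠ 0 := by
    rintro rfl
    rw [map_zero, inner_zero_left] at hb
    exact ht.ne hb
  by_cases hdeg : ∀ s : ℝ, s ∈ Set.Icc (0:ℝ) 1 → (1 - s) • a + s • b ≠ 0
  · exact joinedIn_segment B hpos ht ha hb hdeg
  · push_neg at hdeg
    obtain ⟨s₀, hs₀, hzero⟩ := hdeg
    have hs00 : s₀ ≠ 0 := by
      rintro rfl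
      simp only [sub_zero, one_smul, zero_smul, add_zero] at hzero
      exact hane hzero
    have hs01 : s₀ ≠ 1 := by
      rintro rfl
      simp only [sub_self, zero_smul, one_smul, zero_add] at hzero
      exact hbne hzero
    have hs0pos : 0 < s₀ := lt_of_le_of_ne hs₀.1 (Ne.symm hs00)
    have hs0lt : s₀ < 1 := lt_of_le_of_ne hs₀.2 hs01
    have hbeq : b = (-((1 - s₀) / s₀)) • a := seg_zero_solve hs00 hzero
    have hrpos : 0 < (1 - s₀) / s₀ := div_pos (by linarith) hs0pos
    have hr1 : (1 - s₀) / s₀ = 1 := by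
      set r : ℝ := (1 - s₀) / s₀ with hrdef
      have h2 : ⟪B b, b⟫ = r ^ 2 * ⟪B a, a⟫ := by
        rw [hbeq]
        simp only [neg_smul, map_neg, map_smul, real_inner_smul_left,
          real_inner_smul_right, inner_neg_left, inner_neg_right]
        ring
      rw [ha, hb] at h2
      have h2' : r ^ 2 * t = 1 * t := by linarith
      have h4 : r ^ 2 = 1 := mul_right_cancel₀ ht.ne' h2'
      have h5 : (r - 1) * (r + 1) = 0 := by linear_combination h4
      rcases mul_eq_zero.mp h5 with h | h
      · linarith
      · linarith
    have hbeq' : b = -a := by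
      rw [hbeq, hr1]
      simp
    obtain ⟨c, hc⟩ := exists_notin_span hrank a
    have hcne : c ≠ 0 := by
      rintro rfl; exact hc (Submodule.zero_mem _)
    have hcpos : 0 < ⟪B c, c⟫ := hpos c hcne
    set k : ℝ := Real.sqrt (t / ⟪B c, c⟫) with hk
    have hkpos : 0 < k := Real.sqrt_pos.mpr (by positivity)
    set c' : E := k • c with hc'
    have hc'mem : ⟪B c', c'⟫ = t := by
      simp only [hc', map_smul, real_inner_smul_left, real_inner_smul_right]
      rw [← mul_assoc, ← pow_two, hk, Real.sq_sqrt (le_of_lt (div_pos ht hcpos))]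
      rw [div_mul_eq_mul_div, mul_div_assoc, div_self hcpos.ne', mul_one]
    have hc'span : ∀ u : ℝ, c' ≠ u • a := by
      intro u hu
      apply hc
      have hcu : c = (k⁻¹ * u) • a := by
        have := congrArg (fun w => (k⁻¹ : ℝ) • w) hu
        simpa only [hc', smul_smul, inv_mul_cancel₀ hkpos.ne', one_smul] using this
      rw [hcu]
      exact Submodule.smul_mem _ _ (Submodule.mem_span_singleton_self a)
    have hseg1 : ∀ s : ℝ, s ∈ Set.Icc (0:ℝ) 1 → (1 - s) • a + s • c' ≠ 0 := by
      intro s hs h0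
      rcases eq_or_ne s 0 with rfl | hsne
      · simp only [sub_zero, one_smul, zero_smul, add_zero] at h0
        exact hane h0
      · exact hc'span (-((1 - s) / s)) (seg_zero_solve hsne h0)
    have hseg2 : ∀ s : ℝ, s ∈ Set.Icc (0:ℝ) 1 → (1 - s) • c' + s • b ≠ 0 := by
      intro s hs h0
      rcases eq_or_ne s 1 with rfl | hsne
      · simp only [sub_self, zero_smul, one_smul, zero_add] at h0
        exact hbne h0
      · have hs1 : (1 : ℝ) - s ≠ 0 := fun h => hsne (by linarith)
        -- rewrite h0 as a segment from b to c'
        have h0' : (1 - (1 - s)) • b + (1 - s) • c' = 0 := by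
          rw [show (1 : ℝ) - (1 - s) = s by ring, add_comm]
          exact h0
        have := seg_zero_solve hs1 h0'
        rw [hbeq'] at this
        apply hc'span ((1 - (1 - s)) / (1 - s))
        rw [this]
        rw [neg_smul, smul_neg, neg_neg]
    exact (joinedIn_segment B hpos ht ha hc'mem hseg1).trans
      (joinedIn_segment B hpos ht hc'mem hb hseg2)

end Connect

section OneSided
variable {E : Type*} [NormedAddCommGroup E] [InnerProductSpace ℝ E]

lemma symm_flip (B : E →L[ℝ] E) (hB : ∀ x y : E, ⟪B x, y⟫ = ⟪x, B y⟫) (x y : E) :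
    ⟪B x, y⟫ = ⟪B y, x⟫ := by
  rw [hB x y]; exact real_inner_comm (B y) x

lemma form_scale (B : E →L[ℝ] E) (c : ℝ) (z : E) :
    ⟪B (c • z), c • z⟫ = c ^ 2 * ⟪B z, z⟫ := by
  simp only [map_smul, real_inner_smul_left, real_inner_smul_right]
  ring

/-- Rayleigh-type bound on a finite-dimensional submodule: there is a maximizer of
the generalized Rayleigh quotient. -/
lemma exists_rayleigh_max (B₁ B₂ : E →L[ℝ] E)
    {δ : ℝ} (hδ : 0 < δ) (hcoer : ∀ x : E, δ * ‖x‖ ^ 2 ≤ ⟪B₂ x, x⟫)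
    (V : Submodule ℝ E) [FiniteDimensional ℝ V]
    {v : E} (hvV : v ∈ V) (hvne : v ≠ 0) :
    ∃ e : E, e ∈ V ∧ ⟪B₂ e, e⟫ = 1 ∧
      ∀ z ∈ V, ⟪B₁ z, z⟫ ≤ ⟪B₁ e, e⟫ * ⟪B₂ z, z⟫ := by
  have hqpos : ∀ x : E, x ≠ 0 → 0 < ⟪B₂ x, x⟫ := by
    intro x hx
    have h1 := hcoer x
    have h2 : 0 < ‖x‖ := norm_pos_iff.mpr hx
    exact lt_of_lt_of_le (mul_pos hδ (pow_pos h2 2)) h1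
  -- the set of B₂-normalized vectors in V
  set K : Set V := {z : V | ⟪B₂ (z : E), (z : E)⟫ = 1} with hK
  have hKc : IsClosed K := by
    apply isClosed_eq _ continuous_const
    exact Continuous.inner (B₂.continuous.comp continuous_subtype_val) continuous_subtype_val
  have hKsub : K ⊆ Metric.closedBall 0 (Real.sqrt (1 / δ)) := by
    intro z hz
    rw [Metric.mem_closedBall, dist_zero_right]
    rw [show ‖z‖ = ‖(z : E)‖ from rfl]
    have h1 := hcoer (z : E)
    have h2 : ⟪B₂ (z : E), (z : E)⟫ = 1 := hz
    rw [h2] at h1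
    have h3 : ‖(z : E)‖ ^ 2 ≤ 1 / δ := by rw [le_div_iff₀ hδ]; linarith
    calc ‖(z : E)‖ = Real.sqrt (‖(z : E)‖ ^ 2) := (Real.sqrt_sq (norm_nonneg _)).symm
    _ ≤ Real.sqrt (1 / δ) := Real.sqrt_le_sqrt h3
  have hKcpt : IsCompact K := (isCompact_closedBall 0 _).of_isClosed_subset hKc hKsub
  have hKne : K.Nonempty := by
    have hvpos : 0 < ⟪B₂ v, v⟫ := hqpos v hvne
    set k : ℝ := (Real.sqrt ⟪B₂ v, v⟫)⁻¹ with hkdef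
    refine ⟨⟨k • v, V.smul_mem k hvV⟩, ?_⟩
    show ⟪B₂ (k • v), (k • v)⟫ = 1
    rw [form_scale, hkdef, inv_pow, Real.sq_sqrt hvpos.le, inv_mul_cancel₀ hvpos.ne']
  have hGc : ContinuousOn (fun z : V => ⟪B₁ (z : E), (z : E)⟫) K :=
    (Continuous.inner (B₁.continuous.comp continuous_subtype_val)
      continuous_subtype_val).continuousOn
  obtain ⟨e, heK, hemax⟩ := hKcpt.exists_isMaxOn hKne hGc
  refine ⟨(e : E), e.2, heK, ?_⟩
  intro z hzV
  rcases eq_or_ne z 0 with rfl | hzne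
  · simp
  · have hzpos : 0 < ⟪B₂ z, z⟫ := hqpos z hzne
    set k : ℝ := (Real.sqrt ⟪B₂ z, z⟫)⁻¹ with hkdef
    have hk2 : k ^ 2 = (⟪B₂ z, z⟫)⁻¹ := by
      rw [hkdef, inv_pow, Real.sq_sqrt hzpos.le]
    have hmem : (⟨k • z, V.smul_mem k hzV⟩ : V) ∈ K := by
      show ⟪B₂ (k • z), (k • z)⟫ = 1
      rw [form_scale, hk2, inv_mul_cancel₀ hzpos.ne']
    have h3 := hemax hmem
    have h4 : ⟪B₁ (k • z), (k • z)⟫ ≤ ⟪B₁ (e : E), (e : E)⟫ := by exact h3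
    rw [form_scale, hk2] at h4
    have h5 : (⟪B₂ z, z⟫)⁻¹ * ⟪B₁ z, z⟫ * ⟪B₂ z, z⟫ ≤
        ⟪B₁ (e : E), (e : E)⟫ * ⟪B₂ z, z⟫ :=
      mul_le_mul_of_nonneg_right h4 hzpos.le
    rw [mul_comm (⟪B₂ z, z⟫)⁻¹ _, mul_assoc, inv_mul_cancel₀ hzpos.ne', mul_one] at h5
    exact h5

/-- one-sided construction: a point on the exact `B₂`-level set with `B₁`-value at
least the convex combination. -/
lemma core_onesided (B₁ B₂ : E →L[ℝ] E)
    (hB₁ : ∀ x y : E, ⟪B₁ x, y⟫ = ⟪x, B₁ y⟫) (hB₂ : ∀ x y : E, ⟪B₂ x, y⟫ = ⟪x, B₂ y⟫)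
    (g : E) {δ : ℝ} (hδ : 0 < δ) (hcoer : ∀ x : E, δ * ‖x‖ ^ 2 ≤ ⟪B₂ x, x⟫)
    (x₀ x₁ : E) {a b : ℝ} (ha : 0 ≤ a) (hb : 0 ≤ b) (hab : a + b = 1)
    (hne : x₀ ≠ 0 ∨ x₁ ≠ 0) :
    ∃ y : E, ⟪B₂ y, y⟫ = a * ⟪B₂ x₀, x₀⟫ + b * ⟪B₂ x₁, x₁⟫ ∧
      a * (⟪B₁ x₀, x₀⟫ + ⟪x₀, g⟫) + b * (⟪B₁ x₁, x₁⟫ + ⟪x₁, g⟫) ≤ ⟪B₁ y, y⟫ + ⟪y, g⟫ := by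
  classical
  set V : Submodule ℝ E := Submodule.span ℝ ({x₀, x₁} : Set E) with hV
  haveI : FiniteDimensional ℝ V := by
    apply FiniteDimensional.span_of_finite
    exact Set.toFinite _
  have hx₀V : x₀ ∈ V := Submodule.subset_span (by simp)
  have hx₁V : x₁ ∈ V := Submodule.subset_span (by simp)
  obtain ⟨v, hvV, hvne⟩ : ∃ v, v ∈ V ∧ v ≠ 0 := by
    rcases hne with h | h
    · exact ⟨x₀, hx₀V, h⟩
    · exact ⟨x₁, hx₁V, h⟩
  obtain ⟨e, heV, heN, hbound⟩ := exists_rayleigh_max B₁ B₂ hδ hcoer V hvV hvne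
  set m : ℝ := ⟪B₁ e, e⟫ with hm
  -- radical property of the degenerate direction
  have hrad : ∀ w ∈ V, ⟪B₁ e, w⟫ - m * ⟪B₂ e, w⟫ = 0 := by
    intro w hw
    refine degenerate_cs (V := V) B₁ B₂ hB₁ hB₂ m ?_ heV ?_ hw
    · intro z hz
      linarith [hbound z hz]
    · rw [heN, ← hm]; ring
  set xl : E := a • x₀ + b • x₁ with hxl
  have hxlV : xl ∈ V := V.add_mem (V.smul_mem a hx₀V) (V.smul_mem b hx₁V)
  set d : E := x₀ - x₁ with hd
  have hdV : d ∈ V := V.sub_mem hx₀V hx₁V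
  set t₀ : ℝ := ⟪B₂ x₀, x₀⟫
  set t₁ : ℝ := ⟪B₂ x₁, x₁⟫
  set tl : ℝ := a * t₀ + b * t₁ with htl
  set sl : ℝ := ⟪B₂ xl, xl⟫ with hsl
  have hn : ∀ z : E, 0 ≤ ⟪B₂ z, z⟫ := by
    intro z
    have := hcoer z
    nlinarith [norm_nonneg z, sq_nonneg ‖z‖]
  have E1 := quad_combo B₁ hB₁ a b hab x₀ x₁
  have E2 : sl = a * t₀ + b * t₁ - a * b * ⟪B₂ d, d⟫ := quad_combo B₂ hB₂ a b hab x₀ x₁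
  have hsltl : sl ≤ tl := by
    have := mul_nonneg (mul_nonneg ha hb) (hn d)
    rw [htl]; linarith [E2]
  set c : ℝ := ⟪B₂ xl, e⟫ with hc
  set L : ℝ := ⟪e, g⟫ with hL
  set D : ℝ := c ^ 2 + (tl - sl) with hD
  have hDnn : 0 ≤ D := by rw [hD]; nlinarith [hsltl]
  have hsqrtD : Real.sqrt D ^ 2 = D := Real.sq_sqrt hDnn
  have habsc : |c| ≤ Real.sqrt D := by
    rw [← Real.sqrt_sq_eq_abs]
    apply Real.sqrt_le_sqrt
    rw [hD]; linarith [hsltl]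
  set γ : ℝ := if 0 ≤ L then -c + Real.sqrt D else -c - Real.sqrt D with hγ
  have hγroot : γ ^ 2 + 2 * c * γ + sl = tl := by
    rw [hγ]
    split_ifs
    · linear_combination hsqrtD
    · linear_combination hsqrtD
  have hγsign : 0 ≤ γ * L := by
    rw [hγ]
    split_ifs with h
    · apply mul_nonneg _ h
      have := le_abs_self c
      linarith [habsc]
    · have hL' : L ≤ 0 := (not_le.mp h).le
      have := neg_abs_le c
      have hγneg : -c - Real.sqrt D ≤ 0 := by linarith [habsc]
      nlinarith [mul_nonneg (neg_nonneg.mpr hγneg) (neg_nonneg.mpr hL')]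
  set y : E := xl + γ • e with hy
  have E7 : ⟪B₁ y, y⟫ = ⟪B₁ xl, xl⟫ + 2 * γ * ⟪B₁ xl, e⟫ + γ ^ 2 * m := by
    rw [hy, quad_expand B₁ hB₁, ← hm]
  have E7b : ⟪B₂ y, y⟫ = sl + 2 * γ * c + γ ^ 2 * 1 := by
    rw [hy, quad_expand B₂ hB₂, ← hsl, ← hc, heN]
  have E8 : ⟪y, g⟫ = ⟪xl, g⟫ + γ * L := by
    rw [hy, inner_add_left, real_inner_smul_left, hL]
  have E3 : ⟪xl, g⟫ = a * ⟪x₀, g⟫ + b * ⟪x₁, g⟫ := by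
    rw [hxl, inner_add_left, real_inner_smul_left, real_inner_smul_left]
  have E5 : ⟪B₁ xl, e⟫ = m * c := by
    have h1 := hrad xl hxlV
    rw [symm_flip B₁ hB₁ e xl, symm_flip B₂ hB₂ e xl] at h1
    rw [← hc] at h1
    linarith
  have hdbound : ⟪B₁ d, d⟫ ≤ m * ⟪B₂ d, d⟫ := hbound d hdV
  have key : 0 ≤ a * b * (m * ⟪B₂ d, d⟫ - ⟪B₁ d, d⟫) :=
    mul_nonneg (mul_nonneg ha hb) (by linarith)
  refine ⟨y, ?_, ?_⟩
  · rw [E7b, htl]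
    linarith [hγroot]
  · have final : ⟪B₁ y, y⟫ + ⟪y, g⟫ =
        a * (⟪B₁ x₀, x₀⟫ + ⟪x₀, g⟫) + b * (⟪B₁ x₁, x₁⟫ + ⟪x₁, g⟫)
          + a * b * (m * ⟪B₂ d, d⟫ - ⟪B₁ d, d⟫) + γ * L := by
      linear_combination E7 + E8 + E1 + E3 + 2 * γ * E5 + m * hγroot - m * E2
    rw [final]
    linarith [key, hγsign]

end OneSided

section CoreConvex
variable {E : Type*} [NormedAddCommGroup E] [InnerProductSpace ℝ E]

lemma core_convex (hrank : 1 < Module.rank ℝ E)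
    (B₁ B₂ : E →L[ℝ] E)
    (hB₁ : ∀ x y : E, ⟪B₁ x, y⟫ = ⟪x, B₁ y⟫) (hB₂ : ∀ x y : E, ⟪B₂ x, y⟫ = ⟪x, B₂ y⟫)
    (g : E) {δ : ℝ} (hδ : 0 < δ) (hcoer : ∀ x : E, δ * ‖x‖ ^ 2 ≤ ⟪B₂ x, x⟫) :
    Convex ℝ {p : ℝ × ℝ | ∃ y : E, p = (⟪B₁ y, y⟫ + ⟪y, g⟫, ⟪B₂ y, y⟫)} := by
  have hqpos : ∀ x : E, x ≠ 0 → 0 < ⟪B₂ x, x⟫ := by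
    intro x hx
    have h1 := hcoer x
    have h2 : 0 < ‖x‖ := norm_pos_iff.mpr hx
    exact lt_of_lt_of_le (mul_pos hδ (pow_pos h2 2)) h1
  have hn : ∀ z : E, 0 ≤ ⟪B₂ z, z⟫ := by
    intro z
    rcases eq_or_ne z 0 with rfl | hz
    · simp
    · exact (hqpos z hz).le
  intro p hp q hq a b ha hb hab
  obtain ⟨x₀, rfl⟩ := hp
  obtain ⟨x₁, rfl⟩ := hq
  simp only [Prod.smul_mk, Prod.mk_add_mk, smul_eq_mul, Set.mem_setOf_eq]
  set u₀ : ℝ := ⟪B₁ x₀, x₀⟫ + ⟪x₀, g⟫ with hu₀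
  set u₁ : ℝ := ⟪B₁ x₁, x₁⟫ + ⟪x₁, g⟫ with hu₁
  set t₀ : ℝ := ⟪B₂ x₀, x₀⟫ with ht₀
  set t₁ : ℝ := ⟪B₂ x₁, x₁⟫ with ht₁
  by_cases htl : a * t₀ + b * t₁ = 0
  · -- degenerate case : the combination is the origin value
    have hz₀ : a * u₀ = 0 ∧ a * t₀ = 0 := by
      rcases eq_or_ne a 0 with rfl | hane
      · simp
      · have hapos : 0 < a := lt_of_le_of_ne ha (Ne.symm hane)
        have h1 : 0 ≤ a * t₀ := mul_nonneg ha (hn x₀)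
        have h2 : 0 ≤ b * t₁ := mul_nonneg hb (hn x₁)
        have h3 : a * t₀ = 0 := by linarith
        have hx₀0 : x₀ = 0 := by
          by_contra hc
          have := hqpos x₀ hc
          nlinarith
        constructor
        · rw [hu₀, hx₀0]; simp
        · exact h3
    have hz₁ : b * u₁ = 0 ∧ b * t₁ = 0 := by
      rcases eq_or_ne b 0 with rfl | hbne
      · simp
      · have hbpos : 0 < b := lt_of_le_of_ne hb (Ne.symm hbne)
        have h1 : 0 ≤ a * t₀ := mul_nonneg ha (hn x₀)
        have h2 : 0 ≤ b * t₁ := mul_nonneg hb (hn x₁)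
        have h3 : b * t₁ = 0 := by linarith
        have hx₁0 : x₁ = 0 := by
          by_contra hc
          have := hqpos x₁ hc
          nlinarith
        constructor
        · rw [hu₁, hx₁0]; simp
        · exact h3
    refine ⟨0, ?_⟩
    have hu : a * u₀ + b * u₁ = 0 := by linarith [hz₀.1, hz₁.1]
    rw [hu, htl]
    simp
  · -- main case
    have htlpos : 0 < a * t₀ + b * t₁ := by
      have h1 : 0 ≤ a * t₀ := mul_nonneg ha (hn x₀)
      have h2 : 0 ≤ b * t₁ := mul_nonneg hb (hn x₁)
      rcases lt_or_eq_of_le (by linarith : (0:ℝ) ≤ a * t₀ + b * t₁) with h | h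
      · exact h
      · exact absurd h.symm htl
    have hne' : x₀ ≠ 0 ∨ x₁ ≠ 0 := by
      by_contra hc
      push_neg at hc
      apply htl
      rw [ht₀, ht₁, hc.1, hc.2]
      simp
    obtain ⟨yp, hypn, hypq⟩ :=
      core_onesided B₁ B₂ hB₁ hB₂ g hδ hcoer x₀ x₁ ha hb hab hne'
    -- lower bound via the negated operator
    have hB₁' : ∀ x y : E, ⟪(-B₁) x, y⟫ = ⟪x, (-B₁) y⟫ := by
      intro x y
      simp only [ContinuousLinearMap.neg_apply, inner_neg_left, inner_neg_right, hB₁ x y]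
    obtain ⟨ym, hymn, hymq⟩ :=
      core_onesided (-B₁) B₂ hB₁' hB₂ (-g) hδ hcoer x₀ x₁ ha hb hab hne'
    have hymq' : ⟪B₁ ym, ym⟫ + ⟪ym, g⟫ ≤ a * u₀ + b * u₁ := by
      simp only [ContinuousLinearMap.neg_apply, inner_neg_left, inner_neg_right] at hymq
      rw [hu₀, hu₁]
      linarith
    -- intermediate value along the level set
    set tl : ℝ := a * t₀ + b * t₁ with htldef
    set S : Set E := {y : E | ⟪B₂ y, y⟫ = tl} with hS
    have hymS : ym ∈ S := hymn
    have hypS : yp ∈ S := hypn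
    have hpc : IsPathConnected S :=
      ⟨yp, hypS, fun _ hy => joinedIn_levelset B₂ hrank hqpos htlpos hypn hy⟩
    have hconn : IsPreconnected S := hpc.isConnected.isPreconnected
    have hfc : ContinuousOn (fun y : E => ⟪B₁ y, y⟫ + ⟪y, g⟫) S := by
      apply Continuous.continuousOn
      exact (Continuous.inner B₁.continuous continuous_id).add
        (Continuous.inner continuous_id continuous_const)
    have hin : a * u₀ + b * u₁ ∈
        Set.Icc (⟪B₁ ym, ym⟫ + ⟪ym, g⟫) (⟪B₁ yp, yp⟫ + ⟪yp, g⟫) := ⟨hymq', hypq⟩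
    obtain ⟨y, hyS, hyval⟩ := hconn.intermediate_value hymS hypS hfc hin
    exact ⟨y, by rw [← hyval, hyS]⟩

end CoreConvex

section CoreClosed
variable {E : Type*} [NormedAddCommGroup E] [InnerProductSpace ℝ E] [CompleteSpace E]

open Filter Topology

set_option maxHeartbeats 1000000 in
lemma core_closed (hrank : 1 < Module.rank ℝ E)
    (B₁ B₂ : E →L[ℝ] E)
    (hB₁ : ∀ x y : E, ⟪B₁ x, y⟫ = ⟪x, B₁ y⟫) (hB₂ : ∀ x y : E, ⟪B₂ x, y⟫ = ⟪x, B₂ y⟫)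
    (hcpt : IsCompactOperator B₁)
    (xh : E) (hxh : xh ≠ 0) (hxh0 : ⟪B₁ xh, xh⟫ = 0)
    (g : E) {δ : ℝ} (hδ : 0 < δ) (hcoer : ∀ x : E, δ * ‖x‖ ^ 2 ≤ ⟪B₂ x, x⟫) :
    IsClosed {p : ℝ × ℝ | ∃ y : E, p = (⟪B₁ y, y⟫ + ⟪y, g⟫, ⟪B₂ y, y⟫)} := by
  have hqpos : ∀ x : E, x ≠ 0 → 0 < ⟪B₂ x, x⟫ := by
    intro x hx
    have h1 := hcoer x
    have h2 : 0 < ‖x‖ := norm_pos_iff.mpr hx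
    exact lt_of_lt_of_le (mul_pos hδ (pow_pos h2 2)) h1
  have hn : ∀ z : E, 0 ≤ ⟪B₂ z, z⟫ := by
    intro z
    rcases eq_or_ne z 0 with rfl | hz
    · simp
    · exact (hqpos z hz).le
  set f : E → ℝ × ℝ := fun y => (⟪B₁ y, y⟫ + ⟪y, g⟫, ⟪B₂ y, y⟫) with hf
  rw [← closure_subset_iff_isClosed]
  intro p hp
  -- a nontrivial ultrafilter along which f tends to p
  have hne : (Filter.comap f (𝓝 p)).NeBot := by
    rw [Filter.comap_neBot_iff]
    intro U hU
    rw [mem_closure_iff_nhds] at hp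
    obtain ⟨q, hqU, y, hqy⟩ := hp U hU
    refine ⟨y, ?_⟩
    simp only [hf]
    rw [← hqy]
    exact hqU
  obtain ⟨𝒰, h𝒰le⟩ : ∃ 𝒰 : Ultrafilter E, (𝒰 : Filter E) ≤ Filter.comap f (𝓝 p) :=
    ⟨@Ultrafilter.of _ (Filter.comap f (𝓝 p)) hne, @Ultrafilter.of_le _ _ hne⟩
  have htendsto : Filter.Tendsto f 𝒰 (𝓝 p) := by
    rw [Filter.tendsto_iff_comap]
    exact h𝒰le
  have htq : Filter.Tendsto (fun y : E => ⟪B₁ y, y⟫ + ⟪y, g⟫) 𝒰 (𝓝 p.1) :=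
    (continuous_fst.tendsto p).comp htendsto
  have htn : Filter.Tendsto (fun y : E => ⟪B₂ y, y⟫) 𝒰 (𝓝 p.2) :=
    (continuous_snd.tendsto p).comp htendsto
  have hp2 : 0 ≤ p.2 := ge_of_tendsto htn (Filter.Eventually.of_forall (fun y => hn y))
  -- boundedness
  set R : ℝ := Real.sqrt ((p.2 + 1) / δ) with hR
  have hR0 : 0 ≤ R := Real.sqrt_nonneg _
  have hbR : ∀ᶠ y in (𝒰 : Filter E), ‖y‖ ≤ R := by
    filter_upwards [htn.eventually_lt_const (lt_add_one p.2)] with y hy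
    have h1 := hcoer y
    have h2 : ‖y‖ ^ 2 ≤ (p.2 + 1) / δ := by
      rw [le_div_iff₀ hδ]; linarith
    calc ‖y‖ = Real.sqrt (‖y‖ ^ 2) := (Real.sqrt_sq (norm_nonneg _)).symm
    _ ≤ R := Real.sqrt_le_sqrt h2
  -- construct the weak limit
  have hlim : ∀ z : E, ∃ l : ℝ, Filter.Tendsto (fun y : E => (⟪y, z⟫ : ℝ)) 𝒰 (𝓝 l) := by
    intro z
    have hev : Set.Icc (-(R * ‖z‖)) (R * ‖z‖) ∈ Ultrafilter.map (fun y : E => (⟪y, z⟫ : ℝ)) 𝒰 := by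
      rw [Ultrafilter.mem_map]
      filter_upwards [hbR] with y hy
      have h1 : |(⟪y, z⟫ : ℝ)| ≤ ‖y‖ * ‖z‖ := abs_real_inner_le_norm y z
      have h2 : ‖y‖ * ‖z‖ ≤ R * ‖z‖ := mul_le_mul_of_nonneg_right hy (norm_nonneg _)
      have := abs_le.mp (h1.trans h2)
      exact ⟨this.1, this.2⟩
    obtain ⟨l, _, hl⟩ := isCompact_Icc.ultrafilter_le_nhds _ (Filter.le_principal_iff.mpr hev)
    exact ⟨l, hl⟩
  obtain ⟨y₀, hweak⟩ : ∃ y₀ : E,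
      ∀ z : E, Filter.Tendsto (fun y : E => (⟪y, z⟫ : ℝ)) 𝒰 (𝓝 ⟪y₀, z⟫) := by
    choose L hLt using hlim
    have hLadd : ∀ z w : E, L (z + w) = L z + L w := by
      intro z w
      have h1 : Filter.Tendsto (fun y : E => (⟪y, z + w⟫ : ℝ)) 𝒰 (𝓝 (L z + L w)) := by
        have := (hLt z).add (hLt w)
        simpa [inner_add_right] using this
      exact tendsto_nhds_unique (hLt (z + w)) h1
    have hLsmul : ∀ (c : ℝ) (z : E), L (c • z) = c * L z := by
      intro c z
      have h1 : Filter.Tendsto (fun y : E => (⟪y, c • z⟫ : ℝ)) 𝒰 (𝓝 (c * L z)) := by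
        have := (hLt z).const_mul c
        simpa [real_inner_smul_right] using this
      exact tendsto_nhds_unique (hLt (c • z)) h1
    have hLbound : ∀ z : E, ‖L z‖ ≤ R * ‖z‖ := by
      intro z
      rw [Real.norm_eq_abs]
      have h1 : Filter.Tendsto (fun y : E => |(⟪y, z⟫ : ℝ)|) 𝒰 (𝓝 |L z|) := (hLt z).abs
      apply le_of_tendsto h1
      filter_upwards [hbR] with y hy
      have h2 : |(⟪y, z⟫ : ℝ)| ≤ ‖y‖ * ‖z‖ := abs_real_inner_le_norm y z
      exact h2.trans (mul_le_mul_of_nonneg_right hy (norm_nonneg _))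
    set Llin : E →ₗ[ℝ] ℝ :=
      { toFun := L
        map_add' := hLadd
        map_smul' := hLsmul } with hLlin
    set Lc : E →L[ℝ] ℝ := LinearMap.mkContinuous Llin R (fun z => hLbound z) with hLc
    refine ⟨(InnerProductSpace.toDual ℝ E).symm Lc, ?_⟩
    intro z
    have hz : (⟪(InnerProductSpace.toDual ℝ E).symm Lc, z⟫ : ℝ) = L z := by
      rw [InnerProductSpace.toDual_symm_apply]
      rfl
    rw [hz]
    exact hLt z
  -- compactness : B₁ converges in norm along the ultrafilter
  obtain ⟨K, hKcpt, hKmem⟩ := hcpt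
  obtain ⟨ε, hε, hball⟩ := Metric.mem_nhds_iff.mp hKmem
  set c : ℝ := ε / (2 * (R + 1)) with hc
  have hcpos : 0 < c := by
    apply div_pos hε
    nlinarith
  have himg : ∀ y : E, ‖y‖ ≤ R → B₁ y ∈ (fun v => c⁻¹ • v) '' K := by
    intro y hy
    have h1 : ‖c • y‖ < ε := by
      rw [norm_smul, Real.norm_eq_abs, abs_of_pos hcpos]
      have h2 : c * ‖y‖ ≤ c * R := by nlinarith
      have h3 : c * R < ε := by
        rw [hc, div_mul_eq_mul_div, div_lt_iff₀ (by nlinarith : (0:ℝ) < 2 * (R + 1))]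
        nlinarith
      linarith
    have h2 : B₁ (c • y) ∈ K := hball (by simpa [Metric.mem_ball, dist_zero_right] using h1)
    refine ⟨B₁ (c • y), h2, ?_⟩
    show c⁻¹ • B₁ (c • y) = B₁ y
    rw [map_smul, smul_smul, inv_mul_cancel₀ hcpos.ne', one_smul]
  have hK'cpt : IsCompact ((fun v => c⁻¹ • v) '' K) := hKcpt.image (continuous_const_smul _)
  have hevK : (fun v => c⁻¹ • v) '' K ∈ Ultrafilter.map B₁ 𝒰 := by
    rw [Ultrafilter.mem_map]
    filter_upwards [hbR] with y hy
    exact himg y hy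
  obtain ⟨w, _, hwle⟩ := hK'cpt.ultrafilter_le_nhds _ (Filter.le_principal_iff.mpr hevK)
  have hwt : Filter.Tendsto B₁ 𝒰 (𝓝 w) := hwle
  have hw : w = B₁ y₀ := by
    apply ext_inner_right ℝ
    intro z
    have h1 : Filter.Tendsto (fun y : E => (⟪B₁ y, z⟫ : ℝ)) 𝒰 (𝓝 ⟪w, z⟫) :=
      ((Continuous.inner continuous_id continuous_const).tendsto w).comp hwt
    have h2 : Filter.Tendsto (fun y : E => (⟪B₁ y, z⟫ : ℝ)) 𝒰 (𝓝 ⟪y₀, B₁ z⟫) := by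
      have := hweak (B₁ z)
      simpa only [← hB₁] using this
    have h3 := tendsto_nhds_unique h1 h2
    rw [h3, ← hB₁ y₀ z]
  -- limit of the first coordinate
  have htn0 : Filter.Tendsto (fun y : E => ‖B₁ y - B₁ y₀‖) 𝒰 (𝓝 0) := by
    rw [hw] at hwt
    exact tendsto_iff_norm_sub_tendsto_zero.mp hwt
  have h_first : Filter.Tendsto (fun y : E => (⟪B₁ y - B₁ y₀, y⟫ : ℝ)) 𝒰 (𝓝 0) := by
    have hbd : ∀ᶠ y in (𝒰 : Filter E), ‖(⟪B₁ y - B₁ y₀, y⟫ : ℝ)‖ ≤ ‖B₁ y - B₁ y₀‖ * R := by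
      filter_upwards [hbR] with y hy
      rw [Real.norm_eq_abs]
      exact (abs_real_inner_le_norm _ _).trans
        (mul_le_mul_of_nonneg_left hy (norm_nonneg _))
    have hlim0 : Filter.Tendsto (fun y : E => ‖B₁ y - B₁ y₀‖ * R) 𝒰 (𝓝 0) := by
      simpa using htn0.mul_const R
    exact squeeze_zero_norm' hbd hlim0
  have h_second : Filter.Tendsto (fun y : E => (⟪B₁ y₀, y⟫ : ℝ)) 𝒰 (𝓝 ⟪B₁ y₀, y₀⟫) := by
    have h1 := hweak (B₁ y₀)
    have h2 : (fun y : E => (⟪y, B₁ y₀⟫ : ℝ)) = fun y : E => (⟪B₁ y₀, y⟫ : ℝ) := by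
      funext y
      exact real_inner_comm (B₁ y₀) y
    rw [h2] at h1
    rw [← real_inner_comm y₀ (B₁ y₀)] at h1
    exact h1
  have hq1 : Filter.Tendsto (fun y : E => (⟪B₁ y, y⟫ : ℝ)) 𝒰 (𝓝 ⟪B₁ y₀, y₀⟫) := by
    have h3 := h_first.add h_second
    have h4 : (fun y : E => (⟪B₁ y - B₁ y₀, y⟫ : ℝ) + ⟪B₁ y₀, y⟫) =
        fun y : E => (⟪B₁ y, y⟫ : ℝ) := by
      funext y
      rw [inner_sub_left]
      ring
    rw [h4] at h3
    simpa using h3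
  have hq : Filter.Tendsto (fun y : E => (⟪B₁ y, y⟫ : ℝ) + ⟪y, g⟫) 𝒰
      (𝓝 (⟪B₁ y₀, y₀⟫ + ⟪y₀, g⟫)) := hq1.add (hweak g)
  have hp1 : ⟪B₁ y₀, y₀⟫ + ⟪y₀, g⟫ = p.1 := tendsto_nhds_unique hq htq
  -- bound on the second coordinate
  set s : ℝ := ⟪B₂ y₀, y₀⟫ with hs
  have hs0 : 0 ≤ s := hn y₀
  have hbn : Filter.Tendsto (fun y : E => (⟪B₂ y, y₀⟫ : ℝ)) 𝒰 (𝓝 s) := by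
    have h1 := hweak (B₂ y₀)
    have h2 : (fun y : E => (⟪y, B₂ y₀⟫ : ℝ)) = fun y : E => (⟪B₂ y, y₀⟫ : ℝ) := by
      funext y
      rw [← hB₂ y y₀]
    rw [h2] at h1
    rwa [← hB₂ y₀ y₀] at h1
  have hs2 : s ^ 2 ≤ p.2 * s := by
    have h1 : Filter.Tendsto (fun y : E => (⟪B₂ y, y₀⟫ : ℝ) ^ 2) 𝒰 (𝓝 (s ^ 2)) := hbn.pow 2
    have h2 : Filter.Tendsto (fun y : E => (⟪B₂ y, y⟫ : ℝ) * s) 𝒰 (𝓝 (p.2 * s)) :=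
      htn.mul_const s
    apply le_of_tendsto_of_tendsto h1 h2
    apply Filter.Eventually.of_forall
    intro y
    exact op_cs_sq B₂ hB₂ hn y y₀
  have hsle : s ≤ p.2 := by
    rcases eq_or_lt_of_le hs0 with h | h
    · rw [← h]; exact hp2
    · nlinarith
  -- now push to the exact level set
  rcases eq_or_lt_of_le hp2 with hp2' | hp2'
  · -- p.2 = 0 : then y₀ = 0 and p = (0,0)
    have hs00 : s = 0 := le_antisymm (by rw [← hp2'] at hsle; exact hsle) hs0
    have hy00 : y₀ = 0 := by
      by_contra hcon
      exact absurd hs00 (hqpos y₀ hcon).ne'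
    refine ⟨0, ?_⟩
    have hp1' : p.1 = 0 := by
      rw [← hp1, hy00]
      simp
    rw [show p = (p.1, p.2) from rfl, hp1', ← hp2']
    simp
  · -- p.2 > 0
    set xs : E := (Real.sqrt ⟪B₂ xh, xh⟫)⁻¹ • xh with hxs
    have hxhpos : 0 < ⟪B₂ xh, xh⟫ := hqpos xh hxh
    have hxs2 : ⟪B₂ xs, xs⟫ = 1 := by
      rw [hxs, form_scale, inv_pow, Real.sq_sqrt hxhpos.le, inv_mul_cancel₀ hxhpos.ne']
    have hxs1 : ⟪B₁ xs, xs⟫ = 0 := by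
      rw [hxs, form_scale, hxh0, mul_zero]
    set t : ℝ := p.2 with ht
    set cc : ℝ := ⟪B₂ y₀, xs⟫ with hcc
    set LL : ℝ := 2 * ⟪B₁ y₀, xs⟫ + ⟪xs, g⟫ with hLL
    set D : ℝ := cc ^ 2 + (t - s) with hD
    have hDnn : 0 ≤ D := by rw [hD]; nlinarith [hsle]
    have hsqD : Real.sqrt D ^ 2 = D := Real.sq_sqrt hDnn
    have habsc : |cc| ≤ Real.sqrt D := by
      rw [← Real.sqrt_sq_eq_abs]
      apply Real.sqrt_le_sqrt
      rw [hD]; linarith [hsle]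
    have hkey : ∀ γ : ℝ, γ ^ 2 + 2 * cc * γ + s = t →
        ⟪B₂ (y₀ + γ • xs), y₀ + γ • xs⟫ = t ∧
        ⟪B₁ (y₀ + γ • xs), y₀ + γ • xs⟫ + ⟪y₀ + γ • xs, g⟫ = p.1 + γ * LL := by
      intro γ hγ
      constructor
      · rw [quad_expand B₂ hB₂, hxs2, ← hs, ← hcc]
        linarith [hγ]
      · have hexp := quad_expand B₁ hB₁ y₀ xs γ
        have hling : (⟪y₀ + γ • xs, g⟫ : ℝ) = ⟪y₀, g⟫ + γ * ⟪xs, g⟫ := by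
          rw [inner_add_left, real_inner_smul_left]
        rw [hexp, hling, hxs1, hLL, ← hp1]
        ring
    set γa : ℝ := -cc + Real.sqrt D with hγa
    set γb : ℝ := -cc - Real.sqrt D with hγb
    have hγa0 : 0 ≤ γa := by
      have := le_abs_self cc
      rw [hγa]; linarith [habsc]
    have hγb0 : γb ≤ 0 := by
      have := neg_abs_le cc
      rw [hγb]; linarith [habsc]
    have hra : γa ^ 2 + 2 * cc * γa + s = t := by rw [hγa]; linear_combination hsqD
    have hrb : γb ^ 2 + 2 * cc * γb + s = t := by rw [hγb]; linear_combination hsqD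
    obtain ⟨hna, hqa⟩ := hkey γa hra
    obtain ⟨hnb, hqb⟩ := hkey γb hrb
    -- choose upper / lower points
    obtain ⟨yp, hypn, hypq, ym, hymn, hymq⟩ :
        ∃ yp, ⟪B₂ yp, yp⟫ = t ∧ p.1 ≤ ⟪B₁ yp, yp⟫ + ⟪yp, g⟫ ∧
        ∃ ym, ⟪B₂ ym, ym⟫ = t ∧ ⟪B₁ ym, ym⟫ + ⟪ym, g⟫ ≤ p.1 := by
      rcases le_total 0 LL with hLL0 | hLL0
      · refine ⟨y₀ + γa • xs, hna, ?_, y₀ + γb • xs, hnb, ?_⟩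
        · rw [hqa]; linarith [mul_nonneg hγa0 hLL0]
        · rw [hqb]; nlinarith [mul_nonneg (neg_nonneg.mpr hγb0) hLL0]
      · refine ⟨y₀ + γb • xs, hnb, ?_, y₀ + γa • xs, hna, ?_⟩
        · rw [hqb]; nlinarith [mul_nonneg (neg_nonneg.mpr hγb0) (neg_nonneg.mpr hLL0)]
        · rw [hqa]; nlinarith [mul_nonneg hγa0 (neg_nonneg.mpr hLL0)]
    -- intermediate value on the connected level set
    set Sl : Set E := {y : E | ⟪B₂ y, y⟫ = t} with hSl
    have hpc : IsPathConnected Sl :=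
      ⟨yp, hypn, fun _ hy => joinedIn_levelset B₂ hrank hqpos hp2' hypn hy⟩
    have hconn : IsPreconnected Sl := hpc.isConnected.isPreconnected
    have hfc : ContinuousOn (fun y : E => ⟪B₁ y, y⟫ + ⟪y, g⟫) Sl := by
      apply Continuous.continuousOn
      exact (Continuous.inner B₁.continuous continuous_id).add
        (Continuous.inner continuous_id continuous_const)
    have hin : p.1 ∈ Set.Icc (⟪B₁ ym, ym⟫ + ⟪ym, g⟫) (⟪B₁ yp, yp⟫ + ⟪yp, g⟫) :=
      ⟨hymq, hypq⟩
    obtain ⟨y, hyS, hyval⟩ := hconn.intermediate_value hymn hypn hfc hin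
    refine ⟨y, ?_⟩
    rw [show p = (p.1, p.2) from rfl, ← hyval]
    have : ⟪B₂ y, y⟫ = p.2 := hyS
    rw [this]

end CoreClosed

section Main

open Filter Topology

theorem nonhomogeneous_image_convex_closed
    {H : Type*} [NormedAddCommGroup H] [InnerProductSpace ℝ H] [CompleteSpace H]
    (hdim : 3 ≤ Module.rank ℝ H)
    (A₁ A₂ : H →L[ℝ] H) (hA₁s : IsSelfAdjoint A₁) (hA₂s : IsSelfAdjoint A₂)
    (a₁ a₂ : H) (b₁ b₂ : ℝ)
    (α₁ α₂ β₁ β₂ : ℝ) (hdet : α₁ * β₂ - α₂ * β₁ ≠ 0)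
    (hcompact : IsCompactOperator (α₁ • A₁ + α₂ • A₂))
    (hzero : ∃ x : H, x ≠ 0 ∧ ⟪(α₁ • A₁ + α₂ • A₂) x, x⟫ = 0)
    (hpos : ∃ δ : ℝ, 0 < δ ∧ ∀ x : H, δ * ‖x‖ ^ 2 ≤ ⟪(β₁ • A₁ + β₂ • A₂) x, x⟫) :
    Convex ℝ {p : ℝ × ℝ | ∃ x : H,
      p = (⟪A₁ x, x⟫ + ⟪x, a₁⟫ + b₁, ⟪A₂ x, x⟫ + ⟪x, a₂⟫ + b₂)} ∧
    IsClosed {p : ℝ × ℝ | ∃ x : H,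
      p = (⟪A₁ x, x⟫ + ⟪x, a₁⟫ + b₁, ⟪A₂ x, x⟫ + ⟪x, a₂⟫ + b₂)} := by
  classical
  obtain ⟨δ, hδ, hcoer⟩ := hpos
  obtain ⟨xh, hxh, hxh0⟩ := hzero
  set B₁ : H →L[ℝ] H := α₁ • A₁ + α₂ • A₂ with hB₁def
  set B₂ : H →L[ℝ] H := β₁ • A₁ + β₂ • A₂ with hB₂def
  have hrank : 1 < Module.rank ℝ H := lt_of_lt_of_le (by norm_num) hdim
  have hA₁sym : ∀ x y : H, ⟪A₁ x, y⟫ = ⟪x, A₁ y⟫ := fun x y => hA₁s.isSymmetric x y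
  have hA₂sym : ∀ x y : H, ⟪A₂ x, y⟫ = ⟪x, A₂ y⟫ := fun x y => hA₂s.isSymmetric x y
  have hB₁sym : ∀ x y : H, ⟪B₁ x, y⟫ = ⟪x, B₁ y⟫ := by
    intro x y
    simp only [hB₁def, ContinuousLinearMap.add_apply, ContinuousLinearMap.coe_smul',
      Pi.smul_apply, inner_add_left, inner_add_right, real_inner_smul_left,
      real_inner_smul_right, hA₁sym x y, hA₂sym x y]
  have hB₂sym : ∀ x y : H, ⟪B₂ x, y⟫ = ⟪x, B₂ y⟫ := by
    intro x y
    simp only [hB₂def, ContinuousLinearMap.add_apply, ContinuousLinearMap.coe_smul',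
      Pi.smul_apply, inner_add_left, inner_add_right, real_inner_smul_left,
      real_inner_smul_right, hA₁sym x y, hA₂sym x y]
  have hqpos : ∀ x : H, x ≠ 0 → 0 < ⟪B₂ x, x⟫ := by
    intro x hx
    have h1 := hcoer x
    have h2 : 0 < ‖x‖ := norm_pos_iff.mpr hx
    exact lt_of_lt_of_le (mul_pos hδ (pow_pos h2 2)) h1
  -- surjectivity of B₂
  have hsurj : ∀ u : H, ∃ w : H, B₂ w = u := by
    have hanti : ∀ x : H, ‖x‖ ≤ (δ⁻¹).toNNReal * ‖B₂ x‖ := by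
      intro x
      rcases eq_or_ne x 0 with rfl | hx
      · simp
      · have h2 : 0 < ‖x‖ := norm_pos_iff.mpr hx
        have h3 : δ * ‖x‖ ^ 2 ≤ ‖B₂ x‖ * ‖x‖ := by
          refine (hcoer x).trans ?_
          exact real_inner_le_norm (B₂ x) x
        rw [Real.coe_toNNReal _ (le_of_lt (inv_pos.mpr hδ))]
        have h4 : δ * ‖x‖ ≤ ‖B₂ x‖ := by nlinarith [h3, h2]
        calc ‖x‖ = δ⁻¹ * (δ * ‖x‖) := by field_simp
        _ ≤ δ⁻¹ * ‖B₂ x‖ := mul_le_mul_of_nonneg_left h4 (inv_pos.mpr hδ).le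
    have hantil : AntilipschitzWith (δ⁻¹).toNNReal B₂ :=
      ContinuousLinearMap.antilipschitz_of_bound B₂ hanti
    have hclosed : IsClosed (Set.range B₂) :=
      hantil.isClosed_range B₂.uniformContinuous
    have hrange : LinearMap.range (B₂ : H →ₗ[ℝ] H) = ⊤ := by
      have hcs : IsClosed ((LinearMap.range (B₂ : H →ₗ[ℝ] H) : Submodule ℝ H) : Set H) := by
        rw [LinearMap.coe_range]
        exact hclosed
      haveI := hcs.completeSpace_coe
      rw [← (LinearMap.range (B₂ : H →ₗ[ℝ] H)).orthogonal_orthogonal]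
      rw [Submodule.eq_top_iff']
      intro v
      rw [Submodule.mem_orthogonal]
      intro w hw
      have hw0 : w = 0 := by
        have h1 : ⟪B₂ w, w⟫ = 0 := by
          exact (Submodule.mem_orthogonal _ w).mp hw (B₂ w) (LinearMap.mem_range_self _ w)
        by_contra hc
        exact absurd h1 (hqpos w hc).ne'
      rw [hw0, inner_zero_left]
    intro u
    have : u ∈ LinearMap.range (B₂ : H →ₗ[ℝ] H) := by rw [hrange]; trivial
    exact LinearMap.mem_range.mp this
  -- the data of the reduced picture
  set c₁ : H := α₁ • a₁ + α₂ • a₂ with hc₁def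
  set c₂ : H := β₁ • a₁ + β₂ • a₂ with hc₂def
  set d₁ : ℝ := α₁ * b₁ + α₂ * b₂ with hd₁def
  set d₂ : ℝ := β₁ * b₁ + β₂ * b₂ with hd₂def
  obtain ⟨w₀, hw₀⟩ := hsurj ((1 / 2 : ℝ) • c₂)
  set g : H := c₁ - (2 : ℝ) • B₁ w₀ with hgdef
  set k₁ : ℝ := ⟪B₁ w₀, w₀⟫ - ⟪w₀, c₁⟫ + d₁ with hk₁def
  set k₂ : ℝ := ⟪B₂ w₀, w₀⟫ - ⟪w₀, c₂⟫ + d₂ with hk₂def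
  -- the pointwise translation identities
  have hO1 : ∀ y : H, ⟪B₁ (y - w₀), y - w₀⟫ + ⟪y - w₀, c₁⟫ + d₁
      = ⟪B₁ y, y⟫ + ⟪y, g⟫ + k₁ := by
    intro y
    have f1 : ⟪B₁ w₀, y⟫ = ⟪y, B₁ w₀⟫ := real_inner_comm y (B₁ w₀)
    have f2 : ⟪B₁ y, w₀⟫ = ⟪y, B₁ w₀⟫ := hB₁sym y w₀
    simp only [hgdef, hk₁def, map_sub, inner_sub_left, inner_sub_right,
      real_inner_smul_right, f1, f2]
    ring
  have hO2 : ∀ y : H, ⟪B₂ (y - w₀), y - w₀⟫ + ⟪y - w₀, c₂⟫ + d₂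
      = ⟪B₂ y, y⟫ + k₂ := by
    intro y
    have f1 : ⟪B₂ w₀, y⟫ = ⟪y, B₂ w₀⟫ := real_inner_comm y (B₂ w₀)
    have f2 : ⟪B₂ y, w₀⟫ = ⟪y, B₂ w₀⟫ := hB₂sym y w₀
    have f3 : ⟪y, B₂ w₀⟫ = 1 / 2 * ⟪y, c₂⟫ := by
      rw [hw₀, real_inner_smul_right]
    simp only [hk₂def, map_sub, inner_sub_left, inner_sub_right,
      real_inner_smul_right, f1, f2, f3]
    ring
  -- the linear change of coordinates on ℝ²
  set D : ℝ := α₁ * β₂ - α₂ * β₁ with hDdef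
  set Tlin : ℝ × ℝ →ₗ[ℝ] ℝ × ℝ :=
    { toFun := fun p => (α₁ * p.1 + α₂ * p.2, β₁ * p.1 + β₂ * p.2)
      map_add' := fun p q => by
        simp only [Prod.fst_add, Prod.snd_add, Prod.mk_add_mk, Prod.mk.injEq]
        exact ⟨by ring, by ring⟩
      map_smul' := fun c p => by
        simp only [Prod.smul_fst, Prod.smul_snd, Prod.smul_mk, smul_eq_mul,
          RingHom.id_apply, Prod.mk.injEq]
        exact ⟨by ring, by ring⟩ } with hTlin
  have hD0 : D ≠ 0 := by rw [hDdef]; exact hdet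
  have hTleft : ∀ p : ℝ × ℝ,
      (((β₂ * (α₁ * p.1 + α₂ * p.2) - α₂ * (β₁ * p.1 + β₂ * p.2)) / D,
        (α₁ * (β₁ * p.1 + β₂ * p.2) - β₁ * (α₁ * p.1 + α₂ * p.2)) / D) : ℝ × ℝ) = p := by
    intro p
    rw [show p = (p.1, p.2) from rfl, Prod.mk.injEq]
    refine ⟨?_, ?_⟩ <;> (field_simp; rw [hDdef]; ring)
  have hTright : ∀ p : ℝ × ℝ,
      ((α₁ * ((β₂ * p.1 - α₂ * p.2) / D) + α₂ * ((α₁ * p.2 - β₁ * p.1) / D),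
        β₁ * ((β₂ * p.1 - α₂ * p.2) / D) + β₂ * ((α₁ * p.2 - β₁ * p.1) / D)) : ℝ × ℝ) = p := by
    intro p
    rw [show p = (p.1, p.2) from rfl, Prod.mk.injEq]
    refine ⟨?_, ?_⟩ <;> (field_simp; rw [hDdef]; ring)
  set Tequiv : (ℝ × ℝ) ≃ₗ[ℝ] (ℝ × ℝ) :=
    { Tlin with
      invFun := fun p => ((β₂ * p.1 - α₂ * p.2) / D, (α₁ * p.2 - β₁ * p.1) / D)
      left_inv := fun p => hTleft p
      right_inv := fun p => hTright p } with hTequiv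
  set e : (ℝ × ℝ) ≃L[ℝ] (ℝ × ℝ) := Tequiv.toContinuousLinearEquiv with hedef
  have happ : ∀ p : ℝ × ℝ, e p = (α₁ * p.1 + α₂ * p.2, β₁ * p.1 + β₂ * p.2) := by
    intro p
    rfl
  -- pointwise transformation of the quadratic map
  have hSeq : ∀ x : H, e (⟪A₁ x, x⟫ + ⟪x, a₁⟫ + b₁, ⟪A₂ x, x⟫ + ⟪x, a₂⟫ + b₂)
      = (⟪B₁ x, x⟫ + ⟪x, c₁⟫ + d₁, ⟪B₂ x, x⟫ + ⟪x, c₂⟫ + d₂) := by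
    intro x
    rw [happ]
    simp only [hB₁def, hB₂def, hc₁def, hc₂def, hd₁def, hd₂def,
      ContinuousLinearMap.add_apply, ContinuousLinearMap.coe_smul', Pi.smul_apply,
      inner_add_left, inner_add_right, real_inner_smul_left, real_inner_smul_right,
      Prod.mk.injEq]
    exact ⟨by ring, by ring⟩
  -- the model set
  set M : Set (ℝ × ℝ) := {p : ℝ × ℝ | ∃ y : H, p = (⟪B₁ y, y⟫ + ⟪y, g⟫, ⟪B₂ y, y⟫)}
    with hMdef
  have hMconvex : Convex ℝ M := core_convex hrank B₁ B₂ hB₁sym hB₂sym g hδ hcoer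
  have hMclosed : IsClosed M := by
    refine core_closed hrank B₁ B₂ hB₁sym hB₂sym ?_ xh hxh hxh0 g hδ hcoer
    exact hcompact
  -- the set identity
  have hset : {p : ℝ × ℝ | ∃ x : H,
      p = (⟪A₁ x, x⟫ + ⟪x, a₁⟫ + b₁, ⟪A₂ x, x⟫ + ⟪x, a₂⟫ + b₂)}
      = e ⁻¹' ((fun p => (k₁, k₂) + p) '' M) := by
    ext p
    simp only [Set.mem_setOf_eq, Set.mem_preimage, Set.mem_image, hMdef]
    constructor
    · rintro ⟨x, rfl⟩
      refine ⟨(⟪B₁ (x + w₀), x + w₀⟫ + ⟪x + w₀, g⟫, ⟪B₂ (x + w₀), x + w₀⟫),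
        ⟨x + w₀, rfl⟩, ?_⟩
      rw [hSeq x]
      have h1 := hO1 (x + w₀)
      have h2 := hO2 (x + w₀)
      rw [add_sub_cancel_right] at h1 h2
      rw [Prod.mk_add_mk, Prod.mk.injEq]
      constructor
      · linarith [h1]
      · linarith [h2]
    · rintro ⟨q, ⟨y, rfl⟩, hq⟩
      refine ⟨y - w₀, ?_⟩
      apply e.injective
      rw [hSeq (y - w₀), hO1 y, hO2 y, ← hq]
      rw [Prod.mk_add_mk, Prod.mk.injEq]
      constructor
      · ring
      · ring
  rw [hset]
  constructor
  · apply Convex.linear_preimage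
    exact Convex.translate hMconvex (k₁, k₂)
  · apply IsClosed.preimage e.continuous
    have : (fun p : ℝ × ℝ => (k₁, k₂) + p) '' M = (Homeomorph.addLeft ((k₁, k₂) : ℝ × ℝ)) '' M := rfl
    rw [this]
    exact (Homeomorph.isClosed_image _).mpr hMclosed

end Main
end
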